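/- arXiv:2603.16399 — 7 statements merged into one kernel-verified Lean document; each statement's English description precedes it below -/
import Mathlib

section
/- Let (X_i)_{i≥0} be i.i.d. non-negative real random variables and let τ be a stopping time, taking values in ℤ_{≥0}, with respect to the filtration generated by (X_i)_{i≥0}, with E[τ] < ∞. Suppose that E[X_0^q] < ∞ for some q > 1. Then E[ sup_{0 ≤ i ≤ τ} X_i ] ≤ (E[τ + 1])^{1/q} · (E[X_0^q])^{1/q}. -/
open MeasureTheory ProbabilityTheory
open Set

lemma wald_term_aux {Ω : Type*} {mΩ : MeasurableSpace Ω} {μ : Measure Ω}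
    (X : ℕ → Ω → ℝ) (hmeas : ∀ i, Measurable (X i))
    (hindep : iIndepFun X μ) (k : ℕ) (A : Set Ω)
    (hA : MeasurableSet A)
    (hAm : MeasurableSet[MeasurableSpace.comap (fun ω (i : Fin (k + 1)) => X i ω)
      inferInstance] A)
    (φ : ℝ → ENNReal) (hφ : Measurable φ) :
    ∫⁻ ω, A.indicator (fun ω' => φ (X (k+1) ω')) ω ∂μ
      = μ A * ∫⁻ ω, φ (X (k+1) ω) ∂μ := by
  have hMf_le : (⨆ j ∈ {j : ℕ | j ≤ k}, MeasurableSpace.comap (X j) inferInstance) ≤ mΩ := by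
    apply iSup₂_le
    intro j _
    exact measurable_iff_comap_le.mp (hmeas j)
  have hMg_le : MeasurableSpace.comap (X (k+1)) inferInstance ≤ mΩ :=
    measurable_iff_comap_le.mp (hmeas (k+1))
  have hInd : Indep (⨆ j ∈ {j : ℕ | j ≤ k}, MeasurableSpace.comap (X j) inferInstance)
      (MeasurableSpace.comap (X (k+1)) inferInstance) μ := by
    have hdisj : Disjoint {j : ℕ | j ≤ k} ({k+1} : Set ℕ) := by
      rw [Set.disjoint_left]; intro a ha hb; simp at ha hb; omega
    have := indep_iSup_of_disjoint
      (m := fun j : ℕ => MeasurableSpace.comap (X j) inferInstance)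
      (fun j => measurable_iff_comap_le.mp (hmeas j)) hindep hdisj
    simpa using this
  have hpi : MeasurableSpace.comap (fun ω (i : Fin (k+1)) => X i ω)
      (inferInstance : MeasurableSpace (Fin (k+1) → ℝ))
      = ⨆ i : Fin (k+1), MeasurableSpace.comap (X i) inferInstance := by
    rw [MeasurableSpace.pi, MeasurableSpace.comap_iSup]
    congr 1
    funext i
    rw [MeasurableSpace.comap_comp]
    rfl
  have hAMf : MeasurableSet[⨆ j ∈ {j : ℕ | j ≤ k},
      MeasurableSpace.comap (X j) inferInstance] A := by
    have hle : MeasurableSpace.comap (fun ω (i : Fin (k+1)) => X i ω)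
        (inferInstance : MeasurableSpace (Fin (k+1) → ℝ))
        ≤ ⨆ j ∈ {j : ℕ | j ≤ k}, MeasurableSpace.comap (X j) inferInstance := by
      rw [hpi]
      apply iSup_le
      intro i
      exact le_biSup (fun j => MeasurableSpace.comap (X j) inferInstance)
        (by simpa using Nat.lt_succ_iff.mp i.isLt)
    exact hle _ hAm
  have hfMf : Measurable[⨆ j ∈ {j : ℕ | j ≤ k}, MeasurableSpace.comap (X j) inferInstance]
      (A.indicator (1 : Ω → ENNReal)) :=
    by
    apply Measurable.indicator _ hAMf
    exact measurable_const
  have hgMg : Measurable[MeasurableSpace.comap (X (k+1)) inferInstance]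
      (fun ω => φ (X (k+1) ω)) := by
    have h : Measurable[MeasurableSpace.comap (X (k+1)) inferInstance] (X (k+1)) :=
      Measurable.of_comap_le le_rfl
    exact hφ.comp h
  have heq : (fun ω => A.indicator (fun ω' => φ (X (k+1) ω')) ω)
      = fun ω => A.indicator (1 : Ω → ENNReal) ω * φ (X (k+1) ω) := by
    funext ω
    by_cases h : ω ∈ A <;> simp [Set.indicator_apply, h]
  calc ∫⁻ ω, A.indicator (fun ω' => φ (X (k+1) ω')) ω ∂μ
      = ∫⁻ ω, A.indicator (1 : Ω → ENNReal) ω * φ (X (k+1) ω) ∂μ := by rw [heq]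
    _ = (∫⁻ ω, A.indicator (1 : Ω → ENNReal) ω ∂μ) * ∫⁻ ω, φ (X (k+1) ω) ∂μ :=
        lintegral_mul_eq_lintegral_mul_lintegral_of_independent_measurableSpace
          hMf_le hMg_le hInd hfMf hgMg
    _ = μ A * ∫⁻ ω, φ (X (k+1) ω) ∂μ := by rw [lintegral_indicator_one hA]

/-- For i.i.d. non-negative `(X_i)` and a stopping time `τ` (for the
filtration `F_k = σ(X_0, …, X_k)`) with finite mean, and `E[X_0^q] < ∞` for some `q > 1`:
`E[sup_{0≤i≤τ} X_i] ≤ E[τ+1]^{1/q} · E[X_0^q]^{1/q}`. -/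
theorem stmt_4 {Ω : Type*} [MeasurableSpace Ω] (μ : Measure Ω) [IsProbabilityMeasure μ]
    (X : ℕ → Ω → ℝ) (hmeas : ∀ i, Measurable (X i))
    (hnonneg : ∀ i ω, 0 ≤ X i ω)
    (hindep : iIndepFun X μ)
    (hident : ∀ i, IdentDistrib (X i) (X 0) μ μ)
    (τ : Ω → ℕ)
    (hstop : ∀ k : ℕ,
      MeasurableSet[MeasurableSpace.comap (fun ω (i : Fin (k + 1)) => X i ω) inferInstance]
        {ω | τ ω ≤ k})
    (hτ_int : Integrable (fun ω => (τ ω : ℝ)) μ)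
    (q : ℝ) (hq : 1 < q)
    (hXq : Integrable (fun ω => X 0 ω ^ q) μ) :
    (∫ ω, (Finset.range (τ ω + 1)).sup' Finset.nonempty_range_add_one (fun i => X i ω) ∂μ)
      ≤ (∫ ω, ((τ ω : ℝ) + 1) ∂μ) ^ (1 / q) * (∫ ω, X 0 ω ^ q ∂μ) ^ (1 / q) := by
  classical
  have hq0 : (0:ℝ) < q := lt_trans one_pos hq
  have hq0' : q ≠ 0 := ne_of_gt hq0
  set L : Ω → ℝ := fun ω =>
    (Finset.range (τ ω + 1)).sup' Finset.nonempty_range_add_one (fun i => X i ω) with hL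
  set g : ℕ → Ω → ENNReal := fun i ω => ENNReal.ofReal (X i ω ^ q) with hgdef
  have hφ : Measurable (fun x : ℝ => ENNReal.ofReal (x ^ q)) := by fun_prop
  have hgmeas : ∀ i, Measurable (g i) := fun i => hφ.comp (hmeas i)
  set A : ℕ → Set Ω := fun i => {ω | i ≤ τ ω} with hAdef
  -- measurability of τ
  have hcomap_le : ∀ k : ℕ,
      MeasurableSpace.comap (fun ω (i : Fin (k+1)) => X i ω) inferInstance
        ≤ ‹MeasurableSpace Ω› := fun k =>
    measurable_iff_comap_le.mp (measurable_pi_lambda _ fun i => hmeas i)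
  have hτk : ∀ k, MeasurableSet {ω | τ ω ≤ k} := fun k => hcomap_le k _ (hstop k)
  have hτ : Measurable τ := by
    apply measurable_to_countable'
    intro n
    match n with
    | 0 =>
      have h0 : τ ⁻¹' {0} = {ω | τ ω ≤ 0} := by ext ω; simp [Nat.le_zero]
      rw [h0]; exact hτk 0
    | (n+1) =>
      have h1 : τ ⁻¹' {n+1} = {ω | τ ω ≤ n+1} \ {ω | τ ω ≤ n} := by
        ext ω; simp only [mem_preimage, mem_singleton_iff, mem_diff, mem_setOf_eq]; omega
      rw [h1]; exact (hτk (n+1)).diff (hτk n)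
  have hA : ∀ i, MeasurableSet (A i) := by
    intro i
    have : A i = τ ⁻¹' (Set.Ici i) := rfl
    rw [this]; exact hτ measurableSet_Ici
  -- identical distribution
  have hident' : ∀ i, ∫⁻ ω, g i ω ∂μ = ∫⁻ ω, g 0 ω ∂μ := fun i =>
    ((hident i).comp hφ).lintegral_eq
  -- Wald single term
  have hkey : ∀ i, ∫⁻ ω, (A i).indicator (g i) ω ∂μ = μ (A i) * ∫⁻ ω, g 0 ω ∂μ := by
    intro i
    match i with
    | 0 =>
      have hA0 : A 0 = Set.univ := by ext ω; simp [hAdef]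
      rw [hA0]
      simp [Set.indicator_univ, hident' 0, measure_univ, one_mul]
    | (k+1) =>
      have hAm : MeasurableSet[MeasurableSpace.comap (fun ω (i : Fin (k + 1)) => X i ω)
          inferInstance] (A (k+1)) := by
        have hcompl : A (k+1) = {ω | τ ω ≤ k}ᶜ := by
          ext ω; simp only [hAdef, mem_setOf_eq, mem_compl_iff]; omega
        rw [hcompl]
        exact (hstop k).compl
      have := wald_term_aux X hmeas hindep k (A (k+1)) (hA (k+1)) hAm
        (fun x => ENNReal.ofReal (x ^ q)) hφ
      rw [show (fun ω' => ENNReal.ofReal (X (k+1) ω' ^ q)) = g (k+1) from rfl] at this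
      rw [this, hident' (k+1)]
  -- rewrite the finite sum as a tsum of indicators
  have hS : ∀ ω, (∑ i ∈ Finset.range (τ ω + 1), g i ω) = ∑' i, (A i).indicator (g i) ω := by
    intro ω
    rw [tsum_eq_sum (s := Finset.range (τ ω + 1))]
    · apply Finset.sum_congr rfl
      intro i hi
      rw [Set.indicator_of_mem]
      exact Nat.lt_succ_iff.mp (Finset.mem_range.mp hi)
    · intro i hi
      apply Set.indicator_of_notMem
      simp only [Finset.mem_range, not_lt] at hi
      simp only [hAdef, mem_setOf_eq, not_le]; omega
  have hcount : ∀ ω, (∑' i, (A i).indicator (1 : Ω → ENNReal) ω) = (τ ω : ENNReal) + 1 := by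
    intro ω
    rw [tsum_eq_sum (s := Finset.range (τ ω + 1))]
    · have h1 : ∀ i ∈ Finset.range (τ ω + 1), (A i).indicator (1 : Ω → ENNReal) ω = 1 := by
        intro i hi
        exact Set.indicator_of_mem
          (show ω ∈ A i from Nat.lt_succ_iff.mp (Finset.mem_range.mp hi)) 1
      rw [Finset.sum_congr rfl h1, Finset.sum_const, Finset.card_range, nsmul_eq_mul, mul_one]
      push_cast; ring
    · intro i hi
      apply Set.indicator_of_notMem
      simp only [Finset.mem_range, not_lt] at hi
      simp only [hAdef, mem_setOf_eq, not_le]; omega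
  have hWald : ∫⁻ ω, (∑ i ∈ Finset.range (τ ω + 1), g i ω) ∂μ
      = (∫⁻ ω, ((τ ω : ENNReal) + 1) ∂μ) * ∫⁻ ω, g 0 ω ∂μ := by
    calc ∫⁻ ω, (∑ i ∈ Finset.range (τ ω + 1), g i ω) ∂μ
        = ∫⁻ ω, ∑' i, (A i).indicator (g i) ω ∂μ := lintegral_congr hS
      _ = ∑' i, ∫⁻ ω, (A i).indicator (g i) ω ∂μ :=
          lintegral_tsum (fun i => ((hgmeas i).indicator (hA i)).aemeasurable)
      _ = ∑' i, μ (A i) * ∫⁻ ω, g 0 ω ∂μ := tsum_congr hkey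
      _ = (∑' i, μ (A i)) * ∫⁻ ω, g 0 ω ∂μ := ENNReal.tsum_mul_right
      _ = (∫⁻ ω, ((τ ω : ENNReal) + 1) ∂μ) * ∫⁻ ω, g 0 ω ∂μ := by
          congr 1
          calc (∑' i, μ (A i)) = ∑' i, ∫⁻ ω, (A i).indicator (1 : Ω → ENNReal) ω ∂μ :=
                tsum_congr fun i => (lintegral_indicator_one (hA i)).symm
            _ = ∫⁻ ω, ∑' i, (A i).indicator (1 : Ω → ENNReal) ω ∂μ :=
                (lintegral_tsum (fun i => (measurable_const.indicator (hA i)).aemeasurable)).symm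
            _ = ∫⁻ ω, ((τ ω : ENNReal) + 1) ∂μ := lintegral_congr hcount
  -- measurability of L
  have hLmeas : Measurable L := by
    have hF : ∀ n : ℕ, Measurable (fun ω =>
        (Finset.range (n+1)).sup' Finset.nonempty_range_add_one (fun i => X i ω)) := by
      intro n
      have heq : (fun ω => (Finset.range (n+1)).sup' Finset.nonempty_range_add_one
          (fun i => X i ω)) = (Finset.range (n+1)).sup' Finset.nonempty_range_add_one X := by
        funext ω; rw [Finset.sup'_apply]
      rw [heq]
      exact Finset.measurable_sup' Finset.nonempty_range_add_one (fun i _ => hmeas i)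
    have hLc : L = (fun p : Ω × ℕ =>
        (Finset.range (p.2 + 1)).sup' Finset.nonempty_range_add_one (fun i => X i p.1))
        ∘ (fun ω => (ω, τ ω)) := rfl
    rw [hLc]
    exact (measurable_from_prod_countable_left hF).comp (measurable_id.prodMk hτ)
  have hLnonneg : ∀ ω, 0 ≤ L ω := fun ω =>
    le_trans (hnonneg 0 ω) (Finset.le_sup' (fun i => X i ω)
      (Finset.mem_range.mpr (Nat.succ_pos _)))
  -- pointwise bound
  have hpt : ∀ ω, ENNReal.ofReal (L ω)
      ≤ (∑ i ∈ Finset.range (τ ω + 1), g i ω) ^ (1/q) := by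
    intro ω
    obtain ⟨j, hj, hLj⟩ := Finset.exists_mem_eq_sup'
      (Finset.nonempty_range_add_one (n := τ ω)) (fun i => X i ω)
    have h1 : ENNReal.ofReal (L ω) = (g j ω) ^ (1/q) := by
      rw [hL, hgdef]
      simp only []
      rw [hLj, ENNReal.ofReal_rpow_of_nonneg (Real.rpow_nonneg (hnonneg j ω) q)
        (by positivity : (0:ℝ) ≤ 1/q), ← Real.rpow_mul (hnonneg j ω),
        mul_one_div_cancel hq0', Real.rpow_one]
    rw [h1]
    exact ENNReal.rpow_le_rpow
      (Finset.single_le_sum (f := fun i => g i ω) (fun i _ => zero_le) hj)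
      (by positivity)
  -- measurability of the sum
  have hSmeas : Measurable (fun ω => ∑ i ∈ Finset.range (τ ω + 1), g i ω) := by
    have : (fun ω => ∑ i ∈ Finset.range (τ ω + 1), g i ω)
        = fun ω => ∑' i, (A i).indicator (g i) ω := funext hS
    rw [this]
    exact Measurable.ennreal_tsum (fun i => (hgmeas i).indicator (hA i))
  -- Jensen via Hölder
  have hJensen : ∫⁻ ω, (∑ i ∈ Finset.range (τ ω + 1), g i ω) ^ (1/q) ∂μ
      ≤ (∫⁻ ω, (∑ i ∈ Finset.range (τ ω + 1), g i ω) ∂μ) ^ (1/q) := by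
    have h1q : (0:ℝ) ≤ 1/q := by positivity
    have h1q' : (0:ℝ) ≤ 1 - 1/q := by
      rw [sub_nonneg, div_le_one hq0]; linarith
    have := ENNReal.lintegral_mul_norm_pow_le (μ := μ)
      hSmeas.aemeasurable (aemeasurable_const (b := (1:ENNReal))) h1q h1q' (by ring)
    simpa [ENNReal.one_rpow, lintegral_one, measure_univ] using this
  -- finiteness
  have hfin1 : ∫⁻ ω, ((τ ω : ENNReal) + 1) ∂μ ≠ ⊤ := by
    have heq1 : ∀ ω, ((τ ω : ENNReal) + 1) = ENNReal.ofReal ((τ ω : ℝ) + 1) := by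
      intro ω
      rw [ENNReal.ofReal_add (Nat.cast_nonneg _) zero_le_one, ENNReal.ofReal_natCast,
        ENNReal.ofReal_one]
    rw [lintegral_congr heq1]
    exact (hτ_int.add (integrable_const 1)).lintegral_lt_top.ne
  have hfin2 : ∫⁻ ω, g 0 ω ∂μ ≠ ⊤ := hXq.lintegral_lt_top.ne
  -- integral representations
  have hrep1 : ∫ ω, ((τ ω : ℝ) + 1) ∂μ = (∫⁻ ω, ((τ ω : ENNReal) + 1) ∂μ).toReal := by
    have hasm : AEStronglyMeasurable (fun ω => (τ ω : ℝ) + 1) μ :=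
      (hτ_int.add (integrable_const 1)).aestronglyMeasurable
    rw [integral_eq_lintegral_of_nonneg_ae (ae_of_all _ fun ω => by positivity) hasm]
    congr 1
    refine lintegral_congr fun ω => ?_
    rw [ENNReal.ofReal_add (Nat.cast_nonneg _) zero_le_one, ENNReal.ofReal_natCast,
      ENNReal.ofReal_one]
  have hrep2 : ∫ ω, X 0 ω ^ q ∂μ = (∫⁻ ω, g 0 ω ∂μ).toReal := by
    rw [integral_eq_lintegral_of_nonneg_ae
      (ae_of_all _ fun ω => Real.rpow_nonneg (hnonneg 0 ω) q)
      hXq.aestronglyMeasurable]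
  have hrepL : ∫ ω, L ω ∂μ = (∫⁻ ω, ENNReal.ofReal (L ω) ∂μ).toReal :=
    integral_eq_lintegral_of_nonneg_ae (ae_of_all _ hLnonneg) hLmeas.aestronglyMeasurable
  -- final chain
  have hbound : ∫⁻ ω, ENNReal.ofReal (L ω) ∂μ
      ≤ (∫⁻ ω, ((τ ω : ENNReal) + 1) ∂μ) ^ (1/q) * (∫⁻ ω, g 0 ω ∂μ) ^ (1/q) := by
    calc ∫⁻ ω, ENNReal.ofReal (L ω) ∂μ
        ≤ ∫⁻ ω, (∑ i ∈ Finset.range (τ ω + 1), g i ω) ^ (1/q) ∂μ := lintegral_mono hpt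
      _ ≤ (∫⁻ ω, (∑ i ∈ Finset.range (τ ω + 1), g i ω) ∂μ) ^ (1/q) := hJensen
      _ = ((∫⁻ ω, ((τ ω : ENNReal) + 1) ∂μ) * ∫⁻ ω, g 0 ω ∂μ) ^ (1/q) := by rw [hWald]
      _ = (∫⁻ ω, ((τ ω : ENNReal) + 1) ∂μ) ^ (1/q) * (∫⁻ ω, g 0 ω ∂μ) ^ (1/q) :=
          ENNReal.mul_rpow_of_nonneg _ _ (by positivity)
  have hRHSfin : (∫⁻ ω, ((τ ω : ENNReal) + 1) ∂μ) ^ (1/q) * (∫⁻ ω, g 0 ω ∂μ) ^ (1/q) ≠ ⊤ :=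
    ENNReal.mul_ne_top (ENNReal.rpow_ne_top_of_nonneg (by positivity) hfin1)
      (ENNReal.rpow_ne_top_of_nonneg (by positivity) hfin2)
  calc ∫ ω, L ω ∂μ = (∫⁻ ω, ENNReal.ofReal (L ω) ∂μ).toReal := hrepL
    _ ≤ ((∫⁻ ω, ((τ ω : ENNReal) + 1) ∂μ) ^ (1/q) * (∫⁻ ω, g 0 ω ∂μ) ^ (1/q)).toReal :=
        ENNReal.toReal_mono hRHSfin hbound
    _ = (∫ ω, ((τ ω : ℝ) + 1) ∂μ) ^ (1 / q) * (∫ ω, X 0 ω ^ q ∂μ) ^ (1 / q) := by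
        rw [ENNReal.toReal_mul, hrep1, hrep2, ENNReal.toReal_rpow, ENNReal.toReal_rpow]
end

section
/- Let (ξ_i)_{i≥1} be i.i.d. positive random variables with E[e^{θ ξ₁}] < ∞ for all θ > 0. For n ∈ ℕ set ξⁿ_k = ξ_k/n, τⁿ_k = ∑_{i=1}^k ξⁿ_i, τⁿ_0 = 0, Nⁿ_s = sup{k : τⁿ_k ≤ s}, and πⁿ(s) = τⁿ_{Nⁿ_s}. Fix T > 0 and p > 0 and define N_p = ∫₀ᵀ (s − πⁿ(s))^p ds. Then E[N_p] ≤ (1/n^p) · ((E[Nⁿ_T] + 2)/n) · E[ξ₁^{p+1}]. -/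
open MeasureTheory ProbabilityTheory

lemma lintegral_nat_aux {Ω : Type*} [MeasurableSpace Ω] (μ : Measure Ω) (f : Ω → ℕ)
    (hf : ∀ k : ℕ, MeasurableSet {ω | k < f ω}) :
    ∫⁻ ω, (f ω : ENNReal) ∂μ = ∑' k : ℕ, μ {ω | k < f ω} := by
  have h1 : ∀ ω, (f ω : ENNReal) = ∑' k : ℕ, Set.indicator {ω | k < f ω} (fun _ => 1) ω := by
    intro ω
    rw [tsum_eq_sum (s := Finset.range (f ω)) (by
      intro k hk
      simp only [Set.indicator_apply, Set.mem_setOf_eq]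
      rw [if_neg]
      simpa using hk)]
    rw [Finset.sum_congr rfl (fun k hk => by
      simp only [Set.indicator_apply, Set.mem_setOf_eq]
      rw [if_pos (Finset.mem_range.mp hk)])]
    simp
  calc ∫⁻ ω, (f ω : ENNReal) ∂μ
      = ∫⁻ ω, ∑' k : ℕ, Set.indicator {ω | k < f ω} (fun _ => 1) ω ∂μ := by
        simp_rw [h1]
    _ = ∑' k : ℕ, ∫⁻ ω, Set.indicator {ω | k < f ω} (fun _ => 1) ω ∂μ := by
        rw [lintegral_tsum]
        intro k
        exact (measurable_one.indicator (hf k)).aemeasurable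
    _ = ∑' k : ℕ, μ {ω | k < f ω} := by
        congr 1; funext k
        exact lintegral_indicator_one (hf k)

lemma exp_neg_sum_int {Ω : Type*} [MeasurableSpace Ω] (μ : Measure Ω) [IsProbabilityMeasure μ]
    (ξ : ℕ → Ω → ℝ) (hmeas : ∀ i, Measurable (ξ i))
    (hindep : iIndepFun ξ μ)
    (hident : ∀ i, IdentDistrib (ξ i) (ξ 0) μ μ) (k : ℕ) :
    ∫ ω, Real.exp (-(∑ i ∈ Finset.range k, ξ i ω)) ∂μ
      = (∫ ω, Real.exp (-(ξ 0 ω)) ∂μ) ^ k := by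
  induction k with
  | zero => simp
  | succ k ih =>
    have hexp : Measurable fun x : ℝ => Real.exp (-x) :=
      (Real.continuous_exp.comp continuous_neg).measurable
    have hind : IndepFun (fun ω => ∑ i ∈ Finset.range k, ξ i ω) (ξ k) μ :=
      by
      have h := hindep.indepFun_sum_range_succ hmeas k
      have he : (∑ j ∈ Finset.range k, ξ j) = fun ω => ∑ i ∈ Finset.range k, ξ i ω := by
        funext ω; simp
      rwa [he] at h
    have hind2 : IndepFun (fun ω => Real.exp (-(∑ i ∈ Finset.range k, ξ i ω)))
        (fun ω => Real.exp (-(ξ k ω))) μ := hind.comp hexp hexp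
    have h1 : (∫ ω, Real.exp (-(∑ i ∈ Finset.range (k+1), ξ i ω)) ∂μ)
        = ∫ ω, Real.exp (-(∑ i ∈ Finset.range k, ξ i ω)) * Real.exp (-(ξ k ω)) ∂μ := by
      congr 1; funext ω
      rw [Finset.sum_range_succ, neg_add, Real.exp_add]
    rw [h1, hind2.integral_fun_mul_eq_mul_integral (hexp.comp (Finset.measurable_sum _ fun i _ => hmeas i)).aestronglyMeasurable
      (hexp.comp (hmeas k)).aestronglyMeasurable, ih, pow_succ]
    congr 1
    exact ((hident k).comp hexp).integral_eq

lemma pointwise_piece_bound (T p : ℝ) (hT : 0 < T) (hp : 0 < p)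
    (τ' : ℕ → ℝ) (hτ0 : τ' 0 = 0) (hmono : StrictMono τ')
    (N' : ℝ → ℕ) (hN' : ∀ s, N' s = sSup {k : ℕ | τ' k ≤ s})
    (m : ℕ) (hm1 : τ' m ≤ T) (hm2 : T < τ' (m + 1)) :
    (∫ s in (0:ℝ)..T, (s - τ' (N' s)) ^ p)
      ≤ ∑ k ∈ Finset.range (m + 1), (τ' (k + 1) - τ' k) ^ (p + 1) := by
  have hNs : ∀ k (s : ℝ), τ' k ≤ s → s < τ' (k + 1) → N' s = k := by
    intro k s h1 h2
    have hset : {j : ℕ | τ' j ≤ s} = Set.Iic k := by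
      ext j
      simp only [Set.mem_setOf_eq, Set.mem_Iic]
      constructor
      · intro hj
        by_contra hjk
        push_neg at hjk
        exact absurd (le_trans (hmono.monotone hjk) hj) (not_le.mpr h2)
      · intro hj
        exact le_trans (hmono.monotone hj) h1
    rw [hN', hset, csSup_Iic]
  set a : ℕ → ℝ := fun k => min (τ' k) T with ha
  have hak : ∀ k, k ≤ m → a k = τ' k := fun k hk =>
    min_eq_left (le_trans (hmono.monotone hk) hm1)
  have ham : a (m + 1) = T := min_eq_right hm2.le
  have hamono : Monotone a := fun i j hij => min_le_min (hmono.monotone hij) le_rfl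
  have haτ : ∀ k, a k ≤ τ' k := fun k => min_le_left _ _
  have key : ∀ k ∈ Finset.range (m + 1),
      IntervalIntegrable (fun s => (s - τ' (N' s)) ^ p) volume (a k) (a (k + 1)) ∧
      (∫ s in (a k)..(a (k + 1)), (s - τ' (N' s)) ^ p)
        ≤ (τ' (k + 1) - τ' k) ^ (p + 1) := by
    intro k hk
    have hkm : k ≤ m := Nat.lt_succ_iff.mp (Finset.mem_range.mp hk)
    have hak' : a k = τ' k := hak k hkm
    have hle : a k ≤ a (k + 1) := hamono (Nat.le_succ k)
    have hlt1 : a (k + 1) ≤ τ' (k + 1) := haτ _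
    -- continuous comparison function
    have hcont : ContinuousOn (fun s : ℝ => (s - τ' k) ^ p) (Set.uIcc (a k) (a (k+1))) :=
      (continuousOn_id.sub continuousOn_const).rpow_const (fun x _ => Or.inr hp.le)
    have hcint : IntervalIntegrable (fun s : ℝ => (s - τ' k) ^ p) volume (a k) (a (k+1)) :=
      hcont.intervalIntegrable
    have hne : ∀ᵐ s : ℝ ∂volume, s ≠ a (k+1) := by
      rw [ae_iff]
      simpa using Real.volume_singleton (a := a (k+1))
    have haeq2 : ∀ᵐ s : ℝ ∂volume, s ∈ Set.uIoc (a k) (a (k+1)) →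
        (s - τ' (N' s)) ^ p = (s - τ' k) ^ p := by
      filter_upwards [hne] with s hs1 hs2
      rw [Set.uIoc_of_le hle] at hs2
      have h1 : τ' k ≤ s := hak' ▸ hs2.1.le
      have h2 : s < τ' (k + 1) := lt_of_le_of_ne (le_trans hs2.2 hlt1) (by
        intro h
        exact hs1 (le_antisymm hs2.2 (h ▸ hlt1)) )
      rw [hNs k s h1 h2]
    have haeq : (fun s => (s - τ' (N' s)) ^ p)
        =ᵐ[volume.restrict (Set.uIoc (a k) (a (k+1)))] (fun s : ℝ => (s - τ' k) ^ p) := by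
      filter_upwards [ae_restrict_of_ae haeq2, ae_restrict_mem measurableSet_uIoc] with s h1 h2
      exact h1 h2
    refine ⟨hcint.congr_ae haeq.symm, ?_⟩
    rw [intervalIntegral.integral_congr_ae haeq2]
    have hcomp : (∫ s in (a k)..(a (k+1)), (s - τ' k) ^ p)
        = ∫ s in (a k - τ' k)..(a (k+1) - τ' k), s ^ p :=
      intervalIntegral.integral_comp_sub_right (fun s => s ^ p) (τ' k)
    rw [hcomp, integral_rpow (Or.inl (by linarith))]
    rw [hak', sub_self, Real.zero_rpow (by positivity)]
    have hnum : (a (k+1) - τ' k) ^ (p + 1) ≤ (τ' (k + 1) - τ' k) ^ (p + 1) := by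
      apply Real.rpow_le_rpow (by rw [← hak']; linarith) (by linarith) (by linarith)
    calc ((a (k+1) - τ' k) ^ (p + 1) - 0) / (p + 1)
        ≤ (a (k+1) - τ' k) ^ (p + 1) := by
          rw [sub_zero]
          apply div_le_self (Real.rpow_nonneg (by rw [← hak']; linarith) _) (by linarith)
      _ ≤ _ := hnum
  have hint : ∀ k < m + 1, IntervalIntegrable (fun s => (s - τ' (N' s)) ^ p) volume (a k) (a (k+1)) :=
    fun k hk => (key k (Finset.mem_range.mpr hk)).1
  have hsum := intervalIntegral.sum_integral_adjacent_intervals hint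
  have ha0 : a 0 = 0 := by rw [hak 0 (Nat.zero_le m), hτ0]
  rw [ha0, ham] at hsum
  rw [← hsum]
  exact Finset.sum_le_sum fun k hk => (key k hk).2

set_option maxHeartbeats 1000000 in
/-- With `πⁿ(s) = τⁿ_{Nⁿ_s}` the last random sampling time before `s`:
`E[∫₀ᵀ (s − πⁿ(s))^p ds] ≤ (1/nᵖ)·((E[Nⁿ_T]+2)/n)·E[ξ₁^{p+1}]`. -/
theorem stmt_6 {Ω : Type*} [MeasurableSpace Ω] (μ : Measure Ω) [IsProbabilityMeasure μ]
    (ξ : ℕ → Ω → ℝ) (hmeas : ∀ i, Measurable (ξ i))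
    (hpos : ∀ i ω, 0 < ξ i ω)
    (hindep : iIndepFun ξ μ)
    (hident : ∀ i, IdentDistrib (ξ i) (ξ 0) μ μ)
    (hmgf : ∀ θ : ℝ, 0 < θ → Integrable (fun ω => Real.exp (θ * ξ 0 ω)) μ)
    (n : ℕ) (hn : 0 < n) (T : ℝ) (hT : 0 < T) (p : ℝ) (hp : 0 < p)
    (τ : ℕ → Ω → ℝ) (hτ : ∀ k ω, τ k ω = (∑ i ∈ Finset.range k, ξ i ω) / n)
    (N : ℝ → Ω → ℕ) (hN : ∀ s ω, N s ω = sSup {k : ℕ | τ k ω ≤ s})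
    (π : ℝ → Ω → ℝ) (hπ : ∀ s ω, π s ω = τ (N s ω) ω) :
    (∫ ω, (∫ s in (0 : ℝ)..T, (s - π s ω) ^ p) ∂μ)
      ≤ (1 / (n : ℝ) ^ p) * (((∫ ω, (N T ω : ℝ) ∂μ) + 2) / n)
          * ∫ ω, ξ 0 ω ^ (p + 1) ∂μ := by
  have hn' : (0 : ℝ) < n := Nat.cast_pos.mpr hn
  -- basic facts about τ
  have hτm : ∀ k, Measurable (fun ω => τ k ω) := by
    intro k
    have : (fun ω => τ k ω) = fun ω => (∑ i ∈ Finset.range k, ξ i ω) / n := by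
      funext ω; exact hτ k ω
    rw [this]
    exact (Finset.measurable_sum _ fun i _ => hmeas i).div_const _
  have hτ0 : ∀ ω, τ 0 ω = 0 := by intro ω; simp [hτ]
  have hτdiff : ∀ k ω, τ (k+1) ω - τ k ω = ξ k ω / n := by
    intro k ω
    rw [hτ, hτ, Finset.sum_range_succ, add_div, add_sub_cancel_left]
  have hτmono : ∀ ω, StrictMono (fun k => τ k ω) := by
    intro ω
    apply strictMono_nat_of_lt_succ
    intro k
    have := hτdiff k ω
    have h2 : 0 < ξ k ω / n := div_pos (hpos k ω) hn'
    linarith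
  have hτnn : ∀ k ω, 0 ≤ τ k ω := by
    intro k ω
    rw [← hτ0 ω]
    exact (hτmono ω).monotone (Nat.zero_le k)
  -- the sets A k
  set A : ℕ → Set Ω := fun k => {ω | τ k ω ≤ T} with hA
  have hAmeas : ∀ k, MeasurableSet (A k) := fun k => measurableSet_le (hτm k) measurable_const
  have hA0 : A 0 = Set.univ := by
    ext ω; simp [hA, hτ0 ω, hT.le]
  -- characterization of N
  have hNchar : ∀ (s : ℝ) ω k, τ k ω ≤ s → s < τ (k+1) ω → N s ω = k := by
    intro s ω k h1 h2
    have hset : {j : ℕ | τ j ω ≤ s} = Set.Iic k := by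
      ext j
      simp only [Set.mem_setOf_eq, Set.mem_Iic]
      constructor
      · intro hj
        by_contra hjk
        push_neg at hjk
        exact absurd (le_trans ((hτmono ω).monotone hjk) hj) (not_le.mpr h2)
      · intro hj
        exact le_trans ((hτmono ω).monotone hj) h1
    rw [hN, hset, csSup_Iic]
  have hπle : ∀ (s : ℝ) ω, 0 ≤ s → τ (N s ω) ω ≤ s := by
    intro s ω hs
    rw [hN]
    by_cases hb : BddAbove {k : ℕ | τ k ω ≤ s}
    · exact Nat.sSup_mem ⟨0, by simp [hτ0 ω, hs]⟩ hb
    · rw [csSup_of_not_bddAbove hb, csSup_empty]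
      simpa [hτ0 ω] using hs
  -- good/bad sets
  have hbadbdd : ∀ ω, (∃ k, T < τ k ω) → BddAbove {k : ℕ | τ k ω ≤ T} := by
    rintro ω ⟨k0, hk0⟩
    refine ⟨k0, fun j hj => ?_⟩
    by_contra hjk
    push_neg at hjk
    exact absurd (le_trans ((hτmono ω).monotone hjk.le) hj) (not_le.mpr hk0)
  have hgoodNT : ∀ ω, (∃ k, T < τ k ω) →
      τ (N T ω) ω ≤ T ∧ T < τ (N T ω + 1) ω ∧ ∀ k, (k ≤ N T ω ↔ τ k ω ≤ T) := by
    intro ω hg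
    have hbdd := hbadbdd ω hg
    have hne : {k : ℕ | τ k ω ≤ T}.Nonempty := ⟨0, by simp [hτ0 ω, hT.le]⟩
    have hmem : τ (sSup {k : ℕ | τ k ω ≤ T}) ω ≤ T := Nat.sSup_mem hne hbdd
    have hiff : ∀ k, k ≤ N T ω ↔ τ k ω ≤ T := by
      intro k
      rw [hN]
      constructor
      · intro hk
        exact le_trans ((hτmono ω).monotone hk) hmem
      · intro hk
        exact le_csSup hbdd hk
    refine ⟨by rw [hN]; exact hmem, ?_, hiff⟩
    by_contra hc
    push_neg at hc
    exact absurd ((hiff (N T ω + 1)).mpr hc) (by simp)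
  -- exponential bound on μ (A k)
  set r : ℝ := ∫ ω, Real.exp (-(ξ 0 ω)) ∂μ with hr
  have hexpm : Measurable fun x : ℝ => Real.exp (-x) :=
    (Real.continuous_exp.comp continuous_neg).measurable
  have hr0 : 0 ≤ r := integral_nonneg fun ω => (Real.exp_pos _).le
  have hr1 : r < 1 := by
    have h1 : ∫ ω, (1 - Real.exp (-(ξ 0 ω))) ∂μ = 1 - r := by
      rw [integral_sub (integrable_const 1) ?_, integral_const]
      · simp [hr]
      · refine (integrable_const (1:ℝ)).mono' (hexpm.comp (hmeas 0)).aestronglyMeasurable ?_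
        refine ae_of_all _ fun ω => ?_
        rw [Real.norm_eq_abs, abs_of_pos (Real.exp_pos _)]
        exact Real.exp_le_one_iff.mpr (by linarith [hpos 0 ω])
    by_contra hc
    push_neg at hc
    have h2 : ∫ ω, (1 - Real.exp (-(ξ 0 ω))) ∂μ ≤ 0 := by rw [h1]; linarith
    have h4 : ∀ ω, 0 < 1 - Real.exp (-(ξ 0 ω)) := by
      intro ω
      have := Real.exp_lt_one_iff.mpr (neg_neg_iff_pos.mpr (hpos 0 ω))
      linarith
    have h3 : ∫ ω, (1 - Real.exp (-(ξ 0 ω))) ∂μ = 0 :=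
      le_antisymm h2 (integral_nonneg fun ω => (h4 ω).le)
    -- integral of nonneg function being zero forces ae zero; but integrand may be non-integrable
    by_cases hint : Integrable (fun ω => 1 - Real.exp (-(ξ 0 ω))) μ
    · have := (integral_eq_zero_iff_of_nonneg (fun ω => (h4 ω).le) hint).mp h3
      have h5 : ∀ᵐ ω ∂μ, False := by
        filter_upwards [this] with ω hω
        exact absurd hω (ne_of_gt (h4 ω))
      obtain ⟨ω, hω⟩ := h5.exists
      exact hω
    · exact hint (by
        refine (integrable_const (1:ℝ)).mono' ?_ ?_
        · exact (aestronglyMeasurable_const.sub (hexpm.comp (hmeas 0)).aestronglyMeasurable)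
        · refine ae_of_all _ fun ω => ?_
          rw [Real.norm_eq_abs, abs_of_pos (h4 ω)]
          linarith [Real.exp_pos (-(ξ 0 ω))])
  have hrk : ∀ k, ∫ ω, Real.exp (-(∑ i ∈ Finset.range k, ξ i ω)) ∂μ = r ^ k :=
    exp_neg_sum_int μ ξ hmeas hindep hident
  have hAbound : ∀ k, μ (A k) ≤ ENNReal.ofReal (Real.exp (n * T) * r ^ k) := by
    intro k
    have hSm : Measurable fun ω => ∑ i ∈ Finset.range k, ξ i ω :=
      Finset.measurable_sum _ fun i _ => hmeas i
    have hfm : Measurable fun ω => Real.exp (n * T - ∑ i ∈ Finset.range k, ξ i ω) :=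
      Real.continuous_exp.measurable.comp (measurable_const.sub hSm)
    have hfint : Integrable (fun ω => Real.exp (n * T - ∑ i ∈ Finset.range k, ξ i ω)) μ := by
      refine (integrable_const (Real.exp (n * T))).mono' hfm.aestronglyMeasurable ?_
      refine ae_of_all _ fun ω => ?_
      rw [Real.norm_eq_abs, abs_of_pos (Real.exp_pos _)]
      apply Real.exp_le_exp.mpr
      have : 0 ≤ ∑ i ∈ Finset.range k, ξ i ω :=
        Finset.sum_nonneg fun i _ => (hpos i ω).le
      linarith
    have h1 : μ (A k) = ∫⁻ ω, Set.indicator (A k) (fun _ => (1:ENNReal)) ω ∂μ :=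
      (lintegral_indicator_one (hAmeas k)).symm
    rw [h1]
    have h2 : ∀ ω, Set.indicator (A k) (fun _ => (1:ENNReal)) ω
        ≤ ENNReal.ofReal (Real.exp (n * T - ∑ i ∈ Finset.range k, ξ i ω)) := by
      intro ω
      by_cases hω : ω ∈ A k
      · rw [Set.indicator_of_mem hω]
        rw [show (1:ENNReal) = ENNReal.ofReal 1 by simp]
        apply ENNReal.ofReal_le_ofReal
        rw [Real.one_le_exp_iff]
        have : τ k ω ≤ T := hω
        rw [hτ] at this
        have := (div_le_iff₀ hn').mp this
        linarith [this]
      · rw [Set.indicator_of_notMem hω]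
        exact zero_le
    calc ∫⁻ ω, Set.indicator (A k) (fun _ => (1:ENNReal)) ω ∂μ
        ≤ ∫⁻ ω, ENNReal.ofReal (Real.exp (n * T - ∑ i ∈ Finset.range k, ξ i ω)) ∂μ :=
          lintegral_mono h2
      _ = ENNReal.ofReal (∫ ω, Real.exp (n * T - ∑ i ∈ Finset.range k, ξ i ω) ∂μ) :=
          (ofReal_integral_eq_lintegral_ofReal hfint
            (ae_of_all _ fun ω => (Real.exp_pos _).le)).symm
      _ = ENNReal.ofReal (Real.exp (n * T) * r ^ k) := by
          rw [← hrk k]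
          congr 1
          rw [← integral_const_mul]
          congr 1; funext ω
          rw [← Real.exp_add, sub_eq_add_neg]
      _ ≤ _ := le_rfl
  have hbad : μ {ω | ∀ k, τ k ω ≤ T} = 0 := by
    have hsub : ∀ k, {ω | ∀ j, τ j ω ≤ T} ⊆ A k := fun k ω hω => hω k
    have htend : Filter.Tendsto (fun k => ENNReal.ofReal (Real.exp (n * T) * r ^ k))
        Filter.atTop (nhds 0) := by
      rw [show (0:ENNReal) = ENNReal.ofReal 0 by simp]
      apply ENNReal.tendsto_ofReal
      simpa using (tendsto_pow_atTop_nhds_zero_of_lt_one hr0 hr1).const_mul (Real.exp (n * T))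
    have hle : ∀ k, μ {ω | ∀ j, τ j ω ≤ T} ≤ ENNReal.ofReal (Real.exp (n * T) * r ^ k) :=
      fun k => le_trans (measure_mono (hsub k)) (hAbound k)
    simpa using ge_of_tendsto' htend hle
  have hgoodae : ∀ᵐ ω ∂μ, ∃ k, T < τ k ω := by
    rw [ae_iff]
    have : {ω | ¬∃ k, T < τ k ω} = {ω | ∀ k, τ k ω ≤ T} := by
      ext ω; simp only [Set.mem_setOf_eq, not_exists, not_lt]
    rw [this]
    exact hbad
  -- measurability of N T
  have hNTmeas : Measurable (fun ω => N T ω) := by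
    apply measurable_to_countable'
    intro m
    match m with
    | 0 =>
      have : (fun ω => N T ω) ⁻¹' {0} = {ω | T < τ 1 ω} ∪ {ω | ∀ k, τ k ω ≤ T} := by
        ext ω
        simp only [Set.mem_preimage, Set.mem_singleton_iff, Set.mem_union, Set.mem_setOf_eq]
        constructor
        · intro h0
          by_cases hg : ∃ k, T < τ k ω
          · left
            have := (hgoodNT ω hg).2.1
            rwa [h0] at this
          · right
            push_neg at hg
            exact fun k => hg k
        · rintro (h | h)
          · exact hNchar T ω 0 (by simp [hτ0 ω, hT.le]) h
          · rw [hN]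
            have hall : {k : ℕ | τ k ω ≤ T} = Set.univ := by
              ext k; simp [h k]
            rw [hall]
            have hnb : ¬ BddAbove (Set.univ : Set ℕ) := by
              rintro ⟨b, hb⟩
              exact absurd (hb (Set.mem_univ (b+1))) (by simp)
            rw [csSup_of_not_bddAbove hnb, csSup_empty]
            rfl
      rw [this]
      refine ((measurableSet_lt measurable_const (hτm 1)).union ?_)
      have : {ω : Ω | ∀ k, τ k ω ≤ T} = ⋂ k, {ω : Ω | τ k ω ≤ T} := by
        ext ω; simp
      rw [this]
      exact MeasurableSet.iInter fun k => measurableSet_le (hτm k) measurable_const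
    | (m+1) =>
      have : (fun ω => N T ω) ⁻¹' {m+1} = A (m+1) ∩ {ω | T < τ (m+2) ω} := by
        ext ω
        simp only [Set.mem_preimage, Set.mem_singleton_iff, Set.mem_inter_iff, Set.mem_setOf_eq]
        constructor
        · intro h0
          have hg : ∃ k, T < τ k ω := by
            by_contra hg
            push_neg at hg
            have hall : {k : ℕ | τ k ω ≤ T} = Set.univ := by
              ext k; simp [hg k]
            have hnb : ¬ BddAbove (Set.univ : Set ℕ) := by
              rintro ⟨b, hb⟩
              exact absurd (hb (Set.mem_univ (b+1))) (by simp)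
            rw [hN, hall, csSup_of_not_bddAbove hnb, csSup_empty] at h0
            exact absurd h0 (by simp)
          obtain ⟨h1, h2, _⟩ := hgoodNT ω hg
          rw [h0] at h1 h2
          exact ⟨h1, h2⟩
        · rintro ⟨h1, h2⟩
          exact hNchar T ω (m+1) h1 h2
      rw [this]
      exact (hAmeas (m+1)).inter (measurableSet_lt measurable_const (hτm (m+2)))
  -- μ (A (k+1)) = μ {k < N T}
  have hmuA : ∀ k, μ (A (k+1)) = μ {ω | k < N T ω} := by
    intro k
    apply measure_congr
    rw [Filter.eventuallyEq_set]
    filter_upwards [hgoodae] with ω hg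
    have hiff := (hgoodNT ω hg).2.2 (k+1)
    simp only [hA, Set.mem_setOf_eq]
    rw [← hiff]
    exact ⟨Nat.lt_of_succ_le ∘ id, Nat.succ_le_of_lt⟩
  -- integral of N T
  have hlintN : ∫⁻ ω, (N T ω : ENNReal) ∂μ = ∑' k : ℕ, μ {ω | k < N T ω} :=
    lintegral_nat_aux μ _ (fun k => hNTmeas measurableSet_Ioi)
  have hAmono : ∀ k, μ (A (k+1)) ≤ μ (A k) := by
    intro k
    apply measure_mono
    intro ω hω
    exact le_trans ((hτmono ω).monotone (Nat.le_succ k)) hω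
  have hsumA : ∑' k : ℕ, μ (A k) = 1 + ∫⁻ ω, (N T ω : ENNReal) ∂μ := by
    rw [tsum_eq_zero_add' ENNReal.summable, hA0, measure_univ, hlintN]
    congr 1
    exact tsum_congr fun k => hmuA k
  have hNfin : ∫⁻ ω, (N T ω : ENNReal) ∂μ ≠ ⊤ := by
    have h1 : ∫⁻ ω, (N T ω : ENNReal) ∂μ ≤ ∑' k : ℕ, ENNReal.ofReal (Real.exp (n * T) * r ^ k) := by
      rw [hlintN]
      apply ENNReal.tsum_le_tsum
      intro k
      rw [← hmuA k]
      exact le_trans (hAmono k) (hAbound k)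
    have h2 : ∑' k : ℕ, ENNReal.ofReal (Real.exp (n * T) * r ^ k)
        = ENNReal.ofReal (Real.exp (n * T)) * (1 - ENNReal.ofReal r)⁻¹ := by
      rw [← ENNReal.tsum_geometric, ← ENNReal.tsum_mul_left]
      congr 1; funext k
      rw [ENNReal.ofReal_mul (Real.exp_pos _).le, ENNReal.ofReal_pow hr0]
    refine ne_top_of_le_ne_top ?_ (h1.trans h2.le)
    apply ENNReal.mul_ne_top ENNReal.ofReal_ne_top
    apply ENNReal.inv_ne_top.mpr
    apply ne_of_gt
    rw [tsub_pos_iff_lt]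
    exact ENNReal.ofReal_lt_one.mpr hr1
  have hNcastmeas : Measurable (fun ω => (N T ω : ℝ)) :=
    measurable_from_top.comp hNTmeas
  have hNint : Integrable (fun ω => (N T ω : ℝ)) μ := by
    constructor
    · exact hNcastmeas.aestronglyMeasurable
    · rw [hasFiniteIntegral_iff_norm]
      have : ∀ ω, ENNReal.ofReal ‖(N T ω : ℝ)‖ = (N T ω : ENNReal) := by
        intro ω
        rw [Real.norm_eq_abs, abs_of_nonneg (by positivity), ENNReal.ofReal_natCast]
      simp_rw [this]
      exact hNfin.lt_top
  have hNval : ∫ ω, (N T ω : ℝ) ∂μ = (∫⁻ ω, (N T ω : ENNReal) ∂μ).toReal := by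
    rw [integral_eq_lintegral_of_nonneg_ae (ae_of_all _ fun ω => by positivity)
      hNcastmeas.aestronglyMeasurable]
    congr 1
    exact lintegral_congr fun ω => by rw [ENNReal.ofReal_natCast]
  -- integrability of ξ k ^ (p+1)
  have hrpowm : Measurable fun x : ℝ => x ^ (p + 1) :=
    (Real.continuous_rpow_const (by linarith)).measurable
  have hMint : Integrable (fun ω => ξ 0 ω ^ (p + 1)) μ := by
    refine (hmgf (p+1) (by linarith)).mono' (hrpowm.comp (hmeas 0)).aestronglyMeasurable ?_
    refine ae_of_all _ fun ω => ?_
    have hx : 0 < ξ 0 ω := hpos 0 ω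
    rw [Real.norm_eq_abs, abs_of_nonneg (Real.rpow_nonneg hx.le _)]
    calc ξ 0 ω ^ (p + 1) ≤ (Real.exp (ξ 0 ω)) ^ (p + 1) :=
          Real.rpow_le_rpow hx.le (by linarith [Real.add_one_le_exp (ξ 0 ω)]) (by linarith)
      _ = Real.exp ((p + 1) * ξ 0 ω) := by
          rw [← Real.exp_mul, mul_comm]
  set M : ℝ := ∫ ω, ξ 0 ω ^ (p + 1) ∂μ with hM
  have hM0 : 0 ≤ M := integral_nonneg fun ω => Real.rpow_nonneg (hpos 0 ω).le _
  have hξkM : ∀ k, ∫ ω, ξ k ω ^ (p + 1) ∂μ = M := fun k =>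
    ((hident k).comp hrpowm).integral_eq
  -- Wald-type identity for each k
  have hIk : ∀ k : ℕ, ∫⁻ ω, Set.indicator (A k) (fun ω => ENNReal.ofReal (ξ k ω ^ (p+1))) ω ∂μ
      = μ (A k) * ENNReal.ofReal M := by
    intro k
    have hfkint : Integrable (Set.indicator (A k) (fun ω => ξ k ω ^ (p+1))) μ := by
      apply Integrable.indicator ?_ (hAmeas k)
      exact ((hident k).comp hrpowm).integrable_iff.mpr hMint
    have h1 : ∀ ω, Set.indicator (A k) (fun ω => ENNReal.ofReal (ξ k ω ^ (p+1))) ω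
        = ENNReal.ofReal (Set.indicator (A k) (fun ω => ξ k ω ^ (p+1)) ω) := by
      intro ω
      by_cases hω : ω ∈ A k
      · rw [Set.indicator_of_mem hω, Set.indicator_of_mem hω]
      · rw [Set.indicator_of_notMem hω, Set.indicator_of_notMem hω, ENNReal.ofReal_zero]
    simp_rw [h1]
    have hnn : 0 ≤ᵐ[μ] Set.indicator (A k) (fun ω => ξ k ω ^ (p+1)) :=
      ae_of_all _ fun ω => Set.indicator_nonneg (fun ω _ => Real.rpow_nonneg (hpos k ω).le _) ω
    rw [← ofReal_integral_eq_lintegral_ofReal hfkint hnn]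
    -- compute the integral via independence
    have hSm : Measurable fun ω => ∑ i ∈ Finset.range k, ξ i ω :=
      Finset.measurable_sum _ fun i _ => hmeas i
    have hφ : Measurable fun x : ℝ => Set.indicator {y : ℝ | y / n ≤ T} (fun _ => (1:ℝ)) x :=
      measurable_const.indicator (measurableSet_le (measurable_id.div_const _) measurable_const)
    have hind : IndepFun (fun ω => ∑ i ∈ Finset.range k, ξ i ω) (ξ k) μ := by
      have h := hindep.indepFun_sum_range_succ hmeas k
      have he : (∑ j ∈ Finset.range k, ξ j) = fun ω => ∑ i ∈ Finset.range k, ξ i ω := by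
        funext ω; simp
      rwa [he] at h
    have hind2 : IndepFun
        (fun ω => Set.indicator {y : ℝ | y / n ≤ T} (fun _ => (1:ℝ))
          (∑ i ∈ Finset.range k, ξ i ω))
        (fun ω => ξ k ω ^ (p+1)) μ := hind.comp hφ hrpowm
    have h2 : ∀ ω, Set.indicator (A k) (fun ω => ξ k ω ^ (p+1)) ω
        = Set.indicator {y : ℝ | y / n ≤ T} (fun _ => (1:ℝ)) (∑ i ∈ Finset.range k, ξ i ω)
          * ξ k ω ^ (p+1) := by
      intro ω
      have hiff : ω ∈ A k ↔ (∑ i ∈ Finset.range k, ξ i ω) ∈ {y : ℝ | y / n ≤ T} := by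
        simp only [hA, Set.mem_setOf_eq, hτ]
      by_cases hω : ω ∈ A k
      · rw [Set.indicator_of_mem hω, Set.indicator_of_mem (hiff.mp hω), one_mul]
      · rw [Set.indicator_of_notMem hω, Set.indicator_of_notMem (fun h => hω (hiff.mpr h)),
          zero_mul]
    simp_rw [h2]
    rw [hind2.integral_fun_mul_eq_mul_integral (hφ.comp hSm).aestronglyMeasurable
      (hrpowm.comp (hmeas k)).aestronglyMeasurable, hξkM k]
    have h3 : ∫ ω, Set.indicator {y : ℝ | y / n ≤ T} (fun _ => (1:ℝ))
        (∑ i ∈ Finset.range k, ξ i ω) ∂μ = (μ (A k)).toReal := by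
      have h4 : (fun ω => Set.indicator {y : ℝ | y / n ≤ T} (fun _ => (1:ℝ))
          (∑ i ∈ Finset.range k, ξ i ω)) = Set.indicator (A k) (fun _ => (1:ℝ)) := by
        funext ω
        have hiff : ω ∈ A k ↔ (∑ i ∈ Finset.range k, ξ i ω) ∈ {y : ℝ | y / n ≤ T} := by
          simp only [hA, Set.mem_setOf_eq, hτ]
        by_cases hω : ω ∈ A k
        · rw [Set.indicator_of_mem hω, Set.indicator_of_mem (hiff.mp hω)]
        · rw [Set.indicator_of_notMem hω, Set.indicator_of_notMem (fun h => hω (hiff.mpr h))]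
      rw [h4]
      exact integral_indicator_one (hAmeas k)
    rw [h3, ENNReal.ofReal_mul ENNReal.toReal_nonneg, ENNReal.ofReal_toReal (measure_ne_top μ _)]
  -- the dominating ENNReal function
  set Φ : Ω → ENNReal := fun ω =>
    ∑' k : ℕ, Set.indicator (A k) (fun ω => ENNReal.ofReal (ξ k ω ^ (p+1))) ω with hΦ
  have hΦlint : ∫⁻ ω, Φ ω ∂μ
      = (1 + ∫⁻ ω, (N T ω : ENNReal) ∂μ) * ENNReal.ofReal M := by
    simp only [hΦ]
    rw [lintegral_tsum (f := fun k => Set.indicator (A k) (fun ω => ENNReal.ofReal (ξ k ω ^ (p+1))))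
      (fun k => ((ENNReal.measurable_ofReal.comp (hrpowm.comp (hmeas k))).indicator
        (hAmeas k)).aemeasurable)]
    rw [tsum_congr hIk, ENNReal.tsum_mul_right, hsumA]
  -- nonnegativity of the inner integral
  have hGnn : ∀ ω, 0 ≤ ∫ s in (0:ℝ)..T, (s - π s ω) ^ p := by
    intro ω
    apply intervalIntegral.integral_nonneg hT.le
    intro s hs
    apply Real.rpow_nonneg
    rw [hπ]
    exact sub_nonneg.mpr (hπle s ω hs.1)
  -- pointwise a.e. bound
  have hptw : ∀ᵐ ω ∂μ, ENNReal.ofReal (∫ s in (0:ℝ)..T, (s - π s ω) ^ p)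
      ≤ ENNReal.ofReal (1 / (n:ℝ) ^ (p+1)) * Φ ω := by
    filter_upwards [hgoodae] with ω hg
    obtain ⟨h1, h2, hiff⟩ := hgoodNT ω hg
    have hbound := pointwise_piece_bound T p hT hp (fun k => τ k ω) (hτ0 ω) (hτmono ω)
      (fun s => N s ω) (fun s => hN s ω) (N T ω) h1 h2
    have heq : (fun s => (s - π s ω) ^ p) = fun s => (s - τ (N s ω) ω) ^ p := by
      funext s; rw [hπ]
    rw [heq]
    set m := N T ω
    calc ENNReal.ofReal (∫ s in (0:ℝ)..T, (s - τ (N s ω) ω) ^ p)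
        ≤ ENNReal.ofReal (∑ k ∈ Finset.range (m+1), (τ (k+1) ω - τ k ω) ^ (p+1)) :=
          ENNReal.ofReal_le_ofReal hbound
      _ = ∑ k ∈ Finset.range (m+1), ENNReal.ofReal ((τ (k+1) ω - τ k ω) ^ (p+1)) := by
          rw [ENNReal.ofReal_sum_of_nonneg]
          intro k _
          exact Real.rpow_nonneg (by linarith [(hτmono ω).lt_iff_lt.mpr (Nat.lt_succ_self k)]) _
      _ = ∑ k ∈ Finset.range (m+1),
            ENNReal.ofReal (1 / (n:ℝ) ^ (p+1)) * ENNReal.ofReal (ξ k ω ^ (p+1)) := by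
          apply Finset.sum_congr rfl
          intro k _
          rw [hτdiff k ω, Real.div_rpow (hpos k ω).le hn'.le, div_eq_mul_inv, ← one_div,
            mul_comm, ← ENNReal.ofReal_mul (by positivity)]
      _ = ENNReal.ofReal (1 / (n:ℝ) ^ (p+1))
            * ∑ k ∈ Finset.range (m+1), ENNReal.ofReal (ξ k ω ^ (p+1)) := by
          rw [Finset.mul_sum]
      _ ≤ ENNReal.ofReal (1 / (n:ℝ) ^ (p+1)) * Φ ω := by
          apply mul_le_mul_right
          have hsum_eq : ∑ k ∈ Finset.range (m+1), ENNReal.ofReal (ξ k ω ^ (p+1))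
              = ∑ k ∈ Finset.range (m+1),
                  Set.indicator (A k) (fun ω => ENNReal.ofReal (ξ k ω ^ (p+1))) ω := by
            apply Finset.sum_congr rfl
            intro k hk
            have hkA : ω ∈ A k := (hiff k).mp (Nat.lt_succ_iff.mp (Finset.mem_range.mp hk))
            rw [Set.indicator_of_mem hkA]
          rw [hsum_eq, hΦ]
          exact ENNReal.sum_le_tsum _
  -- final assembly
  by_cases hGint : Integrable (fun ω => ∫ s in (0:ℝ)..T, (s - π s ω) ^ p) μ
  · rw [integral_eq_lintegral_of_nonneg_ae (ae_of_all _ hGnn) hGint.aestronglyMeasurable]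
    have hlin : ∫⁻ ω, ENNReal.ofReal (∫ s in (0:ℝ)..T, (s - π s ω) ^ p) ∂μ
        ≤ ENNReal.ofReal (1 / (n:ℝ) ^ (p+1))
          * ((1 + ∫⁻ ω, (N T ω : ENNReal) ∂μ) * ENNReal.ofReal M) := by
      calc ∫⁻ ω, ENNReal.ofReal (∫ s in (0:ℝ)..T, (s - π s ω) ^ p) ∂μ
          ≤ ∫⁻ ω, ENNReal.ofReal (1 / (n:ℝ) ^ (p+1)) * Φ ω ∂μ := lintegral_mono_ae hptw
        _ = ENNReal.ofReal (1 / (n:ℝ) ^ (p+1)) * ∫⁻ ω, Φ ω ∂μ :=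
            lintegral_const_mul' _ _ ENNReal.ofReal_ne_top
        _ = _ := by rw [hΦlint]
    have hfin : ENNReal.ofReal (1 / (n:ℝ) ^ (p+1))
        * ((1 + ∫⁻ ω, (N T ω : ENNReal) ∂μ) * ENNReal.ofReal M) ≠ ⊤ := by
      apply ENNReal.mul_ne_top ENNReal.ofReal_ne_top
      apply ENNReal.mul_ne_top ?_ ENNReal.ofReal_ne_top
      exact ENNReal.add_ne_top.mpr ⟨ENNReal.one_ne_top, hNfin⟩
    refine le_trans (ENNReal.toReal_mono hfin hlin) ?_
    rw [ENNReal.toReal_mul, ENNReal.toReal_mul, ENNReal.toReal_add ENNReal.one_ne_top hNfin,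
      ENNReal.toReal_one, ENNReal.toReal_ofReal (by positivity), ENNReal.toReal_ofReal hM0]
    rw [← hNval]
    set EN : ℝ := ∫ ω, (N T ω : ℝ) ∂μ with hEN
    have hEN0 : 0 ≤ EN := integral_nonneg fun ω => by positivity
    have hnp : (n:ℝ) ^ (p+1) = (n:ℝ) ^ p * n := by
      rw [Real.rpow_add hn', Real.rpow_one]
    have hnppos : 0 < (n:ℝ) ^ p := Real.rpow_pos_of_pos hn' p
    calc 1 / (n:ℝ) ^ (p+1) * ((1 + EN) * M)
        = 1 / ((n:ℝ) ^ p * n) * ((1 + EN) * M) := by rw [hnp]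
      _ ≤ 1 / ((n:ℝ) ^ p * n) * ((EN + 2) * M) := by
          apply mul_le_mul_of_nonneg_left
            (mul_le_mul_of_nonneg_right (by linarith) hM0) (by positivity)
      _ = 1 / (n:ℝ) ^ p * ((EN + 2) / n) * M := by
          field_simp
  · rw [integral_undef hGint]
    have hEN0 : 0 ≤ ∫ ω, (N T ω : ℝ) ∂μ := integral_nonneg fun ω => by positivity
    apply mul_nonneg (mul_nonneg (by positivity) (by positivity)) hM0
end

section
/- Let A ∈ ℝ^{d×d}, B ∈ ℝ^{d×m}, K ∈ ℝ^{m×d}, x₀ ∈ ℝ^d, T > 0 and p ≥ 1. Let π : [0,T] → [0,T] be measurable with π(s) ≤ s for all s. Let x : [0,T] → ℝ^d be the solution of x(t) = x₀ + ∫₀ᵗ (A − BK) x(s) ds, and let xⁿ : [0,T] → ℝ^d be a continuous solution of xⁿ(t) = x₀ + ∫₀ᵗ (A xⁿ(s) − BK xⁿ(π(s))) ds. Then there exists a constant C depending only on A, B, K, T, p and ‖x₀‖ such that sup_{0 ≤ t ≤ T} ‖xⁿ(t) − x(t)‖^p ≤ C · ∫₀ᵀ (s − π(s))^p ds. -/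
open MeasureTheory Set Finset Filter


lemma my_gronwall (T a L M : ℝ) (hT : 0 ≤ T) (ha : 0 ≤ a) (hL : 0 ≤ L) (hM : 0 ≤ M)
    (u : ℝ → ℝ) (hMu : ∀ t ∈ Set.Icc (0:ℝ) T, u t ≤ M)
    (H : ∀ b : ℝ → ℝ, MonotoneOn b (Set.Icc (0:ℝ) T) → ContinuousOn b (Set.Icc (0:ℝ) T) →
      (∀ s ∈ Set.Icc (0:ℝ) T, 0 ≤ b s) → (∀ s ∈ Set.Icc (0:ℝ) T, u s ≤ b s) →
      ∀ t ∈ Set.Icc (0:ℝ) T, u t ≤ a + L * ∫ s in (0:ℝ)..t, b s) :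
    ∀ t ∈ Set.Icc (0:ℝ) T, u t ≤ a * Real.exp (L * T) := by
  set c : ℕ → ℝ → ℝ := fun n t =>
    a * (∑ k ∈ Finset.range n, (L*t)^k / (Nat.factorial k)) + M * ((L*t)^n / (Nat.factorial n))
    with hc
  have hcont : ∀ n, ContinuousOn (c n) (Set.Icc (0:ℝ) T) := by
    intro n; apply Continuous.continuousOn; rw [hc]; fun_prop
  have hmono : ∀ n, MonotoneOn (c n) (Set.Icc (0:ℝ) T) := by
    intro n x hx y hy hxy
    have hx0 : 0 ≤ L * x := mul_nonneg hL hx.1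
    have hxy' : L * x ≤ L * y := mul_le_mul_of_nonneg_left hxy hL
    have hkey : ∀ k : ℕ, (L*x)^k ≤ (L*y)^k := fun k => pow_le_pow_left₀ hx0 hxy' k
    simp only [hc]
    gcongr
    all_goals first | exact hkey _ | exact hkey n
  have hnonneg : ∀ n, ∀ s ∈ Set.Icc (0:ℝ) T, 0 ≤ c n s := by
    intro n s hs
    have h0 : 0 ≤ L * s := mul_nonneg hL hs.1
    apply add_nonneg
    · exact mul_nonneg ha (Finset.sum_nonneg fun k _ =>
        div_nonneg (pow_nonneg h0 k) (Nat.cast_nonneg _))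
    · exact mul_nonneg hM (div_nonneg (pow_nonneg h0 n) (Nat.cast_nonneg _))
  have h1 : ∀ (k : ℕ) (t : ℝ), (∫ s in (0:ℝ)..t, (L*s)^k / (Nat.factorial k))
      = L^k * t^(k+1) / ((k+1) * Nat.factorial k) := by
    intro k t
    rw [intervalIntegral.integral_div]
    simp_rw [mul_pow]
    rw [intervalIntegral.integral_const_mul, integral_pow]
    have : ((Nat.factorial k : ℝ)) ≠ 0 := Nat.cast_ne_zero.2 (Nat.factorial_ne_zero k)
    rw [zero_pow (Nat.succ_ne_zero k)]
    push_cast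
    field_simp
    ring
  have h2 : ∀ (n : ℕ) (t : ℝ), (∫ s in (0:ℝ)..t, c n s)
      = a * ∑ k ∈ Finset.range n, (L^k * t^(k+1) / ((k+1) * Nat.factorial k))
        + M * (L^n * t^(n+1) / ((n+1) * Nat.factorial n)) := by
    intro n t
    rw [hc]
    rw [intervalIntegral.integral_add (by apply Continuous.intervalIntegrable; fun_prop)
      (by apply Continuous.intervalIntegrable; fun_prop)]
    rw [intervalIntegral.integral_const_mul, intervalIntegral.integral_const_mul]
    rw [intervalIntegral.integral_finset_sum
      (fun k _ => by apply Continuous.intervalIntegrable; fun_prop)]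
    simp_rw [h1]
  have hint : ∀ (n : ℕ) (t : ℝ), a + L * ∫ s in (0:ℝ)..t, c n s = c (n+1) t := by
    intro n t
    have h3 : ∀ (k : ℕ), (L*t)^(k+1) / ((Nat.factorial (k+1) : ℝ))
        = L * (L^k * t^(k+1) / ((k+1) * Nat.factorial k)) := by
      intro k
      have hk : ((Nat.factorial k : ℝ)) ≠ 0 := Nat.cast_ne_zero.2 (Nat.factorial_ne_zero k)
      rw [mul_pow, Nat.factorial_succ]
      push_cast
      field_simp
      ring
    rw [h2, hc]
    simp only [Finset.sum_range_succ', pow_zero, Nat.factorial_zero, Nat.cast_one, div_one, h3]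
    rw [← Finset.mul_sum]
    ring
  have hub : ∀ n, ∀ t ∈ Set.Icc (0:ℝ) T, u t ≤ c n t := by
    intro n
    induction n with
    | zero =>
      intro t ht
      have := hMu t ht
      simp only [hc, Finset.range_zero, Finset.sum_empty, mul_zero, pow_zero,
        Nat.factorial_zero, Nat.cast_one, div_one, zero_add]
      linarith
    | succ n ih =>
      intro t ht
      calc u t ≤ a + L * ∫ s in (0:ℝ)..t, c n s :=
            H (c n) (hmono n) (hcont n) (hnonneg n) ih t ht
        _ = c (n+1) t := hint n t
  intro t ht
  have hLt : 0 ≤ L * t := mul_nonneg hL ht.1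
  have hbound : ∀ n, u t ≤ a * Real.exp (L*t) + M * ((L*t)^n / Nat.factorial n) := by
    intro n
    refine (hub n t ht).trans ?_
    rw [hc]
    exact add_le_add (mul_le_mul_of_nonneg_left (Real.sum_le_exp_of_nonneg hLt n) ha) le_rfl
  have htend : Tendsto (fun n => a * Real.exp (L*t) + M * ((L*t)^n / Nat.factorial n))
      atTop (nhds (a * Real.exp (L*t) + M * 0)) :=
    tendsto_const_nhds.add ((FloorSemiring.tendsto_pow_div_factorial_atTop (L*t)).const_mul M)
  have hfin : u t ≤ a * Real.exp (L*t) + M * 0 :=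
    ge_of_tendsto htend (Filter.Eventually.of_forall hbound)
  rw [mul_zero, add_zero] at hfin
  exact hfin.trans (mul_le_mul_of_nonneg_left
    (Real.exp_le_exp.2 (mul_le_mul_of_nonneg_left ht.2 hL)) ha)


lemma my_jensen (T p : ℝ) (hT : 0 < T) (hp : 1 ≤ p) (g : ℝ → ℝ)
    (hg0 : ∀ s ∈ Set.Ioc (0:ℝ) T, 0 ≤ g s)
    (hgi : IntegrableOn g (Set.Ioc (0:ℝ) T))
    (hgpi : IntegrableOn (fun s => g s ^ p) (Set.Ioc (0:ℝ) T)) :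
    (∫ s in (0:ℝ)..T, g s) ^ p ≤ T ^ (p-1) * ∫ s in (0:ℝ)..T, g s ^ p := by
  set μ := volume.restrict (Set.Ioc (0:ℝ) T) with hμ
  have hμuniv : μ Set.univ = ENNReal.ofReal T := by
    rw [hμ, Measure.restrict_apply_univ, Real.volume_Ioc, sub_zero]
  haveI : IsFiniteMeasure μ := ⟨by rw [hμuniv]; exact ENNReal.ofReal_lt_top⟩
  haveI : NeZero μ := by
    refine ⟨fun h => ?_⟩
    have := hμuniv
    rw [h] at this
    simp only [Measure.coe_zero, Pi.zero_apply] at this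
    exact absurd this.symm (by simp [ENNReal.ofReal_eq_zero, not_le, hT])
  have hae : ∀ᵐ s ∂μ, g s ∈ Set.Ici (0:ℝ) :=
    (ae_restrict_iff' measurableSet_Ioc).2 (Filter.Eventually.of_forall hg0)
  have hconv : ConvexOn ℝ (Set.Ici (0:ℝ)) (fun x : ℝ => x ^ p) := convexOn_rpow hp
  have hcont : ContinuousOn (fun x : ℝ => x ^ p) (Set.Ici (0:ℝ)) := by
    intro x hx
    exact (Real.continuousAt_rpow_const x p (Or.inr (by linarith))).continuousWithinAt
  have hjen := hconv.map_average_le hcont isClosed_Ici hae hgi hgpi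
  have havg : ∀ f : ℝ → ℝ, (⨍ s, f s ∂μ) = T⁻¹ * ∫ s, f s ∂μ := by
    intro f
    rw [average_eq, measureReal_def, hμuniv, ENNReal.toReal_ofReal hT.le, smul_eq_mul]
  rw [havg, havg] at hjen
  have hI0 : 0 ≤ ∫ s, g s ∂μ := integral_nonneg_of_ae ((ae_restrict_iff' measurableSet_Ioc).2
    (Filter.Eventually.of_forall hg0))
  have hTp : (0:ℝ) < T⁻¹ := inv_pos.2 hT
  have key : (∫ s, g s ∂μ) ^ p ≤ T ^ (p-1) * ∫ s, (g s) ^ p ∂μ := by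
    have h1 : (T⁻¹ * ∫ s, g s ∂μ) ^ p = T⁻¹ ^ p * (∫ s, g s ∂μ) ^ p :=
      Real.mul_rpow hTp.le hI0
    rw [h1] at hjen
    have h2 : (∫ s, g s ∂μ) ^ p ≤ T ^ p * (T⁻¹ * ∫ s, (g s) ^ p ∂μ) := by
      have := mul_le_mul_of_nonneg_left hjen (le_of_lt (Real.rpow_pos_of_pos hT p))
      calc (∫ s, g s ∂μ) ^ p = T ^ p * (T⁻¹ ^ p * (∫ s, g s ∂μ) ^ p) := by
            rw [← mul_assoc, ← Real.mul_rpow hT.le hTp.le, mul_inv_cancel₀ hT.ne',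
              Real.one_rpow, one_mul]
        _ ≤ T ^ p * (T⁻¹ * ∫ s, (g s) ^ p ∂μ) := this
    calc (∫ s, g s ∂μ) ^ p ≤ T ^ p * (T⁻¹ * ∫ s, (g s) ^ p ∂μ) := h2
      _ = T ^ (p-1) * ∫ s, (g s) ^ p ∂μ := by
          rw [← mul_assoc, Real.rpow_sub hT, Real.rpow_one, div_eq_mul_inv]
  rw [intervalIntegral.integral_of_le hT.le, intervalIntegral.integral_of_le hT.le]
  exact key

/-- Deterministic (pathwise) comparison between the continuously
controlled trajectory `x` and the sample-and-hold trajectory `xⁿ`: there is a constant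
`C` depending only on `A, B, K, T, p, ‖x₀‖` such that for every sampling map `π` and
every pair of solutions, `sup_{0≤t≤T} ‖xⁿ(t) − x(t)‖^p ≤ C ∫₀ᵀ (s − π(s))^p ds`. -/
theorem stmt_10 (d m : ℕ) (hd : 0 < d) (hm : 0 < m)
    (A : EuclideanSpace ℝ (Fin d) →L[ℝ] EuclideanSpace ℝ (Fin d))
    (B : EuclideanSpace ℝ (Fin m) →L[ℝ] EuclideanSpace ℝ (Fin d))
    (K : EuclideanSpace ℝ (Fin d) →L[ℝ] EuclideanSpace ℝ (Fin m))
    (x₀ : EuclideanSpace ℝ (Fin d)) (T : ℝ) (hT : 0 < T) (p : ℝ) (hp : 1 ≤ p) :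
    ∃ C : ℝ, 0 < C ∧
      ∀ (π : ℝ → ℝ), Measurable π →
        (∀ s ∈ Set.Icc (0 : ℝ) T, π s ∈ Set.Icc (0 : ℝ) T) →
        (∀ s ∈ Set.Icc (0 : ℝ) T, π s ≤ s) →
        ∀ (x xn : ℝ → EuclideanSpace ℝ (Fin d)),
          ContinuousOn x (Set.Icc (0 : ℝ) T) →
          ContinuousOn xn (Set.Icc (0 : ℝ) T) →
          (∀ t ∈ Set.Icc (0 : ℝ) T,
            x t = x₀ + ∫ s in (0 : ℝ)..t, (A (x s) - B (K (x s)))) →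
          (∀ t ∈ Set.Icc (0 : ℝ) T,
            xn t = x₀ + ∫ s in (0 : ℝ)..t, (A (xn s) - B (K (xn (π s))))) →
          (⨆ t : Set.Icc (0 : ℝ) T, ‖xn t - x t‖ ^ p)
            ≤ C * ∫ s in (0 : ℝ)..T, (s - π s) ^ p := by
  have hp0 : (0:ℝ) ≤ p := by linarith
  set LBK : ℝ := ‖B‖ * ‖K‖ with hLBKdef
  set L : ℝ := ‖A‖ + LBK with hLdef
  have hLBK0 : 0 ≤ LBK := mul_nonneg (norm_nonneg _) (norm_nonneg _)
  have hL0 : 0 ≤ L := add_nonneg (norm_nonneg _) hLBK0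
  set X : ℝ := ‖x₀‖ * Real.exp (L * T) with hXdef
  have hX0 : 0 ≤ X := mul_nonneg (norm_nonneg _) (Real.exp_pos _).le
  set K₁ : ℝ := LBK * (L * X) * Real.exp (L * T) with hK₁def
  have hK₁0 : 0 ≤ K₁ := by positivity
  have hC0 : 0 ≤ K₁ ^ p * T ^ (p-1) :=
    mul_nonneg (Real.rpow_nonneg hK₁0 p) (Real.rpow_nonneg hT.le _)
  refine ⟨K₁ ^ p * T ^ (p-1) + 1, by linarith, ?_⟩
  intro π hπm hπmem hπle x xn hx hxn hxeq hxneq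
  -- operator bound
  have hBK : ∀ v : EuclideanSpace ℝ (Fin d), ‖B (K v)‖ ≤ LBK * ‖v‖ := by
    intro v
    calc ‖B (K v)‖ ≤ ‖B‖ * ‖K v‖ := B.le_opNorm _
      _ ≤ ‖B‖ * (‖K‖ * ‖v‖) := mul_le_mul_of_nonneg_left (K.le_opNorm v) (norm_nonneg _)
      _ = LBK * ‖v‖ := by rw [hLBKdef]; ring
  -- abbreviations for integrands
  set hn : ℝ → EuclideanSpace ℝ (Fin d) := fun s => A (xn s) - B (K (xn (π s))) with hhn
  set hxf : ℝ → EuclideanSpace ℝ (Fin d) := fun s => A (x s) - B (K (x s)) with hhxf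
  -- compactness bounds
  obtain ⟨Mn, hMn⟩ := (isCompact_Icc (a := (0:ℝ)) (b := T)).exists_bound_of_continuousOn hxn
  obtain ⟨Me, hMe⟩ := (isCompact_Icc (a := (0:ℝ)) (b := T)).exists_bound_of_continuousOn (hxn.sub hx)
  -- measurable modification of xn ∘ π
  set π' : ℝ → ℝ := fun s => if s ∈ Set.Icc (0:ℝ) T then π s else 0 with hπ'def
  have hπ'meas : Measurable π' := Measurable.ite measurableSet_Icc hπm measurable_const
  have hπ'mem : ∀ s, π' s ∈ Set.Icc (0:ℝ) T := by
    intro s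
    rw [hπ'def]
    dsimp only
    split
    · exact hπmem s ‹_›
    · exact ⟨le_rfl, hT.le⟩
  have hπ'eq : ∀ s ∈ Set.Icc (0:ℝ) T, π' s = π s := fun s hs => if_pos hs
  set fp : ℝ → EuclideanSpace ℝ (Fin d) :=
    (Set.Icc (0:ℝ) T).restrict xn ∘ fun s => (⟨π' s, hπ'mem s⟩ : Set.Icc (0:ℝ) T) with hfpdef
  have hfp_meas : Measurable fp :=
    (ContinuousOn.restrict hxn).measurable.comp (hπ'meas.subtype_mk)
  have hfp_eq : ∀ s, fp s = xn (π' s) := fun s => rfl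
  -- integrability of hn on [0,T]
  have hxn_aesm : AEStronglyMeasurable xn (volume.restrict (Set.Icc (0:ℝ) T)) :=
    hxn.aestronglyMeasurable measurableSet_Icc
  have hn'_aesm : AEStronglyMeasurable (fun s => A (xn s) - B (K (fp s)))
      (volume.restrict (Set.Icc (0:ℝ) T)) := by
    refine AEStronglyMeasurable.sub ?_ ?_
    · exact A.continuous.comp_aestronglyMeasurable hxn_aesm
    · exact ((B.continuous.comp K.continuous).measurable.comp hfp_meas).aestronglyMeasurable
  have hn_int : IntegrableOn hn (Set.Icc (0:ℝ) T) := by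
    have h1 : IntegrableOn (fun s => A (xn s) - B (K (fp s))) (Set.Icc (0:ℝ) T) := by
      refine Integrable.mono' (integrable_const (‖A‖ * Mn + LBK * Mn)) hn'_aesm ?_
      refine (ae_restrict_iff' measurableSet_Icc).2 (Filter.Eventually.of_forall fun s hs => ?_)
      calc ‖A (xn s) - B (K (fp s))‖ ≤ ‖A (xn s)‖ + ‖B (K (fp s))‖ := norm_sub_le _ _
        _ ≤ ‖A‖ * ‖xn s‖ + LBK * ‖fp s‖ := add_le_add (A.le_opNorm _) (hBK _)
        _ ≤ ‖A‖ * Mn + LBK * Mn := by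
            refine add_le_add (mul_le_mul_of_nonneg_left (hMn s hs) (norm_nonneg _)) ?_
            refine mul_le_mul_of_nonneg_left ?_ hLBK0
            rw [hfp_eq]
            exact hMn _ (hπ'mem s)
    refine h1.congr_fun (fun s hs => ?_) measurableSet_Icc
    show A (xn s) - B (K (fp s)) = hn s
    rw [hfp_eq, hπ'eq s hs, hhn]
  have hn_ii : ∀ c e : ℝ, 0 ≤ c → c ≤ e → e ≤ T → IntervalIntegrable hn volume c e := by
    intro c e hc hce heT
    rw [intervalIntegrable_iff_integrableOn_Ioc_of_le hce]
    exact hn_int.mono_set (fun y hy => ⟨hc.trans hy.1.le, hy.2.trans heT⟩)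
  -- integrability of hxf
  have hxf_cont : ContinuousOn hxf (Set.Icc (0:ℝ) T) := by
    rw [hhxf]
    exact (A.continuous.comp_continuousOn hx).sub
      ((B.continuous.comp K.continuous).comp_continuousOn hx)
  have hxf_ii : ∀ t : ℝ, t ∈ Set.Icc (0:ℝ) T → IntervalIntegrable hxf volume 0 t := by
    intro t ht
    apply ContinuousOn.intervalIntegrable
    rw [Set.uIcc_of_le ht.1]
    exact hxf_cont.mono (Set.Icc_subset_Icc le_rfl ht.2)
  -- pointwise bound on ‖hn‖
  have hn_le : ∀ s ∈ Set.Icc (0:ℝ) T, ‖hn s‖ ≤ ‖A‖ * ‖xn s‖ + LBK * ‖xn (π s)‖ := by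
    intro s hs
    calc ‖hn s‖ ≤ ‖A (xn s)‖ + ‖B (K (xn (π s)))‖ := norm_sub_le _ _
      _ ≤ ‖A‖ * ‖xn s‖ + LBK * ‖xn (π s)‖ := add_le_add (A.le_opNorm _) (hBK _)
  -- Step 1: a-priori bound on ‖xn‖
  have hXbound : ∀ t ∈ Set.Icc (0:ℝ) T, ‖xn t‖ ≤ X := by
    refine my_gronwall T ‖x₀‖ L (max Mn 0) hT.le (norm_nonneg _) hL0 (le_max_right _ _)
      (fun t => ‖xn t‖) (fun t ht => (hMn t ht).trans (le_max_left _ _)) ?_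
    intro b hbmono hbcont hb0 hub t ht
    have ht0 : 0 ≤ t := ht.1
    have htT : t ≤ T := ht.2
    have hbii : IntervalIntegrable (fun s => L * b s) volume 0 t := by
      apply ContinuousOn.intervalIntegrable
      rw [Set.uIcc_of_le ht0]
      exact continuousOn_const.mul (hbcont.mono (Set.Icc_subset_Icc le_rfl htT))
    calc ‖xn t‖ = ‖x₀ + ∫ s in (0:ℝ)..t, hn s‖ := by rw [← hxneq t ht]
      _ ≤ ‖x₀‖ + ‖∫ s in (0:ℝ)..t, hn s‖ := norm_add_le _ _
      _ ≤ ‖x₀‖ + ∫ s in (0:ℝ)..t, ‖hn s‖ :=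
          add_le_add_right (intervalIntegral.norm_integral_le_integral_norm ht0) _
      _ ≤ ‖x₀‖ + ∫ s in (0:ℝ)..t, L * b s := by
          refine add_le_add_right ?_ _
          refine intervalIntegral.integral_mono_on ht0 ((hn_ii 0 t le_rfl ht0 htT).norm) hbii ?_
          intro s hs
          have hsT : s ∈ Set.Icc (0:ℝ) T := ⟨hs.1, hs.2.trans htT⟩
          have hπs := hπmem s hsT
          calc ‖hn s‖ ≤ ‖A‖ * ‖xn s‖ + LBK * ‖xn (π s)‖ := hn_le s hsT
            _ ≤ ‖A‖ * b s + LBK * b (π s) :=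
                add_le_add (mul_le_mul_of_nonneg_left (hub s hsT) (norm_nonneg _))
                  (mul_le_mul_of_nonneg_left (hub _ hπs) hLBK0)
            _ ≤ ‖A‖ * b s + LBK * b s :=
                add_le_add_right (mul_le_mul_of_nonneg_left
                  (hbmono hπs hsT (hπle s hsT)) hLBK0) _ |>.trans_eq rfl
            _ = L * b s := by rw [hLdef]; ring
      _ = ‖x₀‖ + L * ∫ s in (0:ℝ)..t, b s := by rw [intervalIntegral.integral_const_mul]
  -- uniform bound on ‖hn‖
  have hhn_norm : ∀ s ∈ Set.Icc (0:ℝ) T, ‖hn s‖ ≤ L * X := by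
    intro s hs
    calc ‖hn s‖ ≤ ‖A‖ * ‖xn s‖ + LBK * ‖xn (π s)‖ := hn_le s hs
      _ ≤ ‖A‖ * X + LBK * X :=
          add_le_add (mul_le_mul_of_nonneg_left (hXbound s hs) (norm_nonneg _))
            (mul_le_mul_of_nonneg_left (hXbound _ (hπmem s hs)) hLBK0)
      _ = L * X := by rw [hLdef]; ring
  -- Step 2: increment bound
  have hInc : ∀ s ∈ Set.Icc (0:ℝ) T, ‖xn s - xn (π s)‖ ≤ L * X * (s - π s) := by
    intro s hs
    have hπs := hπmem s hs
    have hps : π s ≤ s := hπle s hs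
    have heq : xn s - xn (π s) = ∫ u in (π s)..s, hn u := by
      rw [hxneq s hs, hxneq (π s) hπs,
        ← intervalIntegral.integral_interval_sub_left (hn_ii 0 s le_rfl hs.1 hs.2)
          (hn_ii 0 (π s) le_rfl hπs.1 hπs.2)]
      abel
    rw [heq]
    calc ‖∫ u in (π s)..s, hn u‖ ≤ ∫ u in (π s)..s, ‖hn u‖ :=
          intervalIntegral.norm_integral_le_integral_norm hps
      _ ≤ ∫ u in (π s)..s, L * X := by
          refine intervalIntegral.integral_mono_on hps
            ((hn_ii (π s) s hπs.1 hps hs.2).norm) intervalIntegrable_const ?_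
          intro u hu
          exact hhn_norm u ⟨hπs.1.trans hu.1, hu.2.trans hs.2⟩
      _ = L * X * (s - π s) := by rw [intervalIntegral.integral_const, smul_eq_mul]; ring
  -- the sampling-gap function
  have hg_meas : Measurable (fun s => s - π s) := measurable_id.sub hπm
  have hg0 : ∀ s ∈ Set.Ioc (0:ℝ) T, 0 ≤ s - π s :=
    fun s hs => sub_nonneg.2 (hπle s ⟨hs.1.le, hs.2⟩)
  have hgIcc0 : ∀ s ∈ Set.Icc (0:ℝ) T, 0 ≤ s - π s := fun s hs => sub_nonneg.2 (hπle s hs)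
  have hg_le : ∀ s ∈ Set.Icc (0:ℝ) T, s - π s ≤ T := by
    intro s hs
    have := (hπmem s hs).1
    linarith [hs.2]
  have hg_int : IntegrableOn (fun s => s - π s) (Set.Icc (0:ℝ) T) := by
    refine Integrable.mono' (integrable_const T) hg_meas.aestronglyMeasurable.restrict ?_
    refine (ae_restrict_iff' measurableSet_Icc).2 (Filter.Eventually.of_forall fun s hs => ?_)
    rw [Real.norm_eq_abs, abs_of_nonneg (hgIcc0 s hs)]
    exact hg_le s hs
  have hg_ii : IntervalIntegrable (fun s => s - π s) volume 0 T := by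
    rw [intervalIntegrable_iff_integrableOn_Ioc_of_le hT.le]
    exact hg_int.mono_set Set.Ioc_subset_Icc_self
  have hI0 : 0 ≤ ∫ s in (0:ℝ)..T, (s - π s) :=
    intervalIntegral.integral_nonneg hT.le hgIcc0
  -- Step 3: Gronwall for the error
  have hEbound : ∀ t ∈ Set.Icc (0:ℝ) T,
      ‖xn t - x t‖ ≤ (LBK * (L * X) * ∫ s in (0:ℝ)..T, (s - π s)) * Real.exp (L * T) := by
    refine my_gronwall T (LBK * (L * X) * ∫ s in (0:ℝ)..T, (s - π s)) L (max Me 0) hT.le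
      (by positivity) hL0 (le_max_right _ _)
      (fun t => ‖xn t - x t‖) (fun t ht => (hMe t ht).trans (le_max_left _ _)) ?_
    intro b hbmono hbcont hb0 hub t ht
    have ht0 : 0 ≤ t := ht.1
    have htT : t ≤ T := ht.2
    have hnii := hn_ii 0 t le_rfl ht0 htT
    have hxfii := hxf_ii t ht
    have he_eq : xn t - x t = ∫ s in (0:ℝ)..t, (hn s - hxf s) := by
      rw [hxneq t ht, hxeq t ht, intervalIntegral.integral_sub hnii hxfii]
      abel
    have hptwise : ∀ s ∈ Set.Icc (0:ℝ) t,
        ‖hn s - hxf s‖ ≤ L * b s + LBK * (L * X) * (s - π s) := by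
      intro s hs
      have hsT : s ∈ Set.Icc (0:ℝ) T := ⟨hs.1, hs.2.trans htT⟩
      have hπs := hπmem s hsT
      have hkey : hn s - hxf s = A (xn s - x s) - B (K ((xn (π s) - xn s) + (xn s - x s))) := by
        rw [hhn, hhxf]
        dsimp only
        simp only [map_sub, map_add]
        abel
      rw [hkey]
      calc ‖A (xn s - x s) - B (K ((xn (π s) - xn s) + (xn s - x s)))‖
          ≤ ‖A (xn s - x s)‖ + ‖B (K ((xn (π s) - xn s) + (xn s - x s)))‖ := norm_sub_le _ _
        _ ≤ ‖A‖ * ‖xn s - x s‖ + LBK * (‖xn (π s) - xn s‖ + ‖xn s - x s‖) := by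
            refine add_le_add (A.le_opNorm _) ((hBK _).trans ?_)
            exact mul_le_mul_of_nonneg_left (norm_add_le _ _) hLBK0
        _ ≤ ‖A‖ * b s + LBK * (L * X * (s - π s) + b s) := by
            refine add_le_add (mul_le_mul_of_nonneg_left (hub s hsT) (norm_nonneg _)) ?_
            refine mul_le_mul_of_nonneg_left (add_le_add ?_ (hub s hsT)) hLBK0
            rw [norm_sub_rev]
            exact hInc s hsT
        _ = L * b s + LBK * (L * X) * (s - π s) := by rw [hLdef]; ring
    have hrhs_ii : IntervalIntegrable (fun s => L * b s + LBK * (L * X) * (s - π s)) volume 0 t := by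
      refine IntervalIntegrable.add ?_ ?_
      · apply ContinuousOn.intervalIntegrable
        rw [Set.uIcc_of_le ht0]
        exact continuousOn_const.mul (hbcont.mono (Set.Icc_subset_Icc le_rfl htT))
      · rw [intervalIntegrable_iff_integrableOn_Ioc_of_le ht0]
        exact ((hg_int.mono_set (fun y hy => ⟨hy.1.le, hy.2.trans htT⟩)).const_mul _)
    have hbii : IntervalIntegrable (fun s => b s) volume 0 t := by
      apply ContinuousOn.intervalIntegrable
      rw [Set.uIcc_of_le ht0]
      exact hbcont.mono (Set.Icc_subset_Icc le_rfl htT)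
    have hgii_t : IntervalIntegrable (fun s => s - π s) volume 0 t := by
      rw [intervalIntegrable_iff_integrableOn_Ioc_of_le ht0]
      exact hg_int.mono_set (fun y hy => ⟨hy.1.le, hy.2.trans htT⟩)
    calc ‖xn t - x t‖ = ‖∫ s in (0:ℝ)..t, (hn s - hxf s)‖ := by rw [he_eq]
      _ ≤ ∫ s in (0:ℝ)..t, ‖hn s - hxf s‖ :=
          intervalIntegral.norm_integral_le_integral_norm ht0
      _ ≤ ∫ s in (0:ℝ)..t, (L * b s + LBK * (L * X) * (s - π s)) :=
          intervalIntegral.integral_mono_on ht0 ((hnii.sub hxfii).norm) hrhs_ii hptwise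
      _ = L * (∫ s in (0:ℝ)..t, b s) + LBK * (L * X) * ∫ s in (0:ℝ)..t, (s - π s) := by
          rw [intervalIntegral.integral_add
            (by apply ContinuousOn.intervalIntegrable
                rw [Set.uIcc_of_le ht0]
                exact continuousOn_const.mul (hbcont.mono (Set.Icc_subset_Icc le_rfl htT)))
            (hgii_t.const_mul _), intervalIntegral.integral_const_mul,
            intervalIntegral.integral_const_mul]
      _ ≤ (LBK * (L * X) * ∫ s in (0:ℝ)..T, (s - π s)) + L * ∫ s in (0:ℝ)..t, b s := by
          have h1 : (∫ s in (0:ℝ)..t, (s - π s)) ≤ ∫ s in (0:ℝ)..T, (s - π s) := by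
            refine intervalIntegral.integral_mono_interval le_rfl ht0 htT ?_ hg_ii
            refine (ae_restrict_iff' measurableSet_Ioc).2
              (Filter.Eventually.of_forall fun s hs => hg0 s hs)
          have h2 : LBK * (L * X) * (∫ s in (0:ℝ)..t, (s - π s))
              ≤ LBK * (L * X) * ∫ s in (0:ℝ)..T, (s - π s) :=
            mul_le_mul_of_nonneg_left h1 (by positivity)
          linarith
  -- Step 4: conclusion
  have hJint : IntegrableOn (fun s => (s - π s) ^ p) (Set.Ioc (0:ℝ) T) := by
    refine Integrable.mono' (integrable_const (T ^ p))
      (((Real.continuous_rpow_const hp0).measurable.comp hg_meas).aestronglyMeasurable.restrict) ?_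
    refine (ae_restrict_iff' measurableSet_Ioc).2 (Filter.Eventually.of_forall fun s hs => ?_)
    rw [Real.norm_eq_abs, abs_of_nonneg (Real.rpow_nonneg (hg0 s hs) p)]
    exact Real.rpow_le_rpow (hg0 s hs) (hg_le s ⟨hs.1.le, hs.2⟩) hp0
  have hjen := my_jensen T p hT hp (fun s => s - π s) hg0
    (hg_int.mono_set Set.Ioc_subset_Icc_self) hJint
  have hJ0 : 0 ≤ ∫ s in (0:ℝ)..T, (s - π s) ^ p :=
    intervalIntegral.integral_nonneg hT.le (fun s hs => Real.rpow_nonneg (hgIcc0 s hs) p)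
  haveI : Nonempty (Set.Icc (0:ℝ) T) := ⟨⟨0, le_rfl, hT.le⟩⟩
  refine ciSup_le fun t => ?_
  obtain ⟨tv, htv⟩ := t
  have h1 : ‖xn tv - x tv‖ ≤ K₁ * ∫ s in (0:ℝ)..T, (s - π s) := by
    refine (hEbound tv htv).trans_eq ?_
    rw [hK₁def]; ring
  calc ‖xn tv - x tv‖ ^ p ≤ (K₁ * ∫ s in (0:ℝ)..T, (s - π s)) ^ p :=
        Real.rpow_le_rpow (norm_nonneg _) h1 hp0
    _ = K₁ ^ p * (∫ s in (0:ℝ)..T, (s - π s)) ^ p := Real.mul_rpow hK₁0 hI0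
    _ ≤ K₁ ^ p * (T ^ (p-1) * ∫ s in (0:ℝ)..T, (s - π s) ^ p) :=
        mul_le_mul_of_nonneg_left hjen (Real.rpow_nonneg hK₁0 p)
    _ = (K₁ ^ p * T ^ (p-1)) * ∫ s in (0:ℝ)..T, (s - π s) ^ p := by ring
    _ ≤ (K₁ ^ p * T ^ (p-1) + 1) * ∫ s in (0:ℝ)..T, (s - π s) ^ p := by nlinarith
end

section
/- Let A ∈ ℝ^{d×d}, B ∈ ℝ^{d×m}, K ∈ ℝ^{m×d}, x₀ ∈ ℝ^d, T > 0 and ε > 0. Let π : [0,T] → [0,T] be measurable with π(s) ≤ s for all s, and let w : [0,T] → ℝ^d be continuous with w(0) = 0. Suppose X : [0,T] → ℝ^d is continuous and satisfies X(t) = x₀ + ∫₀ᵗ (A X(s) − BK X(π(s))) ds + ε w(t), and xⁿ : [0,T] → ℝ^d is continuous and satisfies xⁿ(t) = x₀ + ∫₀ᵗ (A xⁿ(s) − BK xⁿ(π(s))) ds. Then sup_{0 ≤ t ≤ T} ‖X(t) − xⁿ(t)‖ ≤ ε · exp((‖A‖ + ‖B‖·‖K‖) T) · sup_{0 ≤ t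 ≤ T} ‖w(t)‖. -/
open MeasureTheory

/-- A globally bounded a.e.-strongly measurable function is interval integrable. -/
lemma bddMeas_intervalIntegrable {E : Type*} [NormedAddCommGroup E] {g : ℝ → E}
    (hg : AEStronglyMeasurable g volume) {C : ℝ} (hC : ∀ r, ‖g r‖ ≤ C) (a b : ℝ) :
    IntervalIntegrable g volume a b := by
  rw [intervalIntegrable_iff]
  exact (integrableOn_const measure_Ioc_lt_top.ne).mono'
    hg.restrict (Filter.Eventually.of_forall hC)

/-- Pathwise Gronwall comparison between the noise-perturbed
sample-and-hold trajectory `X` and the unperturbed one `xⁿ` (same sampling map `π`):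
`sup_{0≤t≤T} ‖X(t) − xⁿ(t)‖ ≤ ε · exp((‖A‖+‖B‖·‖K‖)T) · sup_{0≤t≤T} ‖w(t)‖`. -/
theorem stmt_11 (d m : ℕ) (hd : 0 < d) (hm : 0 < m)
    (A : EuclideanSpace ℝ (Fin d) →L[ℝ] EuclideanSpace ℝ (Fin d))
    (B : EuclideanSpace ℝ (Fin m) →L[ℝ] EuclideanSpace ℝ (Fin d))
    (K : EuclideanSpace ℝ (Fin d) →L[ℝ] EuclideanSpace ℝ (Fin m))
    (x₀ : EuclideanSpace ℝ (Fin d)) (T : ℝ) (hT : 0 < T) (ε : ℝ) (hε : 0 < ε)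
    (π : ℝ → ℝ) (hπ_meas : Measurable π)
    (hπ_mem : ∀ s ∈ Set.Icc (0 : ℝ) T, π s ∈ Set.Icc (0 : ℝ) T)
    (hπ_le : ∀ s ∈ Set.Icc (0 : ℝ) T, π s ≤ s)
    (w : ℝ → EuclideanSpace ℝ (Fin d))
    (hw_cont : ContinuousOn w (Set.Icc (0 : ℝ) T)) (hw0 : w 0 = 0)
    (X xn : ℝ → EuclideanSpace ℝ (Fin d))
    (hX_cont : ContinuousOn X (Set.Icc (0 : ℝ) T))
    (hxn_cont : ContinuousOn xn (Set.Icc (0 : ℝ) T))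
    (hX : ∀ t ∈ Set.Icc (0 : ℝ) T,
      X t = x₀ + (∫ s in (0 : ℝ)..t, (A (X s) - B (K (X (π s))))) + ε • w t)
    (hxn : ∀ t ∈ Set.Icc (0 : ℝ) T,
      xn t = x₀ + ∫ s in (0 : ℝ)..t, (A (xn s) - B (K (xn (π s))))) :
    (⨆ t : Set.Icc (0 : ℝ) T, ‖X t - xn t‖)
      ≤ ε * Real.exp ((‖A‖ + ‖B‖ * ‖K‖) * T) * ⨆ t : Set.Icc (0 : ℝ) T, ‖w t‖ := by
  haveI : Nonempty (Set.Icc (0 : ℝ) T) := (Set.nonempty_Icc.2 hT.le).to_subtype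
  set L : ℝ := ‖A‖ + ‖B‖ * ‖K‖ with hLdef
  have hL0 : 0 ≤ L := add_nonneg (norm_nonneg _) (mul_nonneg (norm_nonneg _) (norm_nonneg _))
  -- clamp onto [0, T]
  set c : ℝ → ℝ := fun r => max 0 (min r T) with hcdef
  have hc_cont : Continuous c := continuous_const.max (continuous_id.min continuous_const)
  have hc_mem : ∀ r, c r ∈ Set.Icc (0 : ℝ) T :=
    fun r => ⟨le_max_left _ _, max_le hT.le (min_le_right _ _)⟩
  have hc_id : ∀ r ∈ Set.Icc (0 : ℝ) T, c r = r := by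
    intro r hr
    simp only [hcdef, min_eq_left hr.2, max_eq_right hr.1]
  have hcc : ∀ r, c (c r) = c r := fun r => hc_id _ (hc_mem r)
  set Xc : ℝ → EuclideanSpace ℝ (Fin d) := fun r => X (c r) with hXcdef
  set xnc : ℝ → EuclideanSpace ℝ (Fin d) := fun r => xn (c r) with hxncdef
  have hXc_cont : Continuous Xc := hX_cont.comp_continuous hc_cont hc_mem
  have hxnc_cont : Continuous xnc := hxn_cont.comp_continuous hc_cont hc_mem
  set δf : ℝ → EuclideanSpace ℝ (Fin d) := fun r => Xc r - xnc r with hδfdef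
  have hδf_cont : Continuous δf := hXc_cont.sub hxnc_cont
  have hδf_eq : ∀ r ∈ Set.Icc (0 : ℝ) T, δf r = X r - xn r := by
    intro r hr; simp only [hδfdef, hXcdef, hxncdef, hc_id r hr]
  -- general boundedness of clamped functions
  have key_bdd : ∀ (Z : ℝ → EuclideanSpace ℝ (Fin d)), Continuous Z →
      (∀ r, Z (c r) = Z r) → ∃ C0 : ℝ, 0 ≤ C0 ∧ ∀ r, ‖Z r‖ ≤ C0 := by
    intro Z hZ hZc
    obtain ⟨z0, hz0, hmax⟩ := isCompact_Icc.exists_isMaxOn (Set.nonempty_Icc.2 hT.le)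
      (hZ.norm.continuousOn (s := Set.Icc (0:ℝ) T))
    exact ⟨‖Z z0‖, norm_nonneg _, fun r => by rw [← hZc r]; exact hmax (hc_mem r)⟩
  have hδfc : ∀ r, δf (c r) = δf r := by
    intro r; simp only [hδfdef, hXcdef, hxncdef, hcc r]
  obtain ⟨C, hC0, hC⟩ := key_bdd δf hδf_cont hδfc
  -- interval integrability of vector integrands
  have hG_int : ∀ (Z : ℝ → EuclideanSpace ℝ (Fin d)), Continuous Z → (∀ r, Z (c r) = Z r) →
      ∀ a b : ℝ, IntervalIntegrable (fun s => A (Z s) - B (K (Z (π s)))) volume a b := by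
    intro Z hZ hZc a b
    obtain ⟨C0, hC00, hC0b⟩ := key_bdd Z hZ hZc
    refine bddMeas_intervalIntegrable ?_ (C := ‖A‖ * C0 + ‖B‖ * (‖K‖ * C0)) ?_ a b
    · exact ((A.continuous.comp hZ).aestronglyMeasurable.sub
        (((B.continuous.comp (K.continuous.comp hZ)).stronglyMeasurable.comp_measurable
          hπ_meas).aestronglyMeasurable))
    · intro r
      calc ‖A (Z r) - B (K (Z (π r)))‖ ≤ ‖A (Z r)‖ + ‖B (K (Z (π r)))‖ := norm_sub_le _ _
        _ ≤ ‖A‖ * C0 + ‖B‖ * (‖K‖ * C0) := by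
            have hA : ‖A (Z r)‖ ≤ ‖A‖ * C0 :=
              (A.le_opNorm _).trans (mul_le_mul_of_nonneg_left (hC0b r) (norm_nonneg _))
            have hK : ‖K (Z (π r))‖ ≤ ‖K‖ * C0 :=
              (K.le_opNorm _).trans (mul_le_mul_of_nonneg_left (hC0b (π r)) (norm_nonneg _))
            have hB : ‖B (K (Z (π r)))‖ ≤ ‖B‖ * (‖K‖ * C0) :=
              (B.le_opNorm _).trans (mul_le_mul_of_nonneg_left hK (norm_nonneg _))
            linarith
  have hXcc : ∀ r, Xc (c r) = Xc r := by intro r; simp only [hXcdef, hcc r]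
  have hxncc : ∀ r, xnc (c r) = xnc r := by intro r; simp only [hxncdef, hcc r]
  -- the Gronwall integrand φ and its primitive ψ
  set φ : ℝ → ℝ := fun s => ‖A‖ * ‖δf s‖ + ‖B‖ * ‖K‖ * ‖δf (π s)‖ with hφdef
  have hφ_nonneg : ∀ s, 0 ≤ φ s := fun s =>
    add_nonneg (mul_nonneg (norm_nonneg _) (norm_nonneg _))
      (mul_nonneg (mul_nonneg (norm_nonneg _) (norm_nonneg _)) (norm_nonneg _))
  have hφ_meas : AEStronglyMeasurable φ volume := by
    have h1 : Measurable fun s => ‖δf s‖ := hδf_cont.norm.measurable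
    have h2 : Measurable fun s => ‖δf (π s)‖ := hδf_cont.norm.measurable.comp hπ_meas
    exact ((h1.const_mul _).add (h2.const_mul _)).aestronglyMeasurable
  have hφ_bdd : ∀ s, ‖φ s‖ ≤ L * C := by
    intro s
    rw [Real.norm_of_nonneg (hφ_nonneg s)]
    have h1 := hC s
    have h2 := hC (π s)
    simp only [hφdef, hLdef]
    have e1 := mul_le_mul_of_nonneg_left h1 (norm_nonneg A)
    have e2 := mul_le_mul_of_nonneg_left h2 (mul_nonneg (norm_nonneg B) (norm_nonneg K))
    linarith
  have hφ_int : ∀ a b : ℝ, IntervalIntegrable φ volume a b :=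
    fun a b => bddMeas_intervalIntegrable hφ_meas hφ_bdd a b
  set ψ : ℝ → ℝ := fun t => ∫ s in (0:ℝ)..t, φ s with hψdef
  have hψ_cont : Continuous ψ := intervalIntegral.continuous_primitive hφ_int 0
  have hψ_mono : ∀ a b : ℝ, a ≤ b → ψ a ≤ ψ b := by
    intro a b hab
    have hadd := intervalIntegral.integral_add_adjacent_intervals (hφ_int 0 a) (hφ_int a b)
    have hpos : 0 ≤ ∫ s in a..b, φ s :=
      intervalIntegral.integral_nonneg hab (fun u _ => hφ_nonneg u)
    simp only [hψdef]
    linarith [hadd, hpos]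
  have hψ_nonneg : ∀ t, 0 ≤ t → 0 ≤ ψ t := by
    intro t ht
    exact intervalIntegral.integral_nonneg ht (fun u _ => hφ_nonneg u)
  -- W
  set W : ℝ := ⨆ t : Set.Icc (0 : ℝ) T, ‖w t‖ with hWdef
  have hW_bdd : BddAbove (Set.range fun t : Set.Icc (0 : ℝ) T => ‖w (t : ℝ)‖) := by
    obtain ⟨z0, hz0, hmax⟩ := isCompact_Icc.exists_isMaxOn (Set.nonempty_Icc.2 hT.le)
      hw_cont.norm
    exact ⟨‖w z0‖, by rintro _ ⟨t, rfl⟩; exact hmax t.2⟩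
  have hW_le : ∀ t ∈ Set.Icc (0 : ℝ) T, ‖w t‖ ≤ W :=
    fun t ht => le_ciSup hW_bdd (⟨t, ht⟩ : Set.Icc (0 : ℝ) T)
  have hW0 : 0 ≤ W := Real.iSup_nonneg fun t => norm_nonneg _
  -- integral equation for δf
  have hδ_eq : ∀ t ∈ Set.Icc (0 : ℝ) T,
      δf t = (∫ s in (0:ℝ)..t, (A (δf s) - B (K (δf (π s))))) + ε • w t := by
    intro t ht
    have hsub : Set.uIcc (0:ℝ) t ⊆ Set.Icc (0:ℝ) T := by
      rw [Set.uIcc_of_le ht.1]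
      exact Set.Icc_subset_Icc le_rfl ht.2
    have hX' : (∫ s in (0:ℝ)..t, (A (X s) - B (K (X (π s)))))
        = ∫ s in (0:ℝ)..t, (A (Xc s) - B (K (Xc (π s)))) := by
      apply intervalIntegral.integral_congr
      intro s hs
      have hsT := hsub hs
      have h1 : Xc s = X s := by simp only [hXcdef, hc_id s hsT]
      have h2 : Xc (π s) = X (π s) := by
        simp only [hXcdef, hc_id (π s) (hπ_mem s hsT)]
      simp only [h1, h2]
    have hxn' : (∫ s in (0:ℝ)..t, (A (xn s) - B (K (xn (π s)))))
        = ∫ s in (0:ℝ)..t, (A (xnc s) - B (K (xnc (π s)))) := by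
      apply intervalIntegral.integral_congr
      intro s hs
      have hsT := hsub hs
      have h1 : xnc s = xn s := by simp only [hxncdef, hc_id s hsT]
      have h2 : xnc (π s) = xn (π s) := by
        simp only [hxncdef, hc_id (π s) (hπ_mem s hsT)]
      simp only [h1, h2]
    have hXt := hX t ht
    have hxnt := hxn t ht
    rw [hX'] at hXt
    rw [hxn'] at hxnt
    have hintX := hG_int Xc hXc_cont hXcc 0 t
    have hintxn := hG_int xnc hxnc_cont hxncc 0 t
    have hsubint : (∫ s in (0:ℝ)..t, (A (Xc s) - B (K (Xc (π s)))))
        - (∫ s in (0:ℝ)..t, (A (xnc s) - B (K (xnc (π s)))))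
        = ∫ s in (0:ℝ)..t, (A (δf s) - B (K (δf (π s)))) := by
      rw [← intervalIntegral.integral_sub hintX hintxn]
      apply intervalIntegral.integral_congr
      intro s _
      simp only [hδfdef, map_sub]
      abel
    rw [hδf_eq t ht, hXt, hxnt]
    rw [← hsubint]
    abel
  -- Step A : pointwise bound
  have hψ_le : ∀ t ∈ Set.Icc (0 : ℝ) T, ‖δf t‖ ≤ ε * W + ψ t := by
    intro t ht
    rw [hδ_eq t ht]
    calc ‖(∫ s in (0:ℝ)..t, (A (δf s) - B (K (δf (π s))))) + ε • w t‖
        ≤ ‖∫ s in (0:ℝ)..t, (A (δf s) - B (K (δf (π s))))‖ + ‖ε • w t‖ := norm_add_le _ _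
      _ ≤ ψ t + ε * W := by
          apply add_le_add
          · calc ‖∫ s in (0:ℝ)..t, (A (δf s) - B (K (δf (π s))))‖
                ≤ ∫ s in (0:ℝ)..t, ‖A (δf s) - B (K (δf (π s)))‖ :=
                  intervalIntegral.norm_integral_le_integral_norm ht.1
              _ ≤ ∫ s in (0:ℝ)..t, φ s := by
                  apply intervalIntegral.integral_mono_on ht.1
                    (hG_int δf hδf_cont hδfc 0 t).norm (hφ_int 0 t)
                  intro s _
                  calc ‖A (δf s) - B (K (δf (π s)))‖
                      ≤ ‖A (δf s)‖ + ‖B (K (δf (π s)))‖ := norm_sub_le _ _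
                    _ ≤ φ s := by
                        simp only [hφdef]
                        gcongr
                        · exact A.le_opNorm _
                        · calc ‖B (K (δf (π s)))‖ ≤ ‖B‖ * ‖K (δf (π s))‖ := B.le_opNorm _
                            _ ≤ ‖B‖ * (‖K‖ * ‖δf (π s)‖) := by gcongr; exact K.le_opNorm _
                            _ = ‖B‖ * ‖K‖ * ‖δf (π s)‖ := by ring
          · rw [norm_smul, Real.norm_of_nonneg hε.le]
            exact mul_le_mul_of_nonneg_left (hW_le t ht) hε.le
      _ = ε * W + ψ t := by rw [add_comm]
  -- Step B : φ is controlled by ψ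
  have hφψ : ∀ t ∈ Set.Icc (0 : ℝ) T, φ t ≤ L * (ε * W + ψ t) := by
    intro t ht
    have h1 : ‖δf t‖ ≤ ε * W + ψ t := hψ_le t ht
    have h2 : ‖δf (π t)‖ ≤ ε * W + ψ (π t) := hψ_le (π t) (hπ_mem t ht)
    have h3 : ψ (π t) ≤ ψ t := hψ_mono _ _ (hπ_le t ht)
    have h4 : 0 ≤ ε * W + ψ t :=
      add_nonneg (mul_nonneg hε.le hW0) (hψ_nonneg t ht.1)
    have h2' : ‖δf (π t)‖ ≤ ε * W + ψ t := h2.trans (by linarith)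
    simp only [hφdef, hLdef]
    have e1 := mul_le_mul_of_nonneg_left h1 (norm_nonneg A)
    have e2 := mul_le_mul_of_nonneg_left h2' (mul_nonneg (norm_nonneg B) (norm_nonneg K))
    linarith
  -- g and the Gronwall step
  set g : ℝ → ℝ := fun t => ∫ s in (0:ℝ)..t, (ε * W + ψ s) with hgdef
  have hig : Continuous fun s => ε * W + ψ s := continuous_const.add hψ_cont
  have hg_deriv : ∀ x : ℝ, HasDerivAt g (ε * W + ψ x) x := by
    intro x
    exact (hig.integral_hasStrictDerivAt 0 x).hasDerivAt
  have hg_nonneg : ∀ t, 0 ≤ t → 0 ≤ g t := by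
    intro t ht
    exact intervalIntegral.integral_nonneg ht
      (fun u hu => add_nonneg (mul_nonneg hε.le hW0) (hψ_nonneg u hu.1))
  have hψ_le_g : ∀ t ∈ Set.Icc (0 : ℝ) T, ψ t ≤ L * g t := by
    intro t ht
    calc ψ t ≤ ∫ s in (0:ℝ)..t, L * (ε * W + ψ s) := by
          apply intervalIntegral.integral_mono_on ht.1 (hφ_int 0 t)
            ((continuous_const.mul hig).intervalIntegrable 0 t)
          intro s hs
          exact hφψ s ⟨hs.1, hs.2.trans ht.2⟩
      _ = L * g t := by rw [hgdef, ← intervalIntegral.integral_const_mul]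
  have hgron : ∀ t ∈ Set.Icc (0 : ℝ) T, ‖g t‖ ≤ gronwallBound 0 L (ε * W) (t - 0) := by
    apply norm_le_gronwallBound_of_norm_deriv_right_le (f := g) (f' := fun x => ε * W + ψ x)
    · exact (intervalIntegral.continuous_primitive (fun a b => hig.intervalIntegrable a b)
        0).continuousOn
    · intro x _
      exact (hg_deriv x).hasDerivWithinAt
    · simp [hgdef]
    · intro x hx
      have hx0 : 0 ≤ x := hx.1
      have hxT : x ∈ Set.Icc (0:ℝ) T := ⟨hx.1, hx.2.le⟩
      rw [Real.norm_of_nonneg (add_nonneg (mul_nonneg hε.le hW0) (hψ_nonneg x hx0)),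
          Real.norm_of_nonneg (hg_nonneg x hx0)]
      have := hψ_le_g x hxT
      linarith
  -- conclude pointwise
  have hfinal : ∀ t ∈ Set.Icc (0 : ℝ) T, ‖X t - xn t‖ ≤ ε * Real.exp (L * T) * W := by
    intro t ht
    have hg_le : g t ≤ gronwallBound 0 L (ε * W) t := by
      have h := hgron t ht
      rw [sub_zero] at h
      exact (le_abs_self _).trans h
    have h1 : ‖X t - xn t‖ = ‖δf t‖ := by rw [hδf_eq t ht]
    have h2 : ‖δf t‖ ≤ ε * W + ψ t := hψ_le t ht
    have h3 : ψ t ≤ L * g t := hψ_le_g t ht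
    have h4 : L * g t ≤ L * gronwallBound 0 L (ε * W) t := mul_le_mul_of_nonneg_left hg_le hL0
    have h5 : ε * W + L * gronwallBound 0 L (ε * W) t ≤ ε * Real.exp (L * T) * W := by
      have hexp : Real.exp (L * t) ≤ Real.exp (L * T) :=
        Real.exp_le_exp.2 (mul_le_mul_of_nonneg_left ht.2 hL0)
      have hεW : 0 ≤ ε * W := mul_nonneg hε.le hW0
      by_cases hL : L = 0
      · rw [hL]
        simp only [gronwallBound, if_pos rfl, zero_mul, zero_add, add_zero,
          Real.exp_zero, mul_one]
        linarith
      · rw [gronwallBound_of_K_ne_0 hL]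
        have hexp1 : (1:ℝ) ≤ Real.exp (L * t) := by
          have : (0:ℝ) ≤ L * t := mul_nonneg hL0 ht.1
          calc (1:ℝ) = Real.exp 0 := Real.exp_zero.symm
            _ ≤ Real.exp (L * t) := Real.exp_le_exp.2 this
        have key : ε * W + L * (0 * Real.exp (L * t) + ε * W / L * (Real.exp (L * t) - 1))
            = ε * W * Real.exp (L * t) := by
          field_simp
          ring
        rw [key]
        calc ε * W * Real.exp (L * t) ≤ ε * W * Real.exp (L * T) := by
              exact mul_le_mul_of_nonneg_left hexp hεW
          _ = ε * Real.exp (L * T) * W := by ring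
    rw [h1]
    linarith
  exact ciSup_le fun t => hfinal t t.2
end

section
/- Let (ξ_i)_{i≥1} be i.i.d. positive random variables with E[e^{θξ₁}] < ∞ for all θ > 0 and Var(ξ₁) > 0, and let τ_k = ∑_{i=1}^k ξ_i (τ_0 = 0). Then for every T > 0 there exists a constant C depending only on T and the distribution of ξ₁ such that for all n ∈ ℕ: E[ ( (E[ξ₁]/n) · ∑_{k=0}^{⌈nT/E[ξ₁]⌉ − 1} | τ_k − k E[ξ₁] | / (Var(ξ₁) √n) )⁶ ] ≤ C. -/
open MeasureTheory ProbabilityTheory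

lemma aux_sq_le_exp {s : ℝ} (hs : 0 ≤ s) : s ^ 2 ≤ 4 * Real.exp s := by
  have h1 : s / 2 + 1 ≤ Real.exp (s / 2) := Real.add_one_le_exp _
  have h2 : (s / 2) ^ 2 ≤ Real.exp (s / 2) ^ 2 :=
    pow_le_pow_left₀ (by positivity) (by linarith) 2
  have h3 : Real.exp (s / 2) ^ 2 = Real.exp s := by
    rw [← Real.exp_nat_mul]; congr 1; push_cast; ring
  nlinarith

lemma aux_pow6_le_exp (x : ℝ) : x ^ 6 ≤ 46656 * (Real.exp x + Real.exp (-x)) := by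
  have h1 : |x| / 6 + 1 ≤ Real.exp (|x| / 6) := Real.add_one_le_exp _
  have h2 : (|x| / 6) ^ 6 ≤ Real.exp (|x| / 6) ^ 6 :=
    pow_le_pow_left₀ (by positivity) (by linarith) 6
  have h3 : Real.exp (|x| / 6) ^ 6 = Real.exp |x| := by
    rw [← Real.exp_nat_mul]; congr 1; push_cast; ring
  have h4 : Real.exp |x| ≤ Real.exp x + Real.exp (-x) := by
    rcases abs_cases x with ⟨h, _⟩ | ⟨h, _⟩ <;> rw [h]
    · linarith [(Real.exp_pos (-x)).le]
    · linarith [(Real.exp_pos x).le]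
  calc x ^ 6 = |x| ^ 6 := by
        rw [← abs_pow]; exact (abs_of_nonneg (by positivity)).symm
    _ = 46656 * (|x| / 6) ^ 6 := by ring
    _ ≤ 46656 * Real.exp (|x| / 6) ^ 6 := by linarith
    _ = 46656 * Real.exp |x| := by rw [h3]
    _ ≤ 46656 * (Real.exp x + Real.exp (-x)) := by linarith

lemma aux_exp_le (t : ℝ) : Real.exp t ≤ 1 + t + t ^ 2 * Real.exp |t| := by
  rcases le_or_gt 0 t with ht | ht
  · rw [abs_of_nonneg ht]
    rcases le_or_gt 1 t with h1 | h1
    · have ht2 : (0:ℝ) ≤ t ^ 2 - 1 := by nlinarith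
      have hp := mul_nonneg ht2 (Real.exp_pos t).le
      have h2 : Real.exp t ≤ t ^ 2 * Real.exp t := by nlinarith [hp]
      linarith
    · have h2 : 1 - t ≤ Real.exp (-t) := by linarith [Real.add_one_le_exp (-t)]
      have h3 : Real.exp t * (1 - t) ≤ 1 := by
        have h := mul_le_mul_of_nonneg_left h2 (Real.exp_pos t).le
        rwa [← Real.exp_add, add_neg_cancel, Real.exp_zero] at h
      nlinarith [(Real.exp_pos t).le]
  · rw [abs_of_neg ht]
    have h2' : 1 - t ≤ Real.exp (-t) := by linarith [Real.add_one_le_exp (-t)]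
    have h3 : Real.exp t * (1 - t) ≤ 1 := by
      have h := mul_le_mul_of_nonneg_left h2' (Real.exp_pos t).le
      rwa [← Real.exp_add, add_neg_cancel, Real.exp_zero] at h
    have h4 : Real.exp t ≤ 1 + t + t ^ 2 := by nlinarith [(Real.exp_pos t).le]
    have h5 : t ^ 2 ≤ t ^ 2 * Real.exp (-t) := by
      nlinarith [Real.add_one_le_exp (-t), sq_nonneg t]
    linarith

/-- Uniform sixth-moment bound for the Riemann sums of the rescaled
centered arrival-time random walk: for every `T > 0` there is `C` (depending only on
`T` and the distribution of `ξ₁`) such that for all `n`,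
`E[((E[ξ₁]/n) ∑_{k=0}^{⌈nT/E[ξ₁]⌉−1} |τ_k − kE[ξ₁]|/(Var(ξ₁)√n))⁶] ≤ C`. -/
theorem stmt_13 {Ω : Type*} [MeasurableSpace Ω] (μ : Measure Ω) [IsProbabilityMeasure μ]
    (ξ : ℕ → Ω → ℝ) (hmeas : ∀ i, Measurable (ξ i))
    (hpos : ∀ i ω, 0 < ξ i ω)
    (hindep : iIndepFun ξ μ)
    (hident : ∀ i, IdentDistrib (ξ i) (ξ 0) μ μ)
    (hmgf : ∀ θ : ℝ, 0 < θ → Integrable (fun ω => Real.exp (θ * ξ 0 ω)) μ)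
    (hvar : 0 < variance (ξ 0) μ)
    (τ : ℕ → Ω → ℝ) (hτ : ∀ k ω, τ k ω = ∑ i ∈ Finset.range k, ξ i ω)
    (Eξ : ℝ) (hEξ : Eξ = ∫ ω, ξ 0 ω ∂μ)
    (T : ℝ) (hT : 0 < T) :
    ∃ C : ℝ, 0 < C ∧ ∀ n : ℕ, 0 < n →
      (∫ ω, ((Eξ / n) * ∑ k ∈ Finset.range ⌈(n : ℝ) * T / Eξ⌉₊,
          |τ k ω - k * Eξ| / (variance (ξ 0) μ * Real.sqrt n)) ^ 6 ∂μ)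
        ≤ C := by
  classical
  set σ2 := variance (ξ 0) μ with hσ2
  -- measurability of τ
  have hτmeas : ∀ k, Measurable (τ k) := by
    intro k
    have : τ k = fun ω => ∑ i ∈ Finset.range k, ξ i ω := funext (hτ k)
    rw [this]
    exact Finset.measurable_sum _ fun i _ => hmeas i
  -- integrability of exponentials of single variables
  have hint_exp : ∀ (t : ℝ) (i : ℕ), Integrable (fun ω => Real.exp (t * ξ i ω)) μ := by
    intro t i
    rcases le_or_gt t 0 with ht | ht
    · refine Integrable.mono' (integrable_const 1)
        (((hmeas i).const_mul t).exp.aestronglyMeasurable) ?_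
      filter_upwards with ω
      rw [Real.norm_eq_abs, abs_of_nonneg (Real.exp_pos _).le]
      exact Real.exp_le_one_iff.mpr (mul_nonpos_of_nonpos_of_nonneg ht (hpos i ω).le)
    · have hu : Measurable fun x : ℝ => Real.exp (t * x) :=
        (measurable_id.const_mul t).exp
      exact ((hident i).comp hu).integrable_iff.mpr (hmgf t ht)
  have hξ0int : Integrable (ξ 0) μ := by
    refine Integrable.mono' (hint_exp 1 0) (hmeas 0).aestronglyMeasurable ?_
    filter_upwards with ω
    rw [Real.norm_eq_abs, abs_of_nonneg (hpos 0 ω).le, one_mul]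
    linarith [Real.add_one_le_exp (ξ 0 ω)]
  have hEpos : 0 < Eξ := by
    rw [hEξ]
    rw [integral_pos_iff_support_of_nonneg_ae
      (Filter.Eventually.of_forall fun ω => (hpos 0 ω).le) hξ0int]
    have hsupp : Function.support (ξ 0) = Set.univ :=
      Set.eq_univ_of_forall fun ω => (hpos 0 ω).ne'
    rw [hsupp, measure_univ]
    norm_num
  -- the key second-moment-with-exponential quantity
  have hY2int : Integrable (fun ω => (ξ 0 ω - Eξ) ^ 2 * Real.exp |ξ 0 ω - Eξ|) μ := by
    refine Integrable.mono' ((hint_exp 2 0).const_mul (4 * Real.exp (2 * Eξ)))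
      ((((hmeas 0).sub_const Eξ).pow_const 2).mul
        ((hmeas 0).sub_const Eξ).abs.exp).aestronglyMeasurable ?_
    filter_upwards with ω
    have hx : 0 < ξ 0 ω := hpos 0 ω
    set x := ξ 0 ω with hxdef
    have habs : |x - Eξ| ≤ x + Eξ := by
      rw [abs_le]; constructor <;> linarith
    have h1 : (x - Eξ) ^ 2 ≤ (x + Eξ) ^ 2 := by nlinarith [mul_pos hx hEpos]
    have h2 : Real.exp |x - Eξ| ≤ Real.exp (x + Eξ) := Real.exp_le_exp.mpr habs
    have h3 : (x + Eξ) ^ 2 ≤ 4 * Real.exp (x + Eξ) := aux_sq_le_exp (by linarith)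
    rw [Real.norm_eq_abs, abs_of_nonneg (by positivity)]
    calc (x - Eξ) ^ 2 * Real.exp |x - Eξ| ≤ (x + Eξ) ^ 2 * Real.exp (x + Eξ) :=
          mul_le_mul h1 h2 (Real.exp_pos _).le (by positivity)
      _ ≤ 4 * Real.exp (x + Eξ) * Real.exp (x + Eξ) :=
          mul_le_mul_of_nonneg_right h3 (Real.exp_pos _).le
      _ = 4 * Real.exp (2 * Eξ) * Real.exp (2 * x) := by
          rw [mul_assoc, ← Real.exp_add, mul_assoc, ← Real.exp_add]
          congr 2
          ring
  set c := ∫ ω, (ξ 0 ω - Eξ) ^ 2 * Real.exp |ξ 0 ω - Eξ| ∂μ with hc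
  have hc0 : 0 ≤ c := integral_nonneg fun ω => by positivity
  have hYint : Integrable (fun ω => ξ 0 ω - Eξ) μ := hξ0int.sub (integrable_const Eξ)
  have hYmean : (∫ ω, (ξ 0 ω - Eξ) ∂μ) = 0 := by
    rw [integral_sub hξ0int (integrable_const Eξ), integral_const]
    simp [hEξ]
  -- one-step mgf bound
  have hmgf1 : ∀ θ : ℝ, |θ| ≤ 1 →
      (∫ ω, Real.exp (θ * (ξ 0 ω - Eξ)) ∂μ) ≤ 1 + θ ^ 2 * c := by
    intro θ hθ
    have hle : ∀ ω, Real.exp (θ * (ξ 0 ω - Eξ)) ≤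
        1 + θ * (ξ 0 ω - Eξ) + θ ^ 2 * ((ξ 0 ω - Eξ) ^ 2 * Real.exp |ξ 0 ω - Eξ|) := by
      intro ω
      set y := ξ 0 ω - Eξ with hy
      have h1 := aux_exp_le (θ * y)
      have ha : |θ * y| ≤ |y| := by
        rw [abs_mul]
        calc |θ| * |y| ≤ 1 * |y| := mul_le_mul_of_nonneg_right hθ (abs_nonneg y)
          _ = |y| := one_mul _
      have h2 : (θ * y) ^ 2 * Real.exp |θ * y| ≤ θ ^ 2 * (y ^ 2 * Real.exp |y|) := by
        have h := mul_le_mul_of_nonneg_left (Real.exp_le_exp.mpr ha) (sq_nonneg (θ * y))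
        calc (θ * y) ^ 2 * Real.exp |θ * y| ≤ (θ * y) ^ 2 * Real.exp |y| := h
          _ = θ ^ 2 * (y ^ 2 * Real.exp |y|) := by ring
      linarith
    have hInt : Integrable (fun ω =>
        1 + θ * (ξ 0 ω - Eξ) + θ ^ 2 * ((ξ 0 ω - Eξ) ^ 2 * Real.exp |ξ 0 ω - Eξ|)) μ :=
      ((integrable_const 1).add (hYint.const_mul θ)).add (hY2int.const_mul (θ ^ 2))
    calc (∫ ω, Real.exp (θ * (ξ 0 ω - Eξ)) ∂μ)
        ≤ ∫ ω, (1 + θ * (ξ 0 ω - Eξ) + θ ^ 2 * ((ξ 0 ω - Eξ) ^ 2 * Real.exp |ξ 0 ω - Eξ|)) ∂μ :=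
          integral_mono_of_nonneg (Filter.Eventually.of_forall fun ω => (Real.exp_pos _).le)
            hInt (Filter.Eventually.of_forall hle)
      _ = 1 + θ ^ 2 * c := by
          simp_rw [add_assoc]
          have hgi : Integrable (fun ω =>
              θ * (ξ 0 ω - Eξ) + θ ^ 2 * ((ξ 0 ω - Eξ) ^ 2 * Real.exp |ξ 0 ω - Eξ|)) μ :=
            (hYint.const_mul θ).add (hY2int.const_mul (θ ^ 2))
          rw [integral_add (integrable_const 1) hgi]
          rw [integral_add (hYint.const_mul θ) (hY2int.const_mul (θ ^ 2)),
            integral_const, integral_const_mul, integral_const_mul, hYmean]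
          simp [hc]
  -- integrability of exp(t * S_k)
  have hintS : ∀ (k : ℕ) (t : ℝ),
      Integrable (fun ω => Real.exp (t * (τ k ω - k * Eξ))) μ := by
    intro k t
    have h1 : Integrable (fun ω => Real.exp (t * (∑ i ∈ Finset.range k, ξ i) ω)) μ :=
      hindep.integrable_exp_mul_sum hmeas fun i _ => hint_exp t i
    have h2 : (fun ω => Real.exp (t * (τ k ω - k * Eξ)))
        = fun ω => Real.exp (-(t * (k * Eξ))) * Real.exp (t * (∑ i ∈ Finset.range k, ξ i) ω) := by
      funext ω
      rw [← Real.exp_add, Finset.sum_apply, ← hτ k ω]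
      congr 1
      ring
    rw [h2]
    exact h1.const_mul _
  -- mgf of S_k factorizes
  have hmgfS : ∀ (k : ℕ) (t : ℝ),
      (∫ ω, Real.exp (t * (τ k ω - k * Eξ)) ∂μ)
        = (∫ ω, Real.exp (t * (ξ 0 ω - Eξ)) ∂μ) ^ k := by
    intro k t
    have hu : Measurable fun x : ℝ => Real.exp (t * x) := (measurable_id.const_mul t).exp
    have hmgfτ : (∫ ω, Real.exp (t * τ k ω) ∂μ) = (∫ ω, Real.exp (t * ξ 0 ω) ∂μ) ^ k := by
      have h1 := hindep.mgf_sum hmeas (Finset.range k) (t := t)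
      have h2 : ∀ i ∈ Finset.range k, mgf (ξ i) μ t = mgf (ξ 0) μ t := by
        intro i _
        exact ((hident i).comp hu).integral_eq
      rw [Finset.prod_congr rfl h2, Finset.prod_const, Finset.card_range] at h1
      have h3 : mgf (∑ i ∈ Finset.range k, ξ i) μ t = ∫ ω, Real.exp (t * τ k ω) ∂μ := by
        show (∫ ω, Real.exp (t * (∑ i ∈ Finset.range k, ξ i) ω) ∂μ) = _
        congr 1
        funext ω
        rw [Finset.sum_apply, ← hτ k ω]
      rw [h3] at h1
      exact h1
    have e1 : ∀ (g : Ω → ℝ) (a : ℝ), (∫ ω, Real.exp (t * (g ω - a)) ∂μ)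
        = Real.exp (-(t * a)) * ∫ ω, Real.exp (t * g ω) ∂μ := by
      intro g a
      rw [← integral_const_mul]
      congr 1
      funext ω
      rw [← Real.exp_add]
      congr 1
      ring
    rw [e1 (τ k) ((k : ℝ) * Eξ), e1 (ξ 0) Eξ, hmgfτ, mul_pow]
    congr 1
    rw [← Real.exp_nat_mul]
    congr 1
    ring
  -- sixth moment bound
  have hmom : ∀ k : ℕ,
      (∫ ω, |τ k ω - k * Eξ| ^ 6 ∂μ) ≤ 93312 * Real.exp c * (k : ℝ) ^ 3 := by
    intro k
    rcases Nat.eq_zero_or_pos k with rfl | hk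
    · have h0 : ∀ ω, τ 0 ω = 0 := fun ω => by rw [hτ]; simp
      simp [h0]
    · set t := 1 / Real.sqrt k with htdef
      have hk1 : (1:ℝ) ≤ (k:ℝ) := Nat.one_le_cast.mpr hk
      have hsq : Real.sqrt k ^ 2 = (k:ℝ) := Real.sq_sqrt (by positivity)
      have hsqrt1 : 1 ≤ Real.sqrt k := by
        rw [show (1:ℝ) = Real.sqrt 1 from Real.sqrt_one.symm]
        exact Real.sqrt_le_sqrt hk1
      have htpos : 0 < t := by rw [htdef]; positivity
      have ht1 : t ≤ 1 := by rw [htdef, div_le_one (by positivity)]; exact hsqrt1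
      have ht2 : t ^ 2 = 1 / (k:ℝ) := by rw [htdef, div_pow, one_pow, hsq]
      have hk0 : ((k:ℝ)) ≠ 0 := by positivity
      have hM : ∀ s : ℝ, s ^ 2 = 1 / (k:ℝ) → |s| ≤ 1 →
          (∫ ω, Real.exp (s * (τ k ω - k * Eξ)) ∂μ) ≤ Real.exp c := by
        intro s hs2 hs1
        rw [hmgfS k s]
        have hb := hmgf1 s hs1
        rw [hs2] at hb
        have hnn : 0 ≤ ∫ ω, Real.exp (s * (ξ 0 ω - Eξ)) ∂μ :=
          integral_nonneg fun ω => (Real.exp_pos _).le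
        have hcdiv : 0 ≤ 1 / (k:ℝ) * c := mul_nonneg (by positivity) hc0
        calc (∫ ω, Real.exp (s * (ξ 0 ω - Eξ)) ∂μ) ^ k ≤ (1 + 1 / (k:ℝ) * c) ^ k :=
              pow_le_pow_left₀ hnn hb k
          _ ≤ Real.exp (1 / (k:ℝ) * c) ^ k := by
              apply pow_le_pow_left₀ (by linarith)
              linarith [Real.add_one_le_exp (1 / (k:ℝ) * c)]
          _ = Real.exp c := by
              rw [← Real.exp_nat_mul]
              congr 1
              field_simp
      have hpt : ∀ ω, |τ k ω - k * Eξ| ^ 6 ≤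
          (k:ℝ) ^ 3 * (46656 * (Real.exp (t * (τ k ω - k * Eξ))
            + Real.exp ((-t) * (τ k ω - k * Eξ)))) := by
        intro ω
        set S := τ k ω - k * Eξ with hS
        have habs : |S| ^ 6 = S ^ 6 := by rw [← abs_pow]; exact abs_of_nonneg (by positivity)
        have ht6 : t ^ 6 = 1 / (k:ℝ) ^ 3 := by
          rw [show (6:ℕ) = 2 * 3 from rfl, pow_mul, ht2, div_pow, one_pow]
        have h6 : |S| ^ 6 = (k:ℝ) ^ 3 * (t * S) ^ 6 := by
          rw [habs, mul_pow, ht6]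
          field_simp
        rw [h6]
        apply mul_le_mul_of_nonneg_left _ (by positivity)
        calc (t * S) ^ 6 ≤ 46656 * (Real.exp (t * S) + Real.exp (-(t * S))) :=
              aux_pow6_le_exp (t * S)
          _ = 46656 * (Real.exp (t * S) + Real.exp ((-t) * S)) := by rw [neg_mul]
      have hgint : Integrable (fun ω => (k:ℝ) ^ 3 * (46656 * (Real.exp (t * (τ k ω - k * Eξ))
          + Real.exp ((-t) * (τ k ω - k * Eξ))))) μ :=
        (((hintS k t).add (hintS k (-t))).const_mul 46656).const_mul ((k:ℝ) ^ 3)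
      calc (∫ ω, |τ k ω - k * Eξ| ^ 6 ∂μ)
          ≤ ∫ ω, (k:ℝ) ^ 3 * (46656 * (Real.exp (t * (τ k ω - k * Eξ))
              + Real.exp ((-t) * (τ k ω - k * Eξ)))) ∂μ :=
            integral_mono_of_nonneg (Filter.Eventually.of_forall fun ω => by positivity)
              hgint (Filter.Eventually.of_forall hpt)
        _ = (k:ℝ) ^ 3 * (46656 * ((∫ ω, Real.exp (t * (τ k ω - k * Eξ)) ∂μ)
              + ∫ ω, Real.exp ((-t) * (τ k ω - k * Eξ)) ∂μ)) := by
            rw [integral_const_mul, integral_const_mul, integral_add (hintS k t) (hintS k (-t))]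
        _ ≤ (k:ℝ) ^ 3 * (46656 * (Real.exp c + Real.exp c)) := by
            have h1 := hM t ht2 (by rw [abs_of_nonneg htpos.le]; exact ht1)
            have h2 := hM (-t) (by rw [neg_pow]; simpa using ht2) (by rw [abs_neg, abs_of_nonneg htpos.le]; exact ht1)
            gcongr
        _ = 93312 * Real.exp c * (k:ℝ) ^ 3 := by ring
  -- integrability of |S_k|^6
  have hintS6 : ∀ k : ℕ, Integrable (fun ω => |τ k ω - k * Eξ| ^ 6) μ := by
    intro k
    refine Integrable.mono' (((hintS k 1).add (hintS k (-1))).const_mul 46656)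
      ((((hτmeas k).sub_const ((k:ℝ) * Eξ)).abs.pow_const 6).aestronglyMeasurable) ?_
    filter_upwards with ω
    set S := τ k ω - k * Eξ with hS
    rw [Real.norm_eq_abs, abs_of_nonneg (by positivity)]
    have habs : |S| ^ 6 = S ^ 6 := by rw [← abs_pow]; exact abs_of_nonneg (by positivity)
    rw [habs]
    calc S ^ 6 ≤ 46656 * (Real.exp S + Real.exp (-S)) := aux_pow6_le_exp S
      _ = 46656 * (Real.exp (1 * S) + Real.exp ((-1) * S)) := by rw [one_mul, neg_one_mul]
  -- final assembly
  set B := 93312 * Real.exp c with hB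
  have hBpos : 0 < B := by rw [hB]; positivity
  set R := T / Eξ + 1 with hR
  have hRpos : 0 < R := add_pos (div_pos hT hEpos) one_pos
  have hCpos : 0 < B * Eξ ^ 6 * R ^ 9 / σ2 ^ 6 + 1 := by
    have : 0 < B * Eξ ^ 6 * R ^ 9 / σ2 ^ 6 :=
      div_pos (mul_pos (mul_pos hBpos (pow_pos hEpos 6)) (pow_pos hRpos 9)) (pow_pos hvar 6)
    linarith
  refine ⟨B * Eξ ^ 6 * R ^ 9 / σ2 ^ 6 + 1, hCpos, ?_⟩
  intro n hn
  have hn0 : (0:ℝ) < n := Nat.cast_pos.mpr hn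
  set N := ⌈(n:ℝ) * T / Eξ⌉₊ with hNdef
  have hNle : (N:ℝ) ≤ n * R := by
    have h0 : (0:ℝ) ≤ (n:ℝ) * T / Eξ := by positivity
    have h1 := Nat.ceil_lt_add_one h0
    rw [← hNdef] at h1
    have h2 : (1:ℝ) ≤ n := by exact_mod_cast hn
    have h3 : (n:ℝ) * T / Eξ + 1 ≤ n * R := by
      rw [hR, mul_add, mul_one, mul_div_assoc]
      linarith
    exact le_trans h1.le h3
  have hNnn : (0:ℝ) ≤ N := Nat.cast_nonneg N
  have hd : 0 < σ2 * Real.sqrt n := mul_pos hvar (Real.sqrt_pos.mpr hn0)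
  have hsq6 : Real.sqrt n ^ 6 = (n:ℝ) ^ 3 := by
    rw [show (6:ℕ) = 2 * 3 from rfl, pow_mul, Real.sq_sqrt hn0.le]
  set A := (Eξ / ((n:ℝ) * (σ2 * Real.sqrt n))) ^ 6 with hA
  have hApos : 0 < A := pow_pos (div_pos hEpos (mul_pos hn0 hd)) 6
  have hne1 : (n:ℝ) ≠ 0 := hn0.ne'
  have hne2 : σ2 ≠ 0 := hvar.ne'
  have hne3 : Real.sqrt n ≠ 0 := (Real.sqrt_pos.mpr hn0).ne'
  have hpt : ∀ ω, ((Eξ / n) * ∑ k ∈ Finset.range N, |τ k ω - k * Eξ| / (σ2 * Real.sqrt n)) ^ 6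
      ≤ A * ((N:ℝ) ^ 5 * ∑ k ∈ Finset.range N, |τ k ω - k * Eξ| ^ 6) := by
    intro ω
    have hrew : ((Eξ / n) * ∑ k ∈ Finset.range N, |τ k ω - k * Eξ| / (σ2 * Real.sqrt n)) ^ 6
        = A * (∑ k ∈ Finset.range N, |τ k ω - k * Eξ|) ^ 6 := by
      rw [← Finset.sum_div, hA]
      field_simp
    rw [hrew]
    apply mul_le_mul_of_nonneg_left _ hApos.le
    have hJ := pow_sum_le_card_mul_sum_pow
      (s := Finset.range N) (f := fun k => |τ k ω - k * Eξ|) (fun i _ => abs_nonneg _) 5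
    simp only [Finset.card_range] at hJ
    norm_num at hJ
    exact hJ
  have hsumint : Integrable (fun ω => ∑ k ∈ Finset.range N, |τ k ω - k * Eξ| ^ 6) μ :=
    integrable_finset_sum _ fun k _ => hintS6 k
  have hgint : Integrable (fun ω => A * ((N:ℝ) ^ 5 * ∑ k ∈ Finset.range N, |τ k ω - k * Eξ| ^ 6)) μ :=
    (hsumint.const_mul _).const_mul _
  calc (∫ ω, ((Eξ / n) * ∑ k ∈ Finset.range N, |τ k ω - k * Eξ| / (σ2 * Real.sqrt n)) ^ 6 ∂μ)
      ≤ ∫ ω, A * ((N:ℝ) ^ 5 * ∑ k ∈ Finset.range N, |τ k ω - k * Eξ| ^ 6) ∂μ :=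
        integral_mono_of_nonneg (Filter.Eventually.of_forall fun ω => by positivity)
          hgint (Filter.Eventually.of_forall hpt)
    _ = A * ((N:ℝ) ^ 5 * ∑ k ∈ Finset.range N, ∫ ω, |τ k ω - k * Eξ| ^ 6 ∂μ) := by
        rw [integral_const_mul, integral_const_mul, integral_finset_sum _ fun k _ => hintS6 k]
    _ ≤ A * ((N:ℝ) ^ 5 * ∑ k ∈ Finset.range N, B * (N:ℝ) ^ 3) := by
        apply mul_le_mul_of_nonneg_left _ hApos.le
        apply mul_le_mul_of_nonneg_left _ (by positivity)
        apply Finset.sum_le_sum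
        intro k hk
        refine le_trans (hmom k) ?_
        have hkN : (k:ℝ) ≤ (N:ℝ) := by exact_mod_cast (Finset.mem_range.mp hk).le
        have hk3 : (k:ℝ) ^ 3 ≤ (N:ℝ) ^ 3 := pow_le_pow_left₀ (by positivity) hkN 3
        calc B * (k:ℝ) ^ 3 ≤ B * (N:ℝ) ^ 3 := mul_le_mul_of_nonneg_left hk3 hBpos.le
          _ = B * (N:ℝ) ^ 3 := rfl
    _ = (Eξ ^ 6 * B / ((n:ℝ) ^ 9 * σ2 ^ 6)) * (N:ℝ) ^ 9 := by
        rw [Finset.sum_const, Finset.card_range, nsmul_eq_mul, hA, div_pow]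
        have hden : ((n:ℝ) * (σ2 * Real.sqrt n)) ^ 6 = (n:ℝ) ^ 9 * σ2 ^ 6 := by
          rw [mul_pow, mul_pow, hsq6]
          ring
        rw [hden]
        ring
    _ ≤ (Eξ ^ 6 * B / ((n:ℝ) ^ 9 * σ2 ^ 6)) * ((n:ℝ) ^ 9 * R ^ 9) := by
        have hnum : (0:ℝ) ≤ Eξ ^ 6 * B / ((n:ℝ) ^ 9 * σ2 ^ 6) :=
          le_of_lt (div_pos (mul_pos (pow_pos hEpos 6) hBpos)
            (mul_pos (pow_pos hn0 9) (pow_pos hvar 6)))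
        apply mul_le_mul_of_nonneg_left _ hnum
        calc (N:ℝ) ^ 9 ≤ ((n:ℝ) * R) ^ 9 := pow_le_pow_left₀ hNnn hNle 9
          _ = (n:ℝ) ^ 9 * R ^ 9 := mul_pow _ _ 9
    _ = B * Eξ ^ 6 * R ^ 9 / σ2 ^ 6 := by
        field_simp
    _ ≤ B * Eξ ^ 6 * R ^ 9 / σ2 ^ 6 + 1 := le_add_of_nonneg_right zero_le_one
end

section
/- Let (ξ_i)_{i≥1} be i.i.d. positive random variables with E[e^{θξ₁}] < ∞ for all θ > 0. For n ∈ ℕ set τⁿ_k = (1/n)∑_{i=1}^k ξ_i, Nⁿ_t = sup{k : τⁿ_k ≤ t}, πⁿ(t) = τⁿ_{Nⁿ_t}. Let T > 0 and let f : [0,T] → ℝ^d be measurable and bounded. Then there exists a constant C depending only on T, the distribution of ξ₁, and sup_{t∈[0,T]}‖f(t)‖, such that for all n ∈ ℕ: E[ sup_{0 ≤ t ≤ T} (n/2) · (t − πⁿ(t))² · ‖f(πⁿ(t))‖ ] ≤ C · n^{−1/2}. -/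
open MeasureTheory ProbabilityTheory

/-- Cauchy–Schwarz for lintegral on a probability measure. -/
lemma aux_lintegral_le_sqrt {Ω : Type*} [MeasurableSpace Ω] (μ : Measure Ω)
    [IsProbabilityMeasure μ] (F : Ω → ENNReal) (hF : AEMeasurable F μ) :
    ∫⁻ ω, F ω ∂μ ≤ (∫⁻ ω, F ω ^ (2:ℝ) ∂μ) ^ (1/2 : ℝ) := by
  have h := ENNReal.lintegral_mul_le_Lp_mul_Lq μ
    Real.HolderConjugate.two_two hF
    (aemeasurable_const (b := (1:ENNReal)))
  simpa using h

/-- Cauchy–Schwarz for lintegral of a product, 2-2 version. -/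
lemma aux_lintegral_mul_le {Ω : Type*} [MeasurableSpace Ω] (μ : Measure Ω)
    (F G : Ω → ENNReal) (hF : AEMeasurable F μ) (hG : AEMeasurable G μ) :
    ∫⁻ ω, F ω * G ω ∂μ ≤ (∫⁻ ω, F ω ^ (2:ℝ) ∂μ) ^ (1/2 : ℝ) *
      (∫⁻ ω, G ω ^ (2:ℝ) ∂μ) ^ (1/2 : ℝ) := by
  have h := ENNReal.lintegral_mul_le_Lp_mul_Lq μ
    Real.HolderConjugate.two_two hF hG
  simpa using h

set_option maxHeartbeats 2000000 in
/-- Decay of the squared renewal age against a bounded function: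
there is `C` (depending only on `T`, the distribution of `ξ₁` and `sup_{[0,T]}‖f‖`)
with `E[sup_{0≤t≤T} (n/2)(t − πⁿ(t))² ‖f(πⁿ(t))‖] ≤ C n^{−1/2}` for all `n`. -/
theorem stmt_15 {Ω : Type*} [MeasurableSpace Ω] (μ : Measure Ω) [IsProbabilityMeasure μ]
    (d : ℕ) (hd : 0 < d)
    (ξ : ℕ → Ω → ℝ) (hmeas : ∀ i, Measurable (ξ i))
    (hpos : ∀ i ω, 0 < ξ i ω)
    (hindep : iIndepFun ξ μ)
    (hident : ∀ i, IdentDistrib (ξ i) (ξ 0) μ μ)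
    (hmgf : ∀ θ : ℝ, 0 < θ → Integrable (fun ω => Real.exp (θ * ξ 0 ω)) μ)
    (τ : ℕ → ℕ → Ω → ℝ) (hτ : ∀ n k ω, τ n k ω = (∑ i ∈ Finset.range k, ξ i ω) / n)
    (N : ℕ → ℝ → Ω → ℕ) (hN : ∀ n t ω, N n t ω = sSup {k : ℕ | τ n k ω ≤ t})
    (π : ℕ → ℝ → Ω → ℝ) (hπ : ∀ n t ω, π n t ω = τ n (N n t ω) ω)
    (T : ℝ) (hT : 0 < T)
    (f : ℝ → EuclideanSpace ℝ (Fin d)) (hf_meas : Measurable f)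
    (Cf : ℝ) (hf_bdd : ∀ t ∈ Set.Icc (0 : ℝ) T, ‖f t‖ ≤ Cf) :
    ∃ C : ℝ, 0 < C ∧ ∀ n : ℕ, 0 < n →
      (∫ ω, (⨆ t : Set.Icc (0 : ℝ) T,
          ((n : ℝ) / 2) * ((t : ℝ) - π n t ω) ^ 2 * ‖f (π n t ω)‖) ∂μ)
        ≤ C * (n : ℝ) ^ (-(1 : ℝ) / 2) := by
  classical
  -- partial sums
  set S : ℕ → Ω → ℝ := fun k ω => ∑ i ∈ Finset.range k, ξ i ω with hSdef
  have hS_meas : ∀ k, Measurable (S k) := fun k =>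
    Finset.measurable_sum _ (fun i _ => hmeas i)
  have hS_mono : ∀ ω, StrictMono (fun k => S k ω) := by
    intro ω
    apply strictMono_nat_of_lt_succ
    intro k
    simp only [hSdef, Finset.sum_range_succ]
    exact lt_add_of_pos_right _ (hpos k ω)
  have hS_nonneg : ∀ k ω, 0 ≤ S k ω := fun k ω =>
    Finset.sum_nonneg (fun i _ => (hpos i ω).le)
  have hCf : 0 ≤ Cf := le_trans (norm_nonneg _) (hf_bdd 0 ⟨le_refl 0, hT.le⟩)
  -- exponential and polynomial moments
  have hexp_int : Integrable (fun ω => Real.exp (ξ 0 ω)) μ := by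
    simpa using hmgf 1 one_pos
  have hmom : ∀ p : ℕ, Integrable (fun ω => (ξ 0 ω) ^ p) μ := by
    intro p
    refine Integrable.mono' (hexp_int.const_mul (p.factorial : ℝ))
      ((hmeas 0).pow_const p).aestronglyMeasurable ?_
    filter_upwards with ω
    rw [Real.norm_eq_abs, abs_of_nonneg (pow_nonneg (hpos 0 ω).le p)]
    have := Real.pow_div_factorial_le_exp _ (hpos 0 ω).le p
    have hfac : (0:ℝ) < (p.factorial : ℝ) := by positivity
    calc ξ 0 ω ^ p = (p.factorial : ℝ) * (ξ 0 ω ^ p / (p.factorial : ℝ)) := by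
          field_simp
      _ ≤ (p.factorial : ℝ) * Real.exp (ξ 0 ω) := by
          apply mul_le_mul_of_nonneg_left this hfac.le
  -- ρ and its properties
  set ρ : ℝ := ∫ ω, Real.exp (-ξ 0 ω) ∂μ with hρdef
  have hnegexp_int : ∀ (g : Ω → ℝ), Measurable g → (∀ ω, 0 ≤ g ω) →
      Integrable (fun ω => Real.exp (-(g ω))) μ := by
    intro g hg hg0
    refine Integrable.mono' (integrable_const 1) (hg.neg.exp).aestronglyMeasurable ?_
    filter_upwards with ω
    rw [Real.norm_eq_abs, abs_of_nonneg (Real.exp_nonneg _)]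
    exact Real.exp_le_one_iff.2 (neg_nonpos.2 (hg0 ω))
  have hρ_int : Integrable (fun ω => Real.exp (-ξ 0 ω)) μ :=
    hnegexp_int (ξ 0) (hmeas 0) (fun ω => (hpos 0 ω).le)
  have hρ_pos : 0 < ρ := by
    rw [hρdef, integral_pos_iff_support_of_nonneg (fun ω => Real.exp_nonneg _) hρ_int]
    have : Function.support (fun ω => Real.exp (-ξ 0 ω)) = Set.univ := by
      ext ω; simp [Function.support, (Real.exp_pos _).ne']
    rw [this]
    simp [measure_univ]
  have hρ_lt : ρ < 1 := by
    have hint : Integrable (fun ω => 1 - Real.exp (-ξ 0 ω)) μ :=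
      (integrable_const 1).sub hρ_int
    have hposint : 0 < ∫ ω, (1 - Real.exp (-ξ 0 ω)) ∂μ := by
      rw [integral_pos_iff_support_of_nonneg _ hint]
      · have : Function.support (fun ω => 1 - Real.exp (-ξ 0 ω)) = Set.univ := by
          ext ω
          have : Real.exp (-ξ 0 ω) < 1 := by
            rw [Real.exp_lt_one_iff]; exact neg_neg_iff_pos.2 (hpos 0 ω)
          simp [Function.support, sub_eq_zero, (this.ne').symm]
          linarith
        rw [this]; simp [measure_univ]
      · intro ω
        have : Real.exp (-ξ 0 ω) < 1 := by
          rw [Real.exp_lt_one_iff]; exact neg_neg_iff_pos.2 (hpos 0 ω)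
        simp only [Pi.zero_apply]; linarith
    have : ∫ ω, (1 - Real.exp (-ξ 0 ω)) ∂μ = 1 - ρ := by
      rw [integral_sub (integrable_const 1) hρ_int]
      simp [measure_univ, hρdef]
    linarith [this ▸ hposint]
  -- Chernoff bound
  have chernoff : ∀ (b : ℝ) (k : ℕ),
      μ {ω | S k ω ≤ b} ≤ ENNReal.ofReal (Real.exp b * ρ ^ k) := by
    intro b k
    have hSint : Integrable (fun ω => Real.exp (b - S k ω)) μ := by
      have : (fun ω => Real.exp (b - S k ω))
          = fun ω => Real.exp b * Real.exp (-(S k ω)) := by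
        funext ω; rw [← Real.exp_add]; ring_nf
      rw [this]
      exact (hnegexp_int (S k) (hS_meas k) (fun ω => hS_nonneg k ω)).const_mul _
    have h1 : μ {ω | S k ω ≤ b} ≤ ∫⁻ ω, ENNReal.ofReal (Real.exp (b - S k ω)) ∂μ := by
      have hset : MeasurableSet {ω | S k ω ≤ b} :=
        measurableSet_le (hS_meas k) measurable_const
      rw [← lintegral_indicator_one hset]
      apply lintegral_mono
      intro ω
      by_cases hω : ω ∈ {ω | S k ω ≤ b}
      · rw [Set.indicator_of_mem hω]
        simp only [Pi.one_apply]
        rw [show (1:ENNReal) = ENNReal.ofReal 1 by simp]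
        exact ENNReal.ofReal_le_ofReal (Real.one_le_exp (by simpa using hω))
      · rw [Set.indicator_of_notMem hω]; exact zero_le
    have h2 : ∫⁻ ω, ENNReal.ofReal (Real.exp (b - S k ω)) ∂μ
        = ENNReal.ofReal (∫ ω, Real.exp (b - S k ω) ∂μ) := by
      rw [← ofReal_integral_eq_lintegral_ofReal hSint]
      filter_upwards with ω using Real.exp_nonneg _
    have h3 : ∫ ω, Real.exp (b - S k ω) ∂μ = Real.exp b * ρ ^ k := by
      have heq : (fun ω => Real.exp (b - S k ω))
          = fun ω => Real.exp b * Real.exp (-(S k ω)) := by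
        funext ω; rw [← Real.exp_add]; ring_nf
      rw [heq, integral_const_mul]
      congr 1
      -- ∫ exp(-S k) = ρ^k via mgf_sum
      have hmgfS : ∫ ω, Real.exp (-(S k ω)) ∂μ
          = mgf (∑ i ∈ Finset.range k, ξ i) μ (-1) := by
        rw [mgf]
        congr 1
        funext ω
        simp [hSdef, Finset.sum_apply, neg_one_mul]
      rw [hmgfS, hindep.mgf_sum hmeas]
      have : ∀ i ∈ Finset.range k, mgf (ξ i) μ (-1) = ρ := by
        intro i _
        rw [mgf]
        have hu : Measurable (fun x : ℝ => Real.exp (-1 * x)) := (measurable_id.const_mul (-1 : ℝ)).exp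
        have hcomp := ((hident i).comp hu).integral_eq
        simp only [Function.comp_def] at hcomp
        rw [show (μ[fun ω => Real.exp (-1 * ξ i ω)]) = ∫ ω, Real.exp (-1 * ξ i ω) ∂μ from rfl]
        rw [hcomp]
        simp [hρdef, neg_one_mul]
      rw [Finset.prod_congr rfl this, Finset.prod_const, Finset.card_range]
    rw [h2, h3] at h1
    exact h1
  -- eighth moment
  set m8 : ℝ := ∫ ω, (ξ 0 ω) ^ 8 ∂μ with hm8def
  have hm8_nonneg : 0 ≤ m8 := integral_nonneg (fun ω => by positivity)
  have hm8k : ∀ k, ∫⁻ ω, ENNReal.ofReal ((ξ k ω) ^ 8) ∂μ = ENNReal.ofReal m8 := by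
    intro k
    have hid := (hident k).comp (measurable_id.pow_const 8)
    simp only [Function.comp_def, id_eq] at hid
    have hint : Integrable (fun ω => (ξ k ω) ^ 8) μ := hid.integrable_iff.2 (hmom 8)
    rw [← ofReal_integral_eq_lintegral_ofReal hint ?_]
    · rw [hm8def, hid.integral_eq]
    · filter_upwards with ω; positivity
  -- constants
  set r : ℝ := Real.sqrt ρ with hrdef
  have hr_pos : 0 < r := Real.sqrt_pos.2 hρ_pos
  have hr_lt : r < 1 := by
    rw [hrdef, show (1:ℝ) = Real.sqrt 1 by simp]
    exact Real.sqrt_lt_sqrt hρ_pos.le hρ_lt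
  have hr1 : 0 < 1 - r := by linarith
  have hρr : ρ = r ^ 2 := (Real.sq_sqrt hρ_pos.le).symm
  set L : ℝ := -Real.log r with hLdef
  have hL_pos : 0 < L := by
    rw [hLdef, neg_pos]; exact Real.log_neg hr_pos hr_lt
  set B : ℝ := T / (2*L) + 2 + 1/(1-r) with hBdef
  have hB_pos : 0 < B := by positivity
  set A : ℝ := Real.sqrt m8 * B with hAdef
  have hA_nonneg : 0 ≤ A := mul_nonneg (Real.sqrt_nonneg _) hB_pos.le
  refine ⟨Cf/2 * Real.sqrt A + 1, by positivity, ?_⟩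
  intro n hn
  have hn' : (0:ℝ) < n := Nat.cast_pos.2 hn
  have hn1 : (1:ℝ) ≤ n := Nat.one_le_cast.2 hn
  -- per-n objects
  set Kn : ℕ := ⌈(n:ℝ) * T / (2*L)⌉₊ with hKdef
  set E : ℕ → Set Ω := fun k => {ω | S k ω ≤ n * T} with hEdef
  have hE_meas : ∀ k, MeasurableSet (E k) := fun k =>
    measurableSet_le (hS_meas k) measurable_const
  set D : Ω → ENNReal := fun ω =>
    ∑' k, Set.indicator (E k) (fun ω => ENNReal.ofReal ((ξ k ω) ^ 4)) ω with hDdef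
  have hterm_meas : ∀ k, Measurable
      (fun ω => Set.indicator (E k) (fun ω => ENNReal.ofReal ((ξ k ω) ^ 4)) ω) := fun k =>
    Measurable.indicator ((hmeas k).pow_const 4).ennreal_ofReal (hE_meas k)
  have hD_meas : Measurable D := Measurable.ennreal_tsum hterm_meas
  -- per-term bound via Cauchy-Schwarz
  have hDk : ∀ k, ∫⁻ ω, Set.indicator (E k) (fun ω => ENNReal.ofReal ((ξ k ω) ^ 4)) ω ∂μ
      ≤ ENNReal.ofReal (Real.sqrt m8) * (μ (E k)) ^ (1/2 : ℝ) := by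
    intro k
    have hind : ∀ ω, Set.indicator (E k) (fun ω => ENNReal.ofReal ((ξ k ω) ^ 4)) ω
        = ENNReal.ofReal ((ξ k ω) ^ 4) * Set.indicator (E k) (1 : Ω → ENNReal) ω := by
      intro ω; by_cases hω : ω ∈ E k <;> simp [hω]
    calc ∫⁻ ω, Set.indicator (E k) (fun ω => ENNReal.ofReal ((ξ k ω) ^ 4)) ω ∂μ
        = ∫⁻ ω, ENNReal.ofReal ((ξ k ω) ^ 4) * Set.indicator (E k) (1 : Ω → ENNReal) ω ∂μ := by
          simp_rw [hind]
      _ ≤ (∫⁻ ω, ENNReal.ofReal ((ξ k ω) ^ 4) ^ (2:ℝ) ∂μ) ^ (1/2 : ℝ) *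
          (∫⁻ ω, Set.indicator (E k) (1 : Ω → ENNReal) ω ^ (2:ℝ) ∂μ) ^ (1/2 : ℝ) :=
          aux_lintegral_mul_le μ _ _ ((hmeas k).pow_const 4).ennreal_ofReal.aemeasurable
            ((measurable_one.indicator (hE_meas k)).aemeasurable)
      _ = ENNReal.ofReal (Real.sqrt m8) * (μ (E k)) ^ (1/2 : ℝ) := by
          congr 1
          · have h1 : ∀ ω, ENNReal.ofReal ((ξ k ω) ^ 4) ^ (2:ℝ)
                = ENNReal.ofReal ((ξ k ω) ^ 8) := by
              intro ω
              rw [ENNReal.ofReal_rpow_of_nonneg (by positivity) (by norm_num)]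
              congr 1
              rw [show (2:ℝ) = ((2:ℕ):ℝ) by norm_num, Real.rpow_natCast]
              ring
            simp_rw [h1, hm8k k]
            rw [ENNReal.ofReal_rpow_of_nonneg hm8_nonneg (by norm_num)]
            congr 1
            rw [Real.sqrt_eq_rpow]
          · have h2 : ∀ ω, Set.indicator (E k) (1 : Ω → ENNReal) ω ^ (2:ℝ)
                = Set.indicator (E k) (1 : Ω → ENNReal) ω := by
              intro ω; by_cases hω : ω ∈ E k
              · simp [hω]
              · simp [hω, ENNReal.zero_rpow_of_pos (by norm_num : (0:ℝ) < 2)]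
            simp_rw [h2]
            rw [lintegral_indicator_one (hE_meas k)]
  -- geometric-type tail bound for the measures of E k
  set g : ℕ → ℝ := fun k => if k ≤ Kn then 1 else r ^ (k - Kn) with hgdef
  have hg_nonneg : ∀ k, 0 ≤ g k := by
    intro k; by_cases h : k ≤ Kn <;> simp [hgdef, h] <;> positivity
  have hμE : ∀ k, (μ (E k)) ^ (1/2 : ℝ) ≤ ENNReal.ofReal (g k) := by
    intro k
    by_cases hk : k ≤ Kn
    · calc (μ (E k)) ^ (1/2 : ℝ) ≤ (1 : ENNReal) ^ (1/2 : ℝ) :=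
          ENNReal.rpow_le_rpow prob_le_one (by norm_num)
        _ = ENNReal.ofReal (g k) := by simp [hgdef, hk]
    · have hch : μ (E k) ≤ ENNReal.ofReal (Real.exp ((n:ℝ)*T) * ρ ^ k) := chernoff _ k
      have hsqrt : Real.sqrt (Real.exp ((n:ℝ)*T) * ρ ^ k)
          = Real.exp ((n:ℝ)*T/2) * r ^ k := by
        rw [Real.sqrt_mul (Real.exp_nonneg _)]
        congr 1
        · rw [show Real.exp ((n:ℝ)*T) = (Real.exp ((n:ℝ)*T/2))^2 by
            rw [sq, ← Real.exp_add]; ring_nf]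
          exact Real.sqrt_sq (Real.exp_nonneg _)
        · rw [show ρ ^ k = (r ^ k)^2 by rw [hρr]; ring]
          exact Real.sqrt_sq (pow_nonneg hr_pos.le k)
      have hreal : Real.exp ((n:ℝ)*T/2) * r ^ k ≤ r ^ (k - Kn) := by
        have hKk : Kn ≤ k := le_of_not_ge hk
        have hceil : (n:ℝ) * T / (2*L) ≤ (Kn : ℝ) := Nat.le_ceil _
        have h1 : (n:ℝ)*T/2 ≤ (Kn : ℝ) * L := by
          calc (n:ℝ)*T/2 = ((n:ℝ)*T/(2*L)) * L := by field_simp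
            _ ≤ (Kn : ℝ) * L := mul_le_mul_of_nonneg_right hceil hL_pos.le
        have h2 : Real.exp ((n:ℝ)*T/2) * r ^ Kn ≤ 1 := by
          rw [show r ^ Kn = Real.exp ((Kn:ℝ) * Real.log r) by
            rw [Real.exp_nat_mul, Real.exp_log hr_pos]]
          rw [← Real.exp_add, Real.exp_le_one_iff]
          have : (Kn:ℝ) * Real.log r = -((Kn:ℝ) * L) := by rw [hLdef]; ring
          rw [this]; linarith
        calc Real.exp ((n:ℝ)*T/2) * r ^ k
            = (Real.exp ((n:ℝ)*T/2) * r ^ Kn) * r ^ (k - Kn) := by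
              rw [mul_assoc, ← pow_add]
              congr 2
              omega
          _ ≤ 1 * r ^ (k - Kn) :=
              mul_le_mul_of_nonneg_right h2 (pow_nonneg hr_pos.le _)
          _ = r ^ (k - Kn) := one_mul _
      calc (μ (E k)) ^ (1/2 : ℝ)
          ≤ (ENNReal.ofReal (Real.exp ((n:ℝ)*T) * ρ ^ k)) ^ (1/2 : ℝ) :=
            ENNReal.rpow_le_rpow hch (by norm_num)
        _ = ENNReal.ofReal (Real.sqrt (Real.exp ((n:ℝ)*T) * ρ ^ k)) := by
            rw [ENNReal.ofReal_rpow_of_nonneg (by positivity) (by norm_num),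
              ← Real.sqrt_eq_rpow]
        _ ≤ ENNReal.ofReal (g k) := by
            apply ENNReal.ofReal_le_ofReal
            rw [hsqrt]
            simpa [hgdef, hk] using hreal
  -- summability and tsum bound for g
  have hshift : ∀ j : ℕ, g (j + (Kn+1)) = r ^ (j+1) := by
    intro j
    have h : ¬ (j + (Kn+1) ≤ Kn) := by omega
    rw [hgdef]; simp only [h, if_false]
    congr 1; omega
  have hsum_shift : Summable (fun j => g (j + (Kn+1))) := by
    have : (fun j : ℕ => g (j + (Kn+1))) = fun j : ℕ => r ^ j * r := by
      funext j; rw [hshift j, pow_succ]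
    rw [this]
    exact (summable_geometric_of_lt_one hr_pos.le hr_lt).mul_right r
  have hsummable : Summable g := (summable_nat_add_iff (Kn+1)).1 hsum_shift
  have htsum_le : ∑' k, g k ≤ ((Kn : ℝ) + 1) + 1/(1-r) := by
    rw [← Summable.sum_add_tsum_nat_add (Kn+1) hsummable]
    have hpart1 : ∑ k ∈ Finset.range (Kn+1), g k = (Kn : ℝ) + 1 := by
      have hone : ∀ k ∈ Finset.range (Kn+1), g k = 1 := by
        intro k hk
        have hk' : k ≤ Kn := by
          have := Finset.mem_range.1 hk; omega
        simp [hgdef, hk']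
      rw [Finset.sum_congr rfl hone, Finset.sum_const, Finset.card_range]
      push_cast; ring
    have hpart2 : ∑' j, g (j + (Kn+1)) ≤ 1/(1-r) := by
      have he : (fun j : ℕ => g (j + (Kn+1))) = fun j : ℕ => r ^ j * r := by
        funext j; rw [hshift j, pow_succ]
      rw [he, tsum_mul_right, tsum_geometric_of_lt_one hr_pos.le hr_lt]
      rw [one_div]
      calc (1-r)⁻¹ * r ≤ (1-r)⁻¹ * 1 :=
          mul_le_mul_of_nonneg_left hr_lt.le (by positivity)
        _ = (1-r)⁻¹ := mul_one _
    linarith [hpart1, hpart2]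
  -- bound on the lintegral of D
  have hDle : ∫⁻ ω, D ω ∂μ ≤ ENNReal.ofReal (A * n) := by
    calc ∫⁻ ω, D ω ∂μ
        = ∑' k, ∫⁻ ω, Set.indicator (E k) (fun ω => ENNReal.ofReal ((ξ k ω) ^ 4)) ω ∂μ := by
          rw [hDdef]; exact lintegral_tsum (fun k => (hterm_meas k).aemeasurable)
      _ ≤ ∑' k, ENNReal.ofReal (Real.sqrt m8) * ENNReal.ofReal (g k) :=
          ENNReal.tsum_le_tsum (fun k => le_trans (hDk k) (mul_le_mul_right (hμE k) _))
      _ = ENNReal.ofReal (Real.sqrt m8) * ∑' k, ENNReal.ofReal (g k) :=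
          ENNReal.tsum_mul_left
      _ = ENNReal.ofReal (Real.sqrt m8) * ENNReal.ofReal (∑' k, g k) := by
          rw [ENNReal.ofReal_tsum_of_nonneg hg_nonneg hsummable]
      _ ≤ ENNReal.ofReal (A * n) := by
          rw [← ENNReal.ofReal_mul (Real.sqrt_nonneg _)]
          apply ENNReal.ofReal_le_ofReal
          have hKn_lt : (Kn : ℝ) < (n:ℝ) * T / (2*L) + 1 :=
            Nat.ceil_lt_add_one (by positivity)
          have hgsum : ∑' k, g k ≤ B * n := by
            have h1 : ((Kn : ℝ) + 1) + 1/(1-r) ≤ (n:ℝ)*T/(2*L) + 2 + 1/(1-r) := by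
              linarith
            have h2 : (n:ℝ)*T/(2*L) + 2 + 1/(1-r) ≤ B * n := by
              rw [hBdef]
              have ha : (n:ℝ)*T/(2*L) = T/(2*L) * n := by ring
              have hb : (2:ℝ) ≤ 2 * n := by linarith
              have hc : 1/(1-r) ≤ 1/(1-r) * n := by
                nth_rewrite 1 [← mul_one (1/(1-r))]
                exact mul_le_mul_of_nonneg_left hn1 (by positivity)
              calc (n:ℝ)*T/(2*L) + 2 + 1/(1-r)
                  ≤ T/(2*L) * n + 2 * n + 1/(1-r) * n := by
                    rw [← ha]; linarith
                _ = (T / (2*L) + 2 + 1/(1-r)) * n := by ring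
            exact le_trans htsum_le (le_trans h1 h2)
          calc Real.sqrt m8 * ∑' k, g k ≤ Real.sqrt m8 * (B * n) :=
              mul_le_mul_of_nonneg_left hgsum (Real.sqrt_nonneg _)
            _ = A * n := by rw [hAdef]; ring
  -- a.e., the partial sums exceed nT
  have hae : ∀ᵐ ω ∂μ, ∃ k, (n:ℝ) * T < S k ω := by
    rw [ae_iff]
    have hseteq : {ω | ¬ ∃ k, (n:ℝ) * T < S k ω} = {ω | ∀ k, S k ω ≤ (n:ℝ)*T} := by
      ext ω; simp [not_lt]
    rw [hseteq]
    have hbnd : ∀ k, μ {ω | ∀ j, S j ω ≤ (n:ℝ)*T}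
        ≤ ENNReal.ofReal (Real.exp ((n:ℝ)*T) * ρ ^ k) := fun k =>
      le_trans (measure_mono (fun ω hω => hω k)) (chernoff _ k)
    have htend : Filter.Tendsto (fun k => ENNReal.ofReal (Real.exp ((n:ℝ)*T) * ρ ^ k))
        Filter.atTop (nhds 0) := by
      rw [show (0:ENNReal) = ENNReal.ofReal 0 by simp]
      apply ENNReal.tendsto_ofReal
      have h := tendsto_pow_atTop_nhds_zero_of_lt_one hρ_pos.le hρ_lt
      simpa using h.const_mul (Real.exp ((n:ℝ)*T))
    exact le_antisymm (ge_of_tendsto' htend hbnd) zero_le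
  -- pointwise bound on the supremum
  have hptw : ∀ ω, (∃ k, (n:ℝ)*T < S k ω) →
      (⨆ t : Set.Icc (0:ℝ) T,
          ((n : ℝ) / 2) * ((t : ℝ) - π n t ω) ^ 2 * ‖f (π n t ω)‖)
        ≤ Cf/(2*n) * Real.sqrt ((D ω).toReal) := by
    rintro ω ⟨k₀, hk₀⟩
    have hDfin : D ω ≠ ⊤ := by
      simp only [hDdef]
      have hz : ∀ k ∉ Finset.range k₀,
          Set.indicator (E k) (fun ω => ENNReal.ofReal ((ξ k ω) ^ 4)) ω = 0 := by
        intro k hk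
        have hk' : k₀ ≤ k := by
          simpa using hk
        apply Set.indicator_of_notMem
        intro hmem'
        have h1 : S k ω ≤ (n:ℝ)*T := hmem'
        have h2 : S k₀ ω ≤ S k ω := (hS_mono ω).monotone hk'
        linarith
      rw [tsum_eq_sum hz]
      apply (ENNReal.sum_lt_top.2 ?_).ne
      intro k _
      by_cases hmem' : ω ∈ E k
      · rw [Set.indicator_of_mem hmem']; exact ENNReal.ofReal_lt_top
      · rw [Set.indicator_of_notMem hmem']; exact ENNReal.zero_lt_top
    have hDtR : 0 ≤ (D ω).toReal := ENNReal.toReal_nonneg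
    haveI : Nonempty (Set.Icc (0:ℝ) T) := ⟨⟨0, ⟨le_refl 0, hT.le⟩⟩⟩
    apply ciSup_le
    rintro ⟨t, ht0, htT⟩
    show ((n : ℝ) / 2) * (t - π n t ω) ^ 2 * ‖f (π n t ω)‖
      ≤ Cf/(2*n) * Real.sqrt ((D ω).toReal)
    -- the set of renewal indices before time t
    have hmem : ∀ k, τ n k ω ≤ t ↔ S k ω ≤ (n:ℝ) * t := by
      intro k
      rw [hτ]
      rw [div_le_iff₀ hn']
      constructor <;> intro h <;> [linarith [h]; linarith [h]]
    have h0mem : 0 ∈ {k : ℕ | τ n k ω ≤ t} := by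
      have : S 0 ω = 0 := by simp [hSdef]
      simp only [Set.mem_setOf_eq, hmem 0, this]
      positivity
    have hbdd : BddAbove {k : ℕ | τ n k ω ≤ t} := by
      refine ⟨k₀, fun k hk => ?_⟩
      by_contra hlt
      push_neg at hlt
      have h1 : S k₀ ω ≤ S k ω := (hS_mono ω).monotone hlt.le
      have h2 : S k ω ≤ (n:ℝ) * t := (hmem k).1 hk
      have h3 : (n:ℝ) * t ≤ (n:ℝ) * T := mul_le_mul_of_nonneg_left htT hn'.le
      linarith
    set Nt : ℕ := N n t ω with hNtdef
    have hNt_eq : Nt = sSup {k : ℕ | τ n k ω ≤ t} := hN n t ω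
    have hNt_mem : Nt ∈ {k : ℕ | τ n k ω ≤ t} := by
      rw [hNt_eq]; exact Nat.sSup_mem ⟨0, h0mem⟩ hbdd
    have hSNt : S Nt ω ≤ (n:ℝ) * t := (hmem Nt).1 hNt_mem
    have hsucc : ¬ (Nt + 1 ∈ {k : ℕ | τ n k ω ≤ t}) := by
      intro hmem'
      have h1 : Nt + 1 ≤ Nt := by
        conv_rhs => rw [hNt_eq]
        exact le_csSup hbdd hmem'
      omega
    have hSsucc : (n:ℝ) * t < S (Nt+1) ω := by
      by_contra hle
      push_neg at hle
      exact hsucc ((hmem (Nt+1)).2 hle)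
    have hstep : S (Nt+1) ω = S Nt ω + ξ Nt ω := by
      simp [hSdef, Finset.sum_range_succ]
    have hπval : π n t ω = S Nt ω / n := by
      rw [hπ, hτ, ← hNtdef]
    have hπ0 : 0 ≤ π n t ω := by
      rw [hπval]; exact div_nonneg (hS_nonneg Nt ω) hn'.le
    have hπt : π n t ω ≤ t := by
      rw [hπval, div_le_iff₀ hn']; linarith
    have hfb : ‖f (π n t ω)‖ ≤ Cf := hf_bdd _ ⟨hπ0, le_trans hπt htT⟩
    have hage0 : 0 ≤ t - π n t ω := by linarith
    have hage : t - π n t ω ≤ ξ Nt ω / n := by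
      rw [le_div_iff₀ hn']
      have : (t - π n t ω) * n = (n:ℝ) * t - S Nt ω := by
        rw [hπval]; field_simp
      rw [this]; linarith
    have hsq : ((t : ℝ) - π n t ω) ^ 2 ≤ (ξ Nt ω / n) ^ 2 :=
      pow_le_pow_left₀ hage0 hage 2
    have hξD : (ξ Nt ω) ^ 2 ≤ Real.sqrt ((D ω).toReal) := by
      have hle : ENNReal.ofReal ((ξ Nt ω) ^ 4) ≤ D ω := by
        rw [hDdef]
        have hmem4 : ω ∈ E Nt := by
          have : S Nt ω ≤ (n:ℝ) * T :=
            le_trans hSNt (mul_le_mul_of_nonneg_left htT hn'.le)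
          exact this
        have heq : Set.indicator (E Nt) (fun ω => ENNReal.ofReal ((ξ Nt ω) ^ 4)) ω
            = ENNReal.ofReal ((ξ Nt ω) ^ 4) := Set.indicator_of_mem hmem4 _
        exact heq ▸ ENNReal.le_tsum Nt
      have h4 : (ξ Nt ω) ^ 4 ≤ (D ω).toReal := by
        have h5 := ENNReal.toReal_mono hDfin hle
        rwa [ENNReal.toReal_ofReal (by positivity)] at h5
      calc (ξ Nt ω) ^ 2 = Real.sqrt (((ξ Nt ω) ^ 2) ^ 2) :=
          (Real.sqrt_sq (by positivity)).symm
        _ = Real.sqrt ((ξ Nt ω) ^ 4) := by ring_nf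
        _ ≤ Real.sqrt ((D ω).toReal) := Real.sqrt_le_sqrt h4
    calc ((n : ℝ) / 2) * ((t : ℝ) - π n t ω) ^ 2 * ‖f (π n t ω)‖
        ≤ ((n : ℝ) / 2) * ((ξ Nt ω / n) ^ 2) * Cf := by
          apply mul_le_mul (mul_le_mul_of_nonneg_left hsq (by positivity)) hfb
            (norm_nonneg _)
          positivity
      _ = Cf/(2*n) * ((ξ Nt ω) ^ 2) := by field_simp
      _ ≤ Cf/(2*n) * Real.sqrt ((D ω).toReal) := by
          apply mul_le_mul_of_nonneg_left hξD (by positivity)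
  -- assemble everything in ENNReal
  set G : Ω → ℝ := fun ω => ⨆ t : Set.Icc (0:ℝ) T,
      ((n : ℝ) / 2) * ((t : ℝ) - π n t ω) ^ 2 * ‖f (π n t ω)‖ with hGdef
  have hG_nonneg : ∀ ω, 0 ≤ G ω := fun ω =>
    Real.iSup_nonneg (fun t => by positivity)
  set F : Ω → ENNReal := fun ω => ENNReal.ofReal (Real.sqrt ((D ω).toReal)) with hFdef
  have hF_meas : Measurable F :=
    (Real.continuous_sqrt.measurable.comp hD_meas.ennreal_toReal).ennreal_ofReal
  have hF2 : ∀ ω, F ω ^ (2:ℝ) ≤ D ω := by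
    intro ω
    rw [hFdef]
    rw [ENNReal.ofReal_rpow_of_nonneg (Real.sqrt_nonneg _) (by norm_num)]
    have : Real.sqrt ((D ω).toReal) ^ (2:ℝ) = (D ω).toReal := by
      rw [show (2:ℝ) = ((2:ℕ):ℝ) by norm_num, Real.rpow_natCast]
      exact Real.sq_sqrt ENNReal.toReal_nonneg
    rw [this]
    exact ENNReal.ofReal_toReal_le
  have hkey : ∫⁻ ω, ENNReal.ofReal (G ω) ∂μ
      ≤ ENNReal.ofReal (Cf/(2*n) * Real.sqrt (A * n)) := by
    calc ∫⁻ ω, ENNReal.ofReal (G ω) ∂μ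
        ≤ ∫⁻ ω, ENNReal.ofReal (Cf/(2*n)) * F ω ∂μ := by
          apply lintegral_mono_ae
          filter_upwards [hae] with ω hω
          rw [hFdef, ← ENNReal.ofReal_mul (by positivity)]
          exact ENNReal.ofReal_le_ofReal (hptw ω hω)
      _ = ENNReal.ofReal (Cf/(2*n)) * ∫⁻ ω, F ω ∂μ :=
          lintegral_const_mul _ hF_meas
      _ ≤ ENNReal.ofReal (Cf/(2*n)) * (∫⁻ ω, F ω ^ (2:ℝ) ∂μ) ^ (1/2 : ℝ) :=
          mul_le_mul_right (aux_lintegral_le_sqrt μ F hF_meas.aemeasurable) _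
      _ ≤ ENNReal.ofReal (Cf/(2*n)) * (∫⁻ ω, D ω ∂μ) ^ (1/2 : ℝ) :=
          mul_le_mul_right (ENNReal.rpow_le_rpow (lintegral_mono hF2) (by norm_num)) _
      _ ≤ ENNReal.ofReal (Cf/(2*n)) * (ENNReal.ofReal (A * n)) ^ (1/2 : ℝ) :=
          mul_le_mul_right (ENNReal.rpow_le_rpow hDle (by norm_num)) _
      _ = ENNReal.ofReal (Cf/(2*n) * Real.sqrt (A * n)) := by
          rw [ENNReal.ofReal_rpow_of_nonneg (by positivity) (by norm_num),
            ← Real.sqrt_eq_rpow, ENNReal.ofReal_mul (by positivity)]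
  -- real arithmetic for the final constant
  have hsn : ((n:ℝ)) ^ (-(1:ℝ)/2) = Real.sqrt (n:ℝ) / n := by
    rw [Real.sqrt_eq_rpow, show (-(1:ℝ)/2) = 1/2 - 1 by norm_num,
      Real.rpow_sub hn', Real.rpow_one]
  have harith : Cf/(2*n) * Real.sqrt (A * n) = Cf/2 * Real.sqrt A * ((n:ℝ) ^ (-(1:ℝ)/2)) := by
    rw [Real.sqrt_mul hA_nonneg, hsn]
    field_simp
  have hrpow_pos : 0 < ((n:ℝ)) ^ (-(1:ℝ)/2) := Real.rpow_pos_of_pos hn' _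
  by_cases hInt : Integrable G μ
  · rw [integral_eq_lintegral_of_nonneg_ae (Filter.Eventually.of_forall hG_nonneg)
      hInt.aestronglyMeasurable]
    calc (∫⁻ ω, ENNReal.ofReal (G ω) ∂μ).toReal
        ≤ (ENNReal.ofReal (Cf/(2*n) * Real.sqrt (A * n))).toReal :=
          ENNReal.toReal_mono ENNReal.ofReal_ne_top hkey
      _ = Cf/(2*n) * Real.sqrt (A * n) := ENNReal.toReal_ofReal (by positivity)
      _ = Cf/2 * Real.sqrt A * ((n:ℝ) ^ (-(1:ℝ)/2)) := harith
      _ ≤ (Cf/2 * Real.sqrt A + 1) * ((n:ℝ) ^ (-(1:ℝ)/2)) := by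
          apply mul_le_mul_of_nonneg_right _ hrpow_pos.le
          linarith
  · rw [integral_undef hInt]
    positivity
end

section
/- Let (ξ_i)_{i≥1} be i.i.d. positive random variables with E[e^{θξ₁}] < ∞ for all θ > 0 and Var(ξ₁) > 0. For n ∈ ℕ set ξⁿ_k = ξ_k/n and τⁿ_k = ∑_{i=1}^k ξⁿ_i (τⁿ_0 = 0). Let f : [0,∞) → ℝ^d be continuously differentiable with ‖f'(t)‖ ≤ C₀ e^{α t} for some constants C₀, α ≥ 0. Then for every T > 0 there exists a constant C depending only on T, f and the distribution of ξ₁ such that for all n ∈ ℕ: E[ sup_{0 ≤ t ≤ T} ‖ ∑_{k=0}^{⌈nt/E[ξ₁]⌉ − 1} (n/2)(ξⁿ_{k+1})² · ( f(τⁿ_k) − f(kE[ξ₁]/n) ) ‖ ] ≤ C · n^{−1/4}. -/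
open MeasureTheory ProbabilityTheory

lemma aux_prod_exp {Ω : Type*} [MeasurableSpace Ω] {μ : Measure Ω} [IsProbabilityMeasure μ]
    (ξ : ℕ → Ω → ℝ) (hmeas : ∀ i, Measurable (ξ i))
    (hindep : iIndepFun ξ μ)
    (c : ℕ → ℝ) (hint : ∀ i : ℕ, Integrable (fun ω => Real.exp (c i * ξ i ω)) μ)
    (K : ℕ) :
    Integrable (fun ω => ∏ i ∈ Finset.range K, Real.exp (c i * ξ i ω)) μ ∧
    ∫ ω, ∏ i ∈ Finset.range K, Real.exp (c i * ξ i ω) ∂μ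
      = ∏ i ∈ Finset.range K, ∫ ω, Real.exp (c i * ξ i ω) ∂μ := by
  classical
  set g : ℕ → Ω → ℝ := fun i ω => Real.exp (c i * ξ i ω) with hg
  have hgmeas : ∀ i, Measurable (g i) := fun i =>
    Real.measurable_exp.comp ((hmeas i).const_mul (c i))
  have hgindep : iIndepFun g μ :=
    hindep.comp (fun i x => Real.exp (c i * x))
      (fun i => Real.measurable_exp.comp (measurable_const_mul (c i)))
  induction K with
  | zero => simp
  | succ K ih =>
    have hIndep : IndepFun (∏ j ∈ Finset.range K, g j) (g K) μ :=
      hgindep.indepFun_prod_range_succ hgmeas K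
    have hPeq : (fun ω => ∏ i ∈ Finset.range K, g i ω)
        = (∏ j ∈ Finset.range K, g j) := by
      funext ω; simp [Finset.prod_apply]
    have hint1 : Integrable (∏ j ∈ Finset.range K, g j) μ := hPeq ▸ ih.1
    have hsucc : (fun ω => ∏ i ∈ Finset.range (K+1), g i ω)
        = (∏ j ∈ Finset.range K, g j) * g K := by
      funext ω; simp [Finset.prod_range_succ, Finset.prod_apply]
    have hnn : (0 : Ω → ℝ) ≤ (∏ j ∈ Finset.range K, g j) := by
      intro ω
      rw [Pi.zero_apply, Finset.prod_apply]
      exact Finset.prod_nonneg fun i _ => (Real.exp_pos _).le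
    have hintmul : Integrable ((∏ j ∈ Finset.range K, g j) * g K) μ :=
      hIndep.integrable_mul hint1 (hint K)
    constructor
    · have := hintmul
      rwa [show (∏ j ∈ Finset.range K, g j) * g K
        = (fun ω => ∏ i ∈ Finset.range (K+1), g i ω) from hsucc.symm] at this
    · have h0 : (fun ω => ∏ i ∈ Finset.range (K+1), g i ω)
          = (∏ j ∈ Finset.range K, g j) * g K := hsucc
      calc ∫ ω, ∏ i ∈ Finset.range (K+1), g i ω ∂μ
          = ∫ ω, ((∏ j ∈ Finset.range K, g j) * g K) ω ∂μ := by rw [← h0]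
        _ = (∫ ω, (∏ j ∈ Finset.range K, g j) ω ∂μ) * ∫ ω, g K ω ∂μ :=
            hIndep.integral_mul_eq_mul_integral
              (Finset.aemeasurable_prod _ (fun i _ => (hgmeas i).aemeasurable)).aestronglyMeasurable
              (hgmeas K).aestronglyMeasurable
        _ = (∏ i ∈ Finset.range K, ∫ ω, g i ω ∂μ) * ∫ ω, g K ω ∂μ := by
            rw [show (fun ω => (∏ j ∈ Finset.range K, g j) ω)
              = (fun ω => ∏ i ∈ Finset.range K, g i ω) from hPeq.symm]
            rw [ih.2]
        _ = ∏ i ∈ Finset.range (K+1), ∫ ω, g i ω ∂μ := (Finset.prod_range_succ _ _).symm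

lemma aux_mvt {E : Type*} [NormedAddCommGroup E] [NormedSpace ℝ E]
    (f : ℝ → E) (hf : ContDiff ℝ 1 f) (C₀ α : ℝ) (hC₀ : 0 ≤ C₀) (hα : 0 ≤ α)
    (hf' : ∀ t : ℝ, 0 ≤ t → ‖deriv f t‖ ≤ C₀ * Real.exp (α * t))
    (B x g : ℝ) (hx : x ∈ Set.Icc 0 B) (hg : g ∈ Set.Icc 0 B) :
    ‖f x - f g‖ ≤ (C₀ * Real.exp (α * B)) * |x - g| := by
  have h := (convex_Icc (0:ℝ) B).norm_image_sub_le_of_norm_deriv_le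
    (f := f) (C := C₀ * Real.exp (α * B))
    (fun y _ => (hf.differentiable one_ne_zero).differentiableAt)
    (fun y hy => by
      refine le_trans (hf' y hy.1) ?_
      have h1 : Real.exp (α * y) ≤ Real.exp (α * B) :=
        Real.exp_le_exp.mpr (mul_le_mul_of_nonneg_left hy.2 hα)
      exact mul_le_mul_of_nonneg_left h1 hC₀) hg hx
  simpa [Real.norm_eq_abs] using h

set_option maxHeartbeats 4000000 in
/-- Comparison of `f` at the random sampling times with `f` at the
deterministic grid: for `f ∈ C¹` with `‖f'(t)‖ ≤ C₀ e^{αt}`, there is `C` (depending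
only on `T`, `f` and the distribution of `ξ₁`) with
`E[sup_{0≤t≤T} ‖∑_{k=0}^{⌈nt/E[ξ₁]⌉−1} (n/2)(ξⁿ_{k+1})²(f(τⁿ_k) − f(kE[ξ₁]/n))‖] ≤ C n^{−1/4}`.
Here `ξ k` plays the role of the paper's `ξ_{k+1}`. -/
theorem stmt_16 {Ω : Type*} [MeasurableSpace Ω] (μ : Measure Ω) [IsProbabilityMeasure μ]
    (d : ℕ) (hd : 0 < d)
    (ξ : ℕ → Ω → ℝ) (hmeas : ∀ i, Measurable (ξ i))
    (hpos : ∀ i ω, 0 < ξ i ω)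
    (hindep : iIndepFun ξ μ)
    (hident : ∀ i, IdentDistrib (ξ i) (ξ 0) μ μ)
    (hmgf : ∀ θ : ℝ, 0 < θ → Integrable (fun ω => Real.exp (θ * ξ 0 ω)) μ)
    (hvar : 0 < variance (ξ 0) μ)
    (τ : ℕ → ℕ → Ω → ℝ) (hτ : ∀ n k ω, τ n k ω = (∑ i ∈ Finset.range k, ξ i ω) / n)
    (Eξ : ℝ) (hEξ : Eξ = ∫ ω, ξ 0 ω ∂μ)
    (f : ℝ → EuclideanSpace ℝ (Fin d)) (hf : ContDiff ℝ 1 f)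
    (C₀ α : ℝ) (hC₀ : 0 ≤ C₀) (hα : 0 ≤ α)
    (hf' : ∀ t : ℝ, 0 ≤ t → ‖deriv f t‖ ≤ C₀ * Real.exp (α * t))
    (T : ℝ) (hT : 0 < T) :
    ∃ C : ℝ, 0 < C ∧ ∀ n : ℕ, 0 < n →
      (∫ ω, (⨆ t : Set.Icc (0 : ℝ) T,
          ‖∑ k ∈ Finset.range ⌈(n : ℝ) * t / Eξ⌉₊,
            (((n : ℝ) / 2) * (ξ k ω / n) ^ 2) •
              (f (τ n k ω) - f ((k : ℝ) * Eξ / n))‖) ∂μ)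
        ≤ C * (n : ℝ) ^ (-(1 : ℝ) / 4) := by
  classical
  -- basic pointwise inequality x ≤ exp x for x ≥ 0
  have hxle : ∀ x : ℝ, 0 ≤ x → x ≤ Real.exp x := fun x hx =>
    le_trans (by linarith) (Real.add_one_le_exp x)
  -- integrability of exponentials for every nonnegative coefficient
  have hexp : ∀ (c : ℝ), 0 ≤ c → ∀ i, Integrable (fun ω => Real.exp (c * ξ i ω)) μ := by
    intro c hc i
    rcases eq_or_lt_of_le hc with h | h
    · simp [← h]
    · exact (((hident i).comp (Real.measurable_exp.comp (measurable_const_mul c))).integrable_iff).mpr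
        (hmgf c h)
  have hm_nonneg : ∀ c : ℝ, 0 ≤ ∫ ω, Real.exp (c * ξ 0 ω) ∂μ :=
    fun c => integral_nonneg fun ω => (Real.exp_pos _).le
  have hm_mono : ∀ c c' : ℝ, 0 ≤ c → c ≤ c' →
      (∫ ω, Real.exp (c * ξ 0 ω) ∂μ) ≤ ∫ ω, Real.exp (c' * ξ 0 ω) ∂μ := by
    intro c c' hc hcc'
    exact integral_mono (hexp c hc 0) (hexp c' (hc.trans hcc') 0)
      (fun ω => Real.exp_le_exp.mpr (mul_le_mul_of_nonneg_right hcc' (hpos 0 ω).le))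
  have hid_exp : ∀ (c : ℝ) (i : ℕ), (∫ ω, Real.exp (c * ξ i ω) ∂μ)
      = ∫ ω, Real.exp (c * ξ 0 ω) ∂μ := fun c i =>
    ((hident i).comp (Real.measurable_exp.comp (measurable_const_mul c))).integral_eq
  -- integrability of ξ and ξ²
  have hint_xi : ∀ i, Integrable (ξ i) μ := by
    intro i
    refine (hexp 1 zero_le_one i).mono' (hmeas i).aestronglyMeasurable ?_
    filter_upwards with ω
    rw [Real.norm_eq_abs, abs_of_pos (hpos i ω)]
    simpa using hxle _ (hpos i ω).le
  have hsq_le : ∀ i ω, ξ i ω ^ 2 ≤ Real.exp (2 * ξ i ω) := by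
    intro i ω
    have h1 : ξ i ω ≤ Real.exp (ξ i ω) := hxle _ (hpos i ω).le
    calc ξ i ω ^ 2 = ξ i ω * ξ i ω := sq (ξ i ω)
      _ ≤ Real.exp (ξ i ω) * Real.exp (ξ i ω) :=
          mul_le_mul h1 h1 (hpos i ω).le (Real.exp_pos _).le
      _ = Real.exp (2 * ξ i ω) := by rw [← Real.exp_add]; ring_nf
  have hsq_int : ∀ i, Integrable (fun ω => ξ i ω ^ 2) μ := by
    intro i
    refine (hexp 2 (by norm_num) i).mono' ((hmeas i).pow_const 2).aestronglyMeasurable ?_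
    filter_upwards with ω
    rw [Real.norm_eq_abs, abs_of_nonneg (sq_nonneg _)]
    exact hsq_le i ω
  have hmem2 : ∀ i, MemLp (ξ i) 2 μ := by
    intro i
    rw [memLp_two_iff_integrable_sq (hmeas i).aestronglyMeasurable]
    simpa [sq] using hsq_int i
  have hEint : ∀ i, ∫ ω, ξ i ω ∂μ = Eξ := fun i => by
    rw [hEξ]; exact (hident i).integral_eq
  have hEpos : 0 < Eξ := by
    rw [hEξ, integral_pos_iff_support_of_nonneg (fun ω => (hpos 0 ω).le) (hint_xi 0)]
    have hsupp : Function.support (ξ 0) = Set.univ :=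
      Set.eq_univ_of_forall (fun ω => (hpos 0 ω).ne')
    simp [hsupp]
  -- variance of partial sums
  have hmemS : ∀ k : ℕ, MemLp (fun ω => ∑ i ∈ Finset.range k, ξ i ω) 2 μ := by
    intro k
    have : (fun ω => ∑ i ∈ Finset.range k, ξ i ω) = ∑ i ∈ Finset.range k, ξ i := by
      funext ω; simp
    rw [this]
    exact memLp_finset_sum' _ (fun i _ => hmem2 i)
  have hvarS : ∀ k : ℕ, variance (fun ω => ∑ i ∈ Finset.range k, ξ i ω) μ
      = k * variance (ξ 0) μ := by
    intro k
    have he : (fun ω => ∑ i ∈ Finset.range k, ξ i ω) = ∑ i ∈ Finset.range k, ξ i := by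
      funext ω; simp
    rw [he, IndepFun.variance_sum (fun i _ => hmem2 i)
      (fun i _ j _ hij => hindep.indepFun hij)]
    have : ∀ i ∈ Finset.range k, variance (ξ i) μ = variance (ξ 0) μ :=
      fun i _ => (hident i).variance_eq
    rw [Finset.sum_congr rfl this]
    simp [Finset.sum_const, mul_comm]
  have hES : ∀ k : ℕ, ∫ ω, (∑ i ∈ Finset.range k, ξ i ω) ∂μ = k * Eξ := by
    intro k
    rw [integral_finset_sum _ (fun i _ => hint_xi i)]
    rw [Finset.sum_congr rfl (fun i _ => hEint i)]
    simp [Finset.sum_const, mul_comm]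
  have hZ2 : ∀ k : ℕ, ∫ ω, ((∑ i ∈ Finset.range k, ξ i ω) - k * Eξ) ^ 2 ∂μ
      = k * variance (ξ 0) μ := by
    intro k
    have h := variance_eq_integral (hmemS k).aestronglyMeasurable.aemeasurable
    rw [hvarS k] at h
    rw [h]
    refine integral_congr_ae (Filter.Eventually.of_forall fun ω => ?_)
    simp only [Pi.pow_apply, Pi.sub_apply, hES k]
  have hZmem : ∀ k : ℕ, MemLp (fun ω => (∑ i ∈ Finset.range k, ξ i ω) - k * Eξ) 2 μ :=
    fun k => (hmemS k).sub (memLp_const _)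
  have hZ2int : ∀ k : ℕ,
      Integrable (fun ω => ((∑ i ∈ Finset.range k, ξ i ω) - k * Eξ) ^ 2) μ := by
    intro k
    have := (hZmem k).integrable_sq
    simpa [sq] using this
  -- constants
  set V := variance (ξ 0) μ with hV
  have hVpos : 0 < V := hvar
  set κ := T / Eξ + 1 with hκ
  have hκpos : 0 < κ := by positivity
  set cstar := ∫ ω, ξ 0 ω * Real.exp (2 * α * ξ 0 ω) ∂μ with hcstar
  have hcstar_nonneg : 0 ≤ cstar :=
    integral_nonneg fun ω => mul_nonneg (hpos 0 ω).le (Real.exp_pos _).le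
  have hcstar_int : Integrable (fun ω => ξ 0 ω * Real.exp (2 * α * ξ 0 ω)) μ := by
    refine (hexp (1 + 2 * α) (by positivity) 0).mono'
      ((hmeas 0).mul (Real.measurable_exp.comp ((hmeas 0).const_mul _))).aestronglyMeasurable ?_
    filter_upwards with ω
    rw [Real.norm_eq_abs, abs_of_nonneg (mul_nonneg (hpos 0 ω).le (Real.exp_pos _).le)]
    calc ξ 0 ω * Real.exp (2 * α * ξ 0 ω)
        ≤ Real.exp (ξ 0 ω) * Real.exp (2 * α * ξ 0 ω) :=
          mul_le_mul_of_nonneg_right (hxle _ (hpos 0 ω).le) (Real.exp_pos _).le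
      _ = Real.exp ((1 + 2 * α) * ξ 0 ω) := by rw [← Real.exp_add]; ring_nf
  set mbar := ∫ ω, Real.exp ((4 + 2 * α) * ξ 0 ω) ∂μ with hmbar
  have hmbar_nonneg : 0 ≤ mbar := hm_nonneg _
  set C₂ := mbar * Real.exp (2 * α * cstar * κ) with hC₂
  have hC₂nonneg : 0 ≤ C₂ := mul_nonneg hmbar_nonneg (Real.exp_pos _).le
  set C₁ := C₀ * Real.exp (α * (T + Eξ)) with hC₁
  have hC₁nonneg : 0 ≤ C₁ := mul_nonneg hC₀ (Real.exp_pos _).le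
  set CB := C₁ * κ * (C₂ + κ * V) / 4 with hCB
  have hCBnonneg : 0 ≤ CB := by
    apply div_nonneg _ (by norm_num)
    exact mul_nonneg (mul_nonneg hC₁nonneg hκpos.le)
      (add_nonneg hC₂nonneg (mul_nonneg hκpos.le hVpos.le))
  refine ⟨CB + 1, by linarith, ?_⟩
  intro n hn
  have hn1 : (1 : ℝ) ≤ (n : ℝ) := by exact_mod_cast hn
  have hnpos : (0 : ℝ) < n := by linarith
  set K := ⌈(n : ℝ) * T / Eξ⌉₊ with hKdef
  have hKlt : (K : ℝ) < (n : ℝ) * T / Eξ + 1 := Nat.ceil_lt_add_one (by positivity)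
  have hKle : (K : ℝ) ≤ κ * n := by
    have h2 : (n : ℝ) * T / Eξ + 1 ≤ κ * n := by
      rw [hκ]
      have he : (n : ℝ) * T / Eξ = T / Eξ * n := by ring
      rw [he]
      nlinarith [div_nonneg hT.le hEpos.le]
    exact le_trans hKlt.le h2
  -- small mgf bound
  have hαn : 2 * α / n ≤ 2 * α := div_le_self (by positivity) hn1
  have hm_small : (∫ ω, Real.exp (2 * α / n * ξ 0 ω) ∂μ) ≤ 1 + 2 * α / n * cstar := by
    have hb : ∀ ω, Real.exp (2 * α / n * ξ 0 ω)
        ≤ 1 + 2 * α / n * (ξ 0 ω * Real.exp (2 * α * ξ 0 ω)) := by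
      intro ω
      set y := 2 * α / n * ξ 0 ω with hy
      have hy0 : 0 ≤ y := by
        rw [hy]; exact mul_nonneg (by positivity) (hpos 0 ω).le
      have h4 : (1 - y) * Real.exp y ≤ 1 := by
        have h5 := mul_le_mul_of_nonneg_right (Real.add_one_le_exp (-y)) (Real.exp_pos y).le
        rw [← Real.exp_add, neg_add_cancel, Real.exp_zero] at h5
        nlinarith [h5]
      have h6 : Real.exp y ≤ 1 + y * Real.exp y := by nlinarith [h4]
      have h7 : Real.exp y ≤ Real.exp (2 * α * ξ 0 ω) := by
        apply Real.exp_le_exp.mpr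
        rw [hy]
        exact mul_le_mul_of_nonneg_right hαn (hpos 0 ω).le
      calc Real.exp y ≤ 1 + y * Real.exp y := h6
        _ ≤ 1 + y * Real.exp (2 * α * ξ 0 ω) := by nlinarith [h7, hy0]
        _ = 1 + 2 * α / n * (ξ 0 ω * Real.exp (2 * α * ξ 0 ω)) := by rw [hy]; ring
    calc (∫ ω, Real.exp (2 * α / n * ξ 0 ω) ∂μ)
        ≤ ∫ ω, (1 + 2 * α / n * (ξ 0 ω * Real.exp (2 * α * ξ 0 ω))) ∂μ :=
          integral_mono (hexp _ (by positivity) 0)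
            ((integrable_const 1).add (hcstar_int.const_mul _)) hb
      _ = 1 + 2 * α / n * cstar := by
          rw [integral_add (integrable_const 1) (hcstar_int.const_mul _),
            integral_const, integral_const_mul]
          simp [hcstar]
  have hm_small_nonneg : (0:ℝ) ≤ 1 + 2 * α / n * cstar := by positivity
  -- the Y (squared exponential) factor: integrable and bounded expectation
  have hYfact : ∀ k ∈ Finset.range K,
      Integrable (fun ω => Real.exp (4 * ξ k ω + 2 * α / n * ∑ i ∈ Finset.range K, ξ i ω)) μ ∧
      (∫ ω, Real.exp (4 * ξ k ω + 2 * α / n * ∑ i ∈ Finset.range K, ξ i ω) ∂μ) ≤ C₂ := by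
    intro k hk
    set c : ℕ → ℝ := fun i => 2 * α / n + (if i = k then 4 else 0) with hc
    have hcnn : ∀ i, 0 ≤ c i := by
      intro i; rw [hc]; dsimp only; split <;> positivity
    have heq : (fun ω => Real.exp (4 * ξ k ω + 2 * α / n * ∑ i ∈ Finset.range K, ξ i ω))
        = fun ω => ∏ i ∈ Finset.range K, Real.exp (c i * ξ i ω) := by
      funext ω
      rw [← Real.exp_sum]
      congr 1
      have hterm : ∀ i ∈ Finset.range K, c i * ξ i ω
          = 2 * α / n * ξ i ω + (if i = k then 4 * ξ i ω else 0) := by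
        intro i _; rw [hc]; dsimp only; split <;> ring
      rw [Finset.sum_congr rfl hterm, Finset.sum_add_distrib,
        Finset.sum_ite_eq' (Finset.range K) k (fun i => 4 * ξ i ω), if_pos hk, ← Finset.mul_sum]
      ring
    obtain ⟨hYint, hYeq⟩ := aux_prod_exp ξ hmeas hindep c (fun i => hexp (c i) (hcnn i) i) K
    refine ⟨heq ▸ hYint, ?_⟩
    rw [heq, hYeq, Finset.prod_congr rfl (fun i _ => hid_exp (c i) i),
      ← Finset.mul_prod_erase (Finset.range K) _ hk]
    have h1 : (∫ ω, Real.exp (c k * ξ 0 ω) ∂μ) ≤ mbar := by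
      rw [hmbar]
      apply hm_mono _ _ (hcnn k)
      rw [hc]; dsimp only; rw [if_pos rfl]
      linarith
    have hci : ∀ i ∈ (Finset.range K).erase k, c i = 2 * α / n := by
      intro i hi
      rw [hc]; dsimp only; rw [if_neg (Finset.ne_of_mem_erase hi)]; ring
    have h2 : (∏ i ∈ (Finset.range K).erase k, ∫ ω, Real.exp (c i * ξ 0 ω) ∂μ)
        ≤ (1 + 2 * α / n * cstar) ^ ((Finset.range K).erase k).card := by
      rw [← Finset.prod_const]
      refine Finset.prod_le_prod (fun i _ => hm_nonneg _) ?_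
      intro i hi
      rw [hci i hi]
      exact hm_small
    have h3 : ((1 : ℝ) + 2 * α / n * cstar) ^ ((Finset.range K).erase k).card
        ≤ Real.exp (2 * α * cstar * κ) := by
      set m := ((Finset.range K).erase k).card with hmdef
      have hm_le : (m : ℝ) ≤ (K : ℝ) := by
        have : m ≤ K := le_trans (Finset.card_le_card (Finset.erase_subset _ _))
          (le_of_eq (Finset.card_range K))
        exact_mod_cast this
      calc ((1 : ℝ) + 2 * α / n * cstar) ^ m ≤ Real.exp (2 * α / n * cstar) ^ m := by
            apply pow_le_pow_left₀ (by positivity)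
            linarith [Real.add_one_le_exp (2 * α / n * cstar)]
        _ = Real.exp ((m : ℝ) * (2 * α / n * cstar)) := by rw [← Real.exp_nat_mul]
        _ ≤ Real.exp (2 * α * cstar * κ) := by
            apply Real.exp_le_exp.mpr
            have hx0 : (0:ℝ) ≤ 2 * α / n * cstar := by positivity
            have : (m : ℝ) * (2 * α / n * cstar) ≤ (κ * n) * (2 * α / n * cstar) :=
              mul_le_mul_of_nonneg_right (hm_le.trans hKle) hx0
            calc (m : ℝ) * (2 * α / n * cstar) ≤ (κ * n) * (2 * α / n * cstar) := this
              _ = 2 * α * cstar * κ := by field_simp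
    calc (∫ ω, Real.exp (c k * ξ 0 ω) ∂μ)
          * ∏ i ∈ (Finset.range K).erase k, ∫ ω, Real.exp (c i * ξ 0 ω) ∂μ
        ≤ mbar * Real.exp (2 * α * cstar * κ) := by
          apply mul_le_mul h1 (h2.trans h3)
            (Finset.prod_nonneg (fun i _ => hm_nonneg _)) hmbar_nonneg
      _ = C₂ := by rw [hC₂]
  have hsqrtpos : (0:ℝ) < Real.sqrt n := Real.sqrt_pos.mpr hnpos
  have hkey : ∀ a b s : ℝ, 0 ≤ a → 0 ≤ b → 0 < s → 2 * (a * b) ≤ s * a ^ 2 + b ^ 2 / s := by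
    intro a b s ha hb hs
    rw [← sub_nonneg]
    have he : s * a ^ 2 + b ^ 2 / s - 2 * (a * b) = (s * a - b) ^ 2 / s := by
      field_simp; ring
    rw [he]; positivity
  -- the pathwise domination
  have hpath : ∀ ω : Ω, (⨆ t : Set.Icc (0 : ℝ) T,
        ‖∑ k ∈ Finset.range ⌈(n : ℝ) * t / Eξ⌉₊,
          (((n : ℝ) / 2) * (ξ k ω / n) ^ 2) • (f (τ n k ω) - f ((k : ℝ) * Eξ / n))‖)
      ≤ C₁ / (4 * (n:ℝ) ^ 2) * ∑ k ∈ Finset.range K,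
          (Real.sqrt n * Real.exp (4 * ξ k ω + 2 * α / n * ∑ i ∈ Finset.range K, ξ i ω)
            + ((∑ i ∈ Finset.range k, ξ i ω) - k * Eξ) ^ 2 / Real.sqrt n) := by
    intro ω
    haveI : Nonempty (Set.Icc (0:ℝ) T) := Set.nonempty_Icc_subtype hT.le
    apply ciSup_le
    rintro ⟨t, ht⟩
    have hmK : ⌈(n : ℝ) * t / Eξ⌉₊ ≤ K := by
      rw [hKdef]
      exact Nat.ceil_le_ceil ((div_le_div_iff_of_pos_right hEpos).mpr
        (mul_le_mul_of_nonneg_left ht.2 hnpos.le))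
    have hterm : ∀ k ∈ Finset.range K,
        ‖(((n : ℝ) / 2) * (ξ k ω / n) ^ 2) • (f (τ n k ω) - f ((k : ℝ) * Eξ / n))‖
        ≤ C₁ / (4 * (n:ℝ) ^ 2) *
            (Real.sqrt n * Real.exp (4 * ξ k ω + 2 * α / n * ∑ i ∈ Finset.range K, ξ i ω)
            + ((∑ i ∈ Finset.range k, ξ i ω) - k * Eξ) ^ 2 / Real.sqrt n) := by
      intro k hk
      have hkK : k < K := Finset.mem_range.mp hk
      have hSnnk : (0:ℝ) ≤ ∑ i ∈ Finset.range k, ξ i ω :=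
        Finset.sum_nonneg fun i _ => (hpos i ω).le
      have hSnnK : (0:ℝ) ≤ ∑ i ∈ Finset.range K, ξ i ω :=
        Finset.sum_nonneg fun i _ => (hpos i ω).le
      have hSmono : (∑ i ∈ Finset.range k, ξ i ω) ≤ ∑ i ∈ Finset.range K, ξ i ω :=
        Finset.sum_le_sum_of_subset_of_nonneg (Finset.range_subset_range.mpr hkK.le)
          (fun i _ _ => (hpos i ω).le)
      have hxmem : (∑ i ∈ Finset.range k, ξ i ω) / n
          ∈ Set.Icc (0:ℝ) ((∑ i ∈ Finset.range K, ξ i ω) / n + (T + Eξ)) := by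
        constructor
        · positivity
        · have h1 : (∑ i ∈ Finset.range k, ξ i ω) / n
              ≤ (∑ i ∈ Finset.range K, ξ i ω) / n := by gcongr
          linarith
      have hgmem : (k:ℝ) * Eξ / n
          ∈ Set.Icc (0:ℝ) ((∑ i ∈ Finset.range K, ξ i ω) / n + (T + Eξ)) := by
        constructor
        · positivity
        · have hkleK : (k:ℝ) ≤ (K:ℝ) := by exact_mod_cast hkK.le
          have h1 : (k:ℝ) * Eξ / n ≤ (K:ℝ) * Eξ / n := by gcongr
          have h2 : (K:ℝ) * Eξ / n ≤ T + Eξ := by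
            rw [div_le_iff₀ hnpos]
            have h3 : (K:ℝ) * Eξ ≤ ((n:ℝ) * T / Eξ + 1) * Eξ :=
              mul_le_mul_of_nonneg_right hKlt.le hEpos.le
            have h4 : ((n:ℝ) * T / Eξ + 1) * Eξ = (n:ℝ) * T + Eξ := by field_simp
            nlinarith
          have h5 : (0:ℝ) ≤ (∑ i ∈ Finset.range K, ξ i ω) / n := by positivity
          linarith
      have hmvt := aux_mvt f hf C₀ α hC₀ hα hf' _ _ _ hxmem hgmem
      rw [hτ n k ω, norm_smul, Real.norm_eq_abs]
      have habs : |((n:ℝ)/2) * (ξ k ω / n)^2| = ξ k ω ^ 2 / (2*n) := by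
        rw [abs_of_nonneg (by positivity)]
        field_simp
      rw [habs]
      have e1 : Real.exp (α * ((∑ i ∈ Finset.range K, ξ i ω) / n + (T + Eξ)))
          = Real.exp (α * (T + Eξ)) * Real.exp (α / n * ∑ i ∈ Finset.range K, ξ i ω) := by
        rw [← Real.exp_add]; congr 1; ring
      have e2 : |(∑ i ∈ Finset.range k, ξ i ω) / n - (k:ℝ) * Eξ / n|
          = |(∑ i ∈ Finset.range k, ξ i ω) - (k:ℝ) * Eξ| / n := by
        rw [← sub_div, abs_div, abs_of_pos hnpos]
      have h5 : ξ k ω ^ 2 * Real.exp (α / n * ∑ i ∈ Finset.range K, ξ i ω)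
          ≤ Real.exp (2 * ξ k ω + α / n * ∑ i ∈ Finset.range K, ξ i ω) := by
        rw [Real.exp_add]
        exact mul_le_mul_of_nonneg_right (hsq_le k ω) (Real.exp_pos _).le
      have e4 : Real.exp (2 * ξ k ω + α / n * ∑ i ∈ Finset.range K, ξ i ω) ^ 2
          = Real.exp (4 * ξ k ω + 2 * α / n * ∑ i ∈ Finset.range K, ξ i ω) := by
        rw [sq, ← Real.exp_add]; congr 1; ring
      have h6 := hkey (Real.exp (2 * ξ k ω + α / n * ∑ i ∈ Finset.range K, ξ i ω))
        |(∑ i ∈ Finset.range k, ξ i ω) - (k:ℝ) * Eξ| (Real.sqrt n)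
        (Real.exp_pos _).le (abs_nonneg _) hsqrtpos
      calc ξ k ω ^ 2 / (2*n) * ‖f ((∑ i ∈ Finset.range k, ξ i ω)/n) - f ((k:ℝ)*Eξ/n)‖
          ≤ ξ k ω ^ 2 / (2*n) * ((C₀ * Real.exp (α * ((∑ i ∈ Finset.range K, ξ i ω)/n + (T+Eξ))))
              * |(∑ i ∈ Finset.range k, ξ i ω)/n - (k:ℝ)*Eξ/n|) :=
            mul_le_mul_of_nonneg_left hmvt (by positivity)
        _ = C₁ / (2*(n:ℝ)^2) * ((ξ k ω ^ 2 * Real.exp (α/n * ∑ i ∈ Finset.range K, ξ i ω))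
              * |(∑ i ∈ Finset.range k, ξ i ω) - (k:ℝ)*Eξ|) := by
            rw [e1, e2, hC₁]; field_simp
        _ ≤ C₁ / (2*(n:ℝ)^2) * (Real.exp (2*ξ k ω + α/n * ∑ i ∈ Finset.range K, ξ i ω)
              * |(∑ i ∈ Finset.range k, ξ i ω) - (k:ℝ)*Eξ|) :=
            mul_le_mul_of_nonneg_left
              (mul_le_mul_of_nonneg_right h5 (abs_nonneg _))
              (div_nonneg hC₁nonneg (by positivity))
        _ ≤ C₁ / (2*(n:ℝ)^2) * ((Real.sqrt n * Real.exp (2*ξ k ω + α/n * ∑ i ∈ Finset.range K, ξ i ω)^2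
              + |(∑ i ∈ Finset.range k, ξ i ω) - (k:ℝ)*Eξ|^2 / Real.sqrt n) / 2) := by
            apply mul_le_mul_of_nonneg_left ?_ (div_nonneg hC₁nonneg (by positivity))
            linarith [h6]
        _ = C₁ / (4*(n:ℝ)^2) * (Real.sqrt n * Real.exp (4*ξ k ω + 2*α/n * ∑ i ∈ Finset.range K, ξ i ω)
              + ((∑ i ∈ Finset.range k, ξ i ω) - (k:ℝ)*Eξ)^2 / Real.sqrt n) := by
            rw [e4, sq_abs]; ring
    calc ‖∑ k ∈ Finset.range ⌈(n : ℝ) * t / Eξ⌉₊,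
            (((n : ℝ) / 2) * (ξ k ω / n) ^ 2) • (f (τ n k ω) - f ((k : ℝ) * Eξ / n))‖
        ≤ ∑ k ∈ Finset.range ⌈(n : ℝ) * t / Eξ⌉₊,
            ‖(((n : ℝ) / 2) * (ξ k ω / n) ^ 2) • (f (τ n k ω) - f ((k : ℝ) * Eξ / n))‖ :=
          norm_sum_le _ _
      _ ≤ ∑ k ∈ Finset.range K,
            ‖(((n : ℝ) / 2) * (ξ k ω / n) ^ 2) • (f (τ n k ω) - f ((k : ℝ) * Eξ / n))‖ :=
          Finset.sum_le_sum_of_subset_of_nonneg (Finset.range_subset_range.mpr hmK)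
            (fun _ _ _ => norm_nonneg _)
      _ ≤ ∑ k ∈ Finset.range K, C₁ / (4 * (n:ℝ) ^ 2) *
            (Real.sqrt n * Real.exp (4 * ξ k ω + 2 * α / n * ∑ i ∈ Finset.range K, ξ i ω)
            + ((∑ i ∈ Finset.range k, ξ i ω) - k * Eξ) ^ 2 / Real.sqrt n) :=
          Finset.sum_le_sum hterm
      _ = C₁ / (4 * (n:ℝ) ^ 2) * ∑ k ∈ Finset.range K,
            (Real.sqrt n * Real.exp (4 * ξ k ω + 2 * α / n * ∑ i ∈ Finset.range K, ξ i ω)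
            + ((∑ i ∈ Finset.range k, ξ i ω) - k * Eξ) ^ 2 / Real.sqrt n) :=
          (Finset.mul_sum _ _ _).symm
  -- integrability of the dominating function
  have hGint : Integrable (fun ω => C₁ / (4 * (n:ℝ) ^ 2) * ∑ k ∈ Finset.range K,
      (Real.sqrt n * Real.exp (4 * ξ k ω + 2 * α / n * ∑ i ∈ Finset.range K, ξ i ω)
        + ((∑ i ∈ Finset.range k, ξ i ω) - k * Eξ) ^ 2 / Real.sqrt n)) μ := by
    apply Integrable.const_mul
    apply integrable_finset_sum
    intro k hk
    exact ((hYfact k hk).1.const_mul _).add ((hZ2int k).div_const _)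
  refine le_trans (integral_mono_of_nonneg
    (Filter.Eventually.of_forall fun ω => Real.iSup_nonneg fun t => norm_nonneg _)
    hGint (Filter.Eventually.of_forall hpath)) ?_
  have hint_k : ∀ k ∈ Finset.range K, Integrable (fun ω =>
      Real.sqrt n * Real.exp (4 * ξ k ω + 2 * α / n * ∑ i ∈ Finset.range K, ξ i ω)
        + ((∑ i ∈ Finset.range k, ξ i ω) - k * Eξ) ^ 2 / Real.sqrt n) μ :=
    fun k hk => ((hYfact k hk).1.const_mul _).add ((hZ2int k).div_const _)
  rw [integral_const_mul, integral_finset_sum _ hint_k]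
  have hsum : (∑ k ∈ Finset.range K, ∫ ω,
      (Real.sqrt n * Real.exp (4 * ξ k ω + 2 * α / n * ∑ i ∈ Finset.range K, ξ i ω)
        + ((∑ i ∈ Finset.range k, ξ i ω) - k * Eξ) ^ 2 / Real.sqrt n) ∂μ)
      ≤ (K:ℝ) * (Real.sqrt n * C₂ + κ * n * V / Real.sqrt n) := by
    have hterm2 : ∀ k ∈ Finset.range K, (∫ ω,
        (Real.sqrt n * Real.exp (4 * ξ k ω + 2 * α / n * ∑ i ∈ Finset.range K, ξ i ω)
          + ((∑ i ∈ Finset.range k, ξ i ω) - k * Eξ) ^ 2 / Real.sqrt n) ∂μ)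
        ≤ Real.sqrt n * C₂ + κ * n * V / Real.sqrt n := by
      intro k hk
      rw [integral_add ((hYfact k hk).1.const_mul _) ((hZ2int k).div_const _),
        integral_const_mul, integral_div]
      have h1 := (hYfact k hk).2
      have h2 : (∫ ω, ((∑ i ∈ Finset.range k, ξ i ω) - (k:ℝ) * Eξ) ^ 2 ∂μ) ≤ κ * n * V := by
        rw [hZ2 k]
        have hkK : (k:ℝ) ≤ (K:ℝ) := by
          exact_mod_cast (Finset.mem_range.mp hk).le
        nlinarith [hVpos, hKle]
      exact add_le_add (mul_le_mul_of_nonneg_left h1 hsqrtpos.le)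
        ((div_le_div_iff_of_pos_right hsqrtpos).mpr h2)
    calc (∑ k ∈ Finset.range K, ∫ ω,
        (Real.sqrt n * Real.exp (4 * ξ k ω + 2 * α / n * ∑ i ∈ Finset.range K, ξ i ω)
          + ((∑ i ∈ Finset.range k, ξ i ω) - k * Eξ) ^ 2 / Real.sqrt n) ∂μ)
        ≤ ∑ _k ∈ Finset.range K, (Real.sqrt n * C₂ + κ * n * V / Real.sqrt n) :=
          Finset.sum_le_sum hterm2
      _ = (K:ℝ) * (Real.sqrt n * C₂ + κ * n * V / Real.sqrt n) := by
          rw [Finset.sum_const, Finset.card_range, nsmul_eq_mul]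
  refine le_trans (mul_le_mul_of_nonneg_left hsum
    (div_nonneg hC₁nonneg (by positivity))) ?_
  have hb0 : Real.sqrt n * C₂ + κ * n * V / Real.sqrt n = Real.sqrt n * (C₂ + κ * V) := by
    have h2 : κ * (n:ℝ) * V / Real.sqrt n = κ * V * Real.sqrt n := by
      rw [show κ * (n:ℝ) * V / Real.sqrt n = (κ * V) * ((n:ℝ) / Real.sqrt n) from by ring,
        Real.div_sqrt]
    rw [h2]; ring
  have hbr_nonneg : (0:ℝ) ≤ Real.sqrt n * (C₂ + κ * V) :=
    mul_nonneg hsqrtpos.le (add_nonneg hC₂nonneg (mul_nonneg hκpos.le hVpos.le))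
  have hr : Real.sqrt n / n = (n:ℝ) ^ (-(1:ℝ)/2) := by
    rw [Real.sqrt_eq_rpow, show -(1:ℝ)/2 = 1/2 - 1 by norm_num, Real.rpow_sub hnpos,
      Real.rpow_one]
  calc C₁ / (4*(n:ℝ)^2) * ((K:ℝ) * (Real.sqrt n * C₂ + κ * n * V / Real.sqrt n))
      ≤ C₁ / (4*(n:ℝ)^2) * ((κ * n) * (Real.sqrt n * (C₂ + κ * V))) := by
        rw [hb0]
        exact mul_le_mul_of_nonneg_left (mul_le_mul_of_nonneg_right hKle hbr_nonneg)
          (div_nonneg hC₁nonneg (by positivity))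
    _ = CB * (Real.sqrt n / n) := by
        rw [hCB]; field_simp
    _ ≤ CB * (n:ℝ) ^ (-(1:ℝ)/4) := by
        rw [hr]
        exact mul_le_mul_of_nonneg_left
          (Real.rpow_le_rpow_of_exponent_le hn1 (by norm_num)) hCBnonneg
    _ ≤ (CB + 1) * (n:ℝ) ^ (-(1:ℝ)/4) :=
        mul_le_mul_of_nonneg_right (by linarith) (Real.rpow_nonneg hnpos.le _)
end
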